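/- arXiv:2310.17308 — 5 statements merged into one kernel-verified Lean document; each statement's English description precedes it below -/
import Mathlib

section
/- Under the stated setup, and assuming E[Σ_{i=1}^n Σ_{j=1}^{nᵢ} ‖c_{i,j}‖] < ∞, the wild bootstrap process D* is a martingale with respect to the filtration (F₂(t))_{t∈[0,τ]}: every component of D*(t) is integrable, D*(t) is F₂(t)-measurable for each t ∈ [0,τ], and for all 0 ≤ s ≤ t ≤ τ one has E[D*(t) | F₂(s)] = D*(s) almost surely. (Martingale part of Lemma 3.1: the wild bootstrap counting-process integral D*_{n,h} is a martingale with respect to F₂.) -/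
open MeasureTheory ProbabilityTheory Filter Set
open scoped ENNReal NNReal


lemma measurable_sum_range' {Ω : Type*} {m : MeasurableSpace Ω} {N : Ω → ℕ}
    (hN : Measurable[m] N) {g : ℕ → Ω → ℝ} (hg : ∀ j, Measurable[m] (g j)) :
    Measurable[m] (fun ω => ∑ j ∈ Finset.range (N ω), g j ω) := by
  have hF : Measurable[Prod.instMeasurableSpace (m₁ := m)]
      fun q : Ω × ℕ => ∑ j ∈ Finset.range q.2, g j q.1 :=
    measurable_from_prod_countable_left fun b =>
      (Finset.measurable_sum (Finset.range b) fun j _ => hg j : Measurable[m] _)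
  have h2 : Measurable[m] fun ω => (ω, N ω) := measurable_id.prodMk hN
  exact hF.comp h2

lemma measurable_pi_sum_range' {Ω : Type*} {m : MeasurableSpace Ω} {p n : ℕ}
    {N : Fin n → Ω → ℕ} (hN : ∀ i, Measurable[m] (N i))
    {h : Fin n → ℕ → Ω → Fin p → ℝ} (hh : ∀ i j l, Measurable[m] (fun ω => h i j ω l))
    (r : ℝ) :
    Measurable[m] (fun ω (l : Fin p) => r * ∑ i, ∑ j ∈ Finset.range (N i ω), h i j ω l) := by
  refine measurable_pi_iff.2 fun l => ?_
  refine Measurable.const_mul ?_ _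
  exact Finset.measurable_sum _ fun i _ =>
    measurable_sum_range' (hN i) (fun j => hh i j l)

lemma tsum_eq_double_sum' {M : Type*} [AddCommMonoid M] [TopologicalSpace M] [T2Space M]
    {n : ℕ} (nJ : Fin n → ℕ) (f : Fin n × ℕ → M)
    (hf : ∀ k : Fin n × ℕ, ¬ k.2 < nJ k.1 → f k = 0) :
    ∑' k, f k = ∑ i, ∑ j ∈ Finset.range (nJ i), f (i, j) := by
  classical
  have h1 : ∑' k, f k = ∑ k ∈ Finset.univ ×ˢ Finset.range (Finset.univ.sup nJ), f k := by
    refine tsum_eq_sum ?_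
    intro k hk
    refine hf k fun hlt => hk ?_
    exact Finset.mem_product.2 ⟨Finset.mem_univ _, Finset.mem_range.2
      (lt_of_lt_of_le hlt (Finset.le_sup (Finset.mem_univ k.1)))⟩
  rw [h1, Finset.sum_product]
  refine Finset.sum_congr rfl fun i _ => ?_
  refine (Finset.sum_subset ?_ ?_).symm
  · exact Finset.range_subset_range.2 (Finset.le_sup (Finset.mem_univ i))
  · intro j _ hj
    exact hf (i, j) (by simpa using hj)

lemma exists_trace_set {Ω ι : Type*} (mlow m' : MeasurableSpace Ω)
    (X : ι → Ω → ℝ) (U : Set Ω) (k : ι)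
    (hlow : mlow ≤ m')
    (hother : ∀ k', k' ≠ k → MeasurableSpace.comap (X k') inferInstance ≤ m')
    (hXU : ∀ ω ∈ U, X k ω = 0)
    {B : Set Ω}
    (hB : MeasurableSet[mlow ⊔ ⨆ k', MeasurableSpace.comap (X k') inferInstance] B) :
    ∃ B', MeasurableSet[m'] B' ∧ B ∩ U = B' ∩ U := by
  classical
  have hle : (mlow ⊔ ⨆ k', MeasurableSpace.comap (X k') inferInstance) ≤
      ({ MeasurableSet' := fun B => ∃ B', MeasurableSet[m'] B' ∧ B ∩ U = B' ∩ U
         measurableSet_empty := ⟨∅, (MeasurableSet.empty : MeasurableSet[m'] ∅), rfl⟩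
         measurableSet_compl := by
           rintro B ⟨B', hB', hBB'⟩
           refine ⟨B'ᶜ, hB'.compl, ?_⟩
           have hmem : ∀ ω ∈ U, ω ∈ B ↔ ω ∈ B' := by
             intro ω hω
             have h := Set.ext_iff.1 hBB' ω
             simpa [hω] using h
           ext ω
           simp only [Set.mem_inter_iff, Set.mem_compl_iff]
           exact ⟨fun ⟨h1, h2⟩ => ⟨fun h3 => h1 ((hmem ω h2).2 h3), h2⟩,
             fun ⟨h1, h2⟩ => ⟨fun h3 => h1 ((hmem ω h2).1 h3), h2⟩⟩
         measurableSet_iUnion := by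
           intro f hf
           choose B' hB' hBB' using hf
           refine ⟨⋃ i, B' i, MeasurableSet.iUnion hB', ?_⟩
           rw [Set.iUnion_inter, Set.iUnion_inter]
           exact Set.iUnion_congr hBB' } : MeasurableSpace Ω) := by
    refine sup_le ?_ (iSup_le fun k' => ?_)
    · intro B hB
      exact ⟨B, hlow _ hB, rfl⟩
    · rintro B ⟨S, hS, rfl⟩
      by_cases hkk : k' = k
      · subst hkk
        by_cases h0 : (0 : ℝ) ∈ S
        · refine ⟨Set.univ, (MeasurableSet.univ : MeasurableSet[m'] _), ?_⟩
          ext ω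
          simp only [Set.mem_inter_iff, Set.mem_preimage, Set.mem_univ, true_and]
          exact ⟨fun h => h.2, fun hωU => ⟨by rw [hXU ω hωU]; exact h0, hωU⟩⟩
        · refine ⟨∅, (MeasurableSet.empty : MeasurableSet[m'] ∅), ?_⟩
          ext ω
          simp only [Set.mem_inter_iff, Set.mem_preimage, Set.mem_empty_iff_false, false_and,
            iff_false, not_and]
          intro hωS hωU
          rw [hXU ω hωU] at hωS
          exact h0 hωS
      · exact ⟨X k' ⁻¹' S, hother k' hkk _ ⟨S, hS, rfl⟩, rfl⟩
  exact hle _ hB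

lemma key_setIntegral_zero' {Ω : Type*}
    [m0 : MeasurableSpace Ω] {μ : Measure Ω} [IsProbabilityMeasure μ]
    {ι : Type*} [Countable ι]
    (fam : Option ι → MeasurableSpace Ω)
    (hfam_le : ∀ o, fam o ≤ m0)
    (hindep : iIndep fam μ)
    (a g X : ι → Ω → ℝ)
    (ha : ∀ k, Measurable[fam none] (a k))
    (hg_le : ∀ k, MeasurableSpace.comap (g k) inferInstance ≤ fam (some k))
    (hg_sm : ∀ k, AEStronglyMeasurable (g k) μ)
    (hg_mean : ∀ k, ∫ ω, g k ω ∂μ = 0)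
    (U : ι → Set Ω)
    (haU : ∀ k ω, ω ∉ U k → a k ω = 0)
    (hXU : ∀ k ω, ω ∈ U k → X k ω = 0)
    (hX : ∀ k, Measurable[fam none ⊔ fam (some k)] (X k))
    {B : Set Ω}
    (hB : MeasurableSet[fam none ⊔ ⨆ k, MeasurableSpace.comap (X k) inferInstance] B)
    (k : ι) :
    ∫ ω in B, a k ω * g k ω ∂μ = 0 := by
  classical
  have hnone_le : fam none ≤ ⨆ o ∈ ({some k}ᶜ : Set (Option ι)), fam o :=
    le_biSup _ (by simp)
  have hm'_le : (⨆ o ∈ ({some k}ᶜ : Set (Option ι)), fam o) ≤ m0 :=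
    iSup_le fun o => iSup_le fun _ => hfam_le o
  have hindep' : Indep (fam (some k)) (⨆ o ∈ ({some k}ᶜ : Set (Option ι)), fam o) μ := by
    have h := indep_biSup_compl hfam_le hindep {some k}
    rwa [iSup_singleton] at h
  obtain ⟨B', hB', hBB'⟩ :=
    exists_trace_set (fam none) (⨆ o ∈ ({some k}ᶜ : Set (Option ι)), fam o) X (U k) k
      hnone_le
      (fun k' hk' => le_trans (hX k').comap_le
        (sup_le hnone_le (le_biSup _ (by simp [hk'] : some k' ∈ ({some k}ᶜ : Set (Option ι))))))
      (fun ω hω => hXU k ω hω) hB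
  have hmem : ∀ ω ∈ U k, ω ∈ B ↔ ω ∈ B' := by
    intro ω hω
    have h := Set.ext_iff.1 hBB' ω
    simpa [hω] using h
  have hsup_le : (fam none ⊔ ⨆ k', MeasurableSpace.comap (X k') inferInstance) ≤ m0 :=
    sup_le (hfam_le none) (iSup_le fun k' =>
      le_trans (hX k').comap_le (sup_le (hfam_le none) (hfam_le (some k'))))
  have hBm0 : MeasurableSet[m0] B := hsup_le _ hB
  have hag : Set.indicator B (fun ω => a k ω * g k ω)
      = fun ω => (Set.indicator B' (fun _ => (1 : ℝ)) ω * a k ω) * g k ω := by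
    funext ω
    by_cases hωU : ω ∈ U k
    · by_cases hωB : ω ∈ B
      · rw [Set.indicator_of_mem hωB, Set.indicator_of_mem ((hmem ω hωU).1 hωB), one_mul]
      · rw [Set.indicator_of_notMem hωB,
          Set.indicator_of_notMem (fun h => hωB ((hmem ω hωU).2 h)), zero_mul, zero_mul]
    · have ha0 : a k ω = 0 := haU k ω hωU
      simp [Set.indicator_apply, ha0]
  have hF_meas : Measurable[⨆ o ∈ ({some k}ᶜ : Set (Option ι)), fam o]
      (fun ω => Set.indicator B' (fun _ => (1 : ℝ)) ω * a k ω) :=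
    (measurable_const.indicator hB').mul ((ha k).mono hnone_le le_rfl)
  have hindepF : IndepFun (fun ω => Set.indicator B' (fun _ => (1 : ℝ)) ω * a k ω) (g k) μ := by
    rw [IndepFun_iff_Indep]
    exact indep_of_indep_of_le_right
      (indep_of_indep_of_le_left hindep'.symm hF_meas.comap_le) (hg_le k)
  have hzero : ∫ ω, (Set.indicator B' (fun _ => (1 : ℝ)) ω * a k ω) * g k ω ∂μ = 0 := by
    have h := hindepF.integral_fun_mul_eq_mul_integral
      ((hF_meas.mono hm'_le le_rfl).aestronglyMeasurable) (hg_sm k)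
    calc ∫ ω, (Set.indicator B' (fun _ => (1 : ℝ)) ω * a k ω) * g k ω ∂μ
        = (∫ ω, Set.indicator B' (fun _ => (1 : ℝ)) ω * a k ω ∂μ) * ∫ ω, g k ω ∂μ := h
      _ = 0 := by rw [hg_mean k, mul_zero]
  rw [← integral_indicator hBm0, hag, hzero]

/-- **Martingale part of Lemma 3.1 (Part I).**
The wild bootstrap counting-process integral
`D*(t) = n^{-1/2} Σ_{i=1}^n Σ_{j=1}^{nᵢ} c_{i,j} G_{i,j} 1{T_{i,j} ≤ t}`
is a martingale with respect to the wild bootstrap filtration `F₂`: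
each component of `D*(t)` is integrable, `D*(t)` is `F₂(t)`-measurable for every
`t ∈ [0,τ]`, and `E[D*(t) | F₂(s)] = D*(s)` a.s. for all `0 ≤ s ≤ t ≤ τ`. -/
theorem wild_bootstrap_process_is_martingale
    {Ω : Type*}
    -- the data σ-algebra 𝒟 = F₂(0), a sub-σ-algebra of the ambient one
    (𝒟 : MeasurableSpace Ω) [m0 : MeasurableSpace Ω] (h𝒟 : 𝒟 ≤ m0)
    (μ : Measure Ω) [IsProbabilityMeasure μ]
    (τ : ℝ) (hτ : 0 < τ) (p n : ℕ)
    -- jump structure: nJ i = number of jumps of individual i, T i j = jump times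
    (nJ : Fin n → Ω → ℕ) (T : Fin n → ℕ → Ω → ℝ)
    (hT_pos : ∀ i ω, ∀ j < nJ i ω, 0 < T i j ω ∧ T i j ω ≤ τ)
    (hT_mono : ∀ i ω, ∀ j k : ℕ, j < k → k < nJ i ω → T i j ω < T i k ω)
    (hnJ_meas : ∀ i, Measurable[𝒟] (nJ i))
    (hT_meas : ∀ i j, Measurable[𝒟] (T i j))
    -- the wild bootstrap multipliers: i.i.d., mean 0, variance 1,
    -- jointly independent of the data σ-algebra 𝒟
    (G : Fin n → ℕ → Ω → ℝ)
    (hG_meas : ∀ i j, Measurable (G i j))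
    (hG_indep : iIndep (fun o : Option (Fin n × ℕ) =>
        o.elim 𝒟 fun ij => MeasurableSpace.comap (G ij.1 ij.2) inferInstance) μ)
    (hG_ident : ∀ i j i' j', Measure.map (G i j) μ = Measure.map (G i' j') μ)
    (hG_mean : ∀ i j, ∫ ω, G i j ω ∂μ = 0)
    (hG_var : ∀ i j, ∫ ω, (G i j ω) ^ 2 ∂μ = 1)
    -- the 𝒟-measurable integrand values c_{i,j} = h_{n,i}(T_{i,j}, β̂ₙ)
    (c : Fin n → ℕ → Ω → Fin p → ℝ)
    (hc_meas : ∀ i j, Measurable[𝒟] (c i j))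
    -- integrability: E[Σ_{i=1}^n Σ_{j=1}^{nᵢ} ‖c_{i,j}‖] < ∞
    (hc_int : Integrable (fun ω =>
        ∑ i, ∑ j ∈ Finset.range (nJ i ω), ‖c i j ω‖) μ)
    -- the wild bootstrap filtration F₂(t)
    (F₂ : ℝ → MeasurableSpace Ω)
    (hF₂ : ∀ t, F₂ t = 𝒟 ⊔ ⨆ ij : Fin n × ℕ,
        MeasurableSpace.comap
          (fun ω => G ij.1 ij.2 ω * (if T ij.1 ij.2 ω ≤ t then (1 : ℝ) else 0))
          inferInstance)
    -- the wild bootstrap process D*(t)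
    (Dstar : ℝ → Ω → Fin p → ℝ)
    (hDstar : ∀ t ω, Dstar t ω = fun l => (Real.sqrt n)⁻¹ *
        ∑ i, ∑ j ∈ Finset.range (nJ i ω),
          c i j ω l * G i j ω * (if T i j ω ≤ t then (1 : ℝ) else 0)) :
    (∀ t ∈ Icc (0 : ℝ) τ, ∀ l : Fin p, Integrable (fun ω => Dstar t ω l) μ) ∧
    (∀ t ∈ Icc (0 : ℝ) τ, Measurable[F₂ t] (Dstar t)) ∧
    (∀ s t : ℝ, 0 ≤ s → s ≤ t → t ≤ τ →
        μ[Dstar t | F₂ s] =ᵐ[μ] Dstar s) := by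
  classical
  -- basic measurability facts
  have hχ : ∀ (r : ℝ) (i : Fin n) (j : ℕ),
      Measurable[𝒟] (fun ω => if T i j ω ≤ r then (1 : ℝ) else 0) := fun r i j =>
    Measurable.ite (measurableSet_le (hT_meas i j) measurable_const)
      measurable_const measurable_const
  have hκ : ∀ (i : Fin n) (j : ℕ), MeasurableSet[𝒟] {ω | j < nJ i ω} := fun i j =>
    hnJ_meas i (MeasurableSet.of_discrete : MeasurableSet (Set.Ioi j))
  have hcl : ∀ (i : Fin n) (j : ℕ) (l : Fin p), Measurable[𝒟] (fun ω => c i j ω l) :=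
    fun i j l => (measurable_pi_apply l).comp (hc_meas i j)
  have hfam_le : ∀ o : Option (Fin n × ℕ),
      (o.elim 𝒟 fun ij => MeasurableSpace.comap (G ij.1 ij.2) inferInstance) ≤ m0 := by
    rintro (_ | ij)
    · exact h𝒟
    · exact (hG_meas ij.1 ij.2).comap_le
  have hF₂_le : ∀ r, F₂ r ≤ m0 := by
    intro r
    rw [hF₂]
    refine sup_le h𝒟 (iSup_le fun ij => Measurable.comap_le ?_)
    exact (hG_meas ij.1 ij.2).mul ((hχ r ij.1 ij.2).mono h𝒟 le_rfl)
  have h𝒟F₂ : ∀ r, 𝒟 ≤ F₂ r := fun r => by rw [hF₂]; exact le_sup_left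
  have hgenF₂ : ∀ (r : ℝ) (ij : Fin n × ℕ),
      MeasurableSpace.comap
        (fun ω => G ij.1 ij.2 ω * (if T ij.1 ij.2 ω ≤ r then (1 : ℝ) else 0))
        inferInstance ≤ F₂ r := fun r ij => by
    rw [hF₂]
    refine le_trans ?_ le_sup_right
    exact le_iSup (fun ij : Fin n × ℕ => MeasurableSpace.comap
      (fun ω => G ij.1 ij.2 ω * (if T ij.1 ij.2 ω ≤ r then (1 : ℝ) else 0)) inferInstance) ij
  -- Part 2 : measurability
  have part2 : ∀ r : ℝ, Measurable[F₂ r] (Dstar r) := by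
    intro r
    have hD : Dstar r = fun ω l => (Real.sqrt n)⁻¹ *
        ∑ i, ∑ j ∈ Finset.range (nJ i ω),
          c i j ω l * G i j ω * (if T i j ω ≤ r then (1 : ℝ) else 0) :=
      funext fun ω => hDstar r ω
    rw [hD]
    refine measurable_pi_sum_range' (fun i => (hnJ_meas i).mono (h𝒟F₂ r) le_rfl)
      (fun i j l => ?_) _
    have h1 : Measurable[F₂ r] fun ω => c i j ω l := (hcl i j l).mono (h𝒟F₂ r) le_rfl
    have h2 : Measurable[F₂ r]
        (fun ω => G i j ω * (if T i j ω ≤ r then (1 : ℝ) else 0)) :=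
      Measurable.of_comap_le (hgenF₂ r (i, j))
    simpa [mul_assoc] using h1.fun_mul h2
  -- moments of G
  have hGsq_int : ∀ i j, Integrable (fun ω => G i j ω ^ 2) μ := by
    intro i j
    by_contra h
    have h1 := hG_var i j
    rw [integral_undef h] at h1
    exact zero_ne_one h1
  have hG_int : ∀ i j, Integrable (G i j) μ := fun i j =>
    ((memLp_two_iff_integrable_sq (hG_meas i j).aestronglyMeasurable).2
      (hGsq_int i j)).integrable one_le_two
  have hGnn_meas : ∀ (i : Fin n) (j : ℕ),
      Measurable (fun ω => (‖G i j ω‖₊ : ℝ≥0∞)) := fun i j =>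
    (hG_meas i j).nnnorm.coe_nnreal_ennreal
  have hGlint_eq : ∀ (i : Fin n) (j : ℕ) (i' : Fin n) (j' : ℕ),
      ∫⁻ ω, ‖G i j ω‖₊ ∂μ = ∫⁻ ω, ‖G i' j' ω‖₊ ∂μ := by
    intro i j i' j'
    have h1 := lintegral_map (μ := μ) (f := fun x : ℝ => (‖x‖₊ : ℝ≥0∞))
      (measurable_nnnorm.coe_nnreal_ennreal) (hG_meas i j)
    have h2 := lintegral_map (μ := μ) (f := fun x : ℝ => (‖x‖₊ : ℝ≥0∞))
      (measurable_nnnorm.coe_nnreal_ennreal) (hG_meas i' j')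
    rw [← h1, ← h2, hG_ident i j i' j']
  -- measurability of bound pieces
  have hb_meas : ∀ k : Fin n × ℕ, Measurable[𝒟]
      (fun ω => if k.2 < nJ k.1 ω then ‖c k.1 k.2 ω‖ else 0) := fun k =>
    Measurable.ite (hκ k.1 k.2) (measurable_norm.comp (hc_meas k.1 k.2)) measurable_const
  have hbnd_meas : ∀ k : Fin n × ℕ, Measurable
      (fun ω => ENNReal.ofReal (if k.2 < nJ k.1 ω then ‖c k.1 k.2 ω‖ else 0)) := fun k =>
    ((hb_meas k).mono h𝒟 le_rfl).ennreal_ofReal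
  -- master finiteness estimate
  have master : ∑' k : Fin n × ℕ,
      ∫⁻ ω, ENNReal.ofReal (if k.2 < nJ k.1 ω then ‖c k.1 k.2 ω‖ else 0)
        * ‖G k.1 k.2 ω‖₊ ∂μ < ⊤ := by
    by_cases hemp : IsEmpty (Fin n × ℕ)
    · haveI := hemp
      rw [tsum_empty]
      exact ENNReal.zero_lt_top
    · have hne : Nonempty (Fin n × ℕ) := not_isEmpty_iff.1 hemp
      obtain ⟨k0⟩ := hne
      have hstep : ∀ k : Fin n × ℕ,
          ∫⁻ ω, ENNReal.ofReal (if k.2 < nJ k.1 ω then ‖c k.1 k.2 ω‖ else 0)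
            * ‖G k.1 k.2 ω‖₊ ∂μ
          = (∫⁻ ω, ENNReal.ofReal (if k.2 < nJ k.1 ω then ‖c k.1 k.2 ω‖ else 0) ∂μ)
            * ∫⁻ ω, ‖G k0.1 k0.2 ω‖₊ ∂μ := by
        intro k
        have h1 : Indep 𝒟 (MeasurableSpace.comap (G k.1 k.2) inferInstance) μ :=
          hG_indep.indep (show (none : Option (Fin n × ℕ)) ≠ some k by simp)
        have hGk : Measurable[MeasurableSpace.comap (G k.1 k.2) inferInstance] (G k.1 k.2) :=
          Measurable.of_comap_le le_rfl
        have hIF : IndepFun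
            (fun ω => ENNReal.ofReal (if k.2 < nJ k.1 ω then ‖c k.1 k.2 ω‖ else 0))
            (fun ω => (‖G k.1 k.2 ω‖₊ : ℝ≥0∞)) μ := by
          rw [IndepFun_iff_Indep]
          refine indep_of_indep_of_le_right (indep_of_indep_of_le_left h1 ?_) ?_
          · exact Measurable.comap_le ((hb_meas k).ennreal_ofReal)
          · exact Measurable.comap_le ((measurable_nnnorm.coe_nnreal_ennreal).comp hGk)
        have hmul := lintegral_mul_eq_lintegral_mul_lintegral_of_indepFun
          (hbnd_meas k) (hGnn_meas k.1 k.2) hIF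
        simp only [Pi.mul_apply] at hmul
        rw [hmul, hGlint_eq k.1 k.2 k0.1 k0.2]
      calc ∑' k : Fin n × ℕ,
          ∫⁻ ω, ENNReal.ofReal (if k.2 < nJ k.1 ω then ‖c k.1 k.2 ω‖ else 0)
            * ‖G k.1 k.2 ω‖₊ ∂μ
          = ∑' k : Fin n × ℕ,
            (∫⁻ ω, ENNReal.ofReal (if k.2 < nJ k.1 ω then ‖c k.1 k.2 ω‖ else 0) ∂μ)
              * ∫⁻ ω, ‖G k0.1 k0.2 ω‖₊ ∂μ := tsum_congr hstep
        _ = (∑' k : Fin n × ℕ,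
            ∫⁻ ω, ENNReal.ofReal (if k.2 < nJ k.1 ω then ‖c k.1 k.2 ω‖ else 0) ∂μ)
              * ∫⁻ ω, ‖G k0.1 k0.2 ω‖₊ ∂μ := ENNReal.tsum_mul_right
        _ = (∫⁻ ω, ∑' k : Fin n × ℕ,
            ENNReal.ofReal (if k.2 < nJ k.1 ω then ‖c k.1 k.2 ω‖ else 0) ∂μ)
              * ∫⁻ ω, ‖G k0.1 k0.2 ω‖₊ ∂μ := by
            rw [lintegral_tsum fun k => (hbnd_meas k).aemeasurable]
        _ = (∫⁻ ω, ENNReal.ofReal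
              (∑ i, ∑ j ∈ Finset.range (nJ i ω), ‖c i j ω‖) ∂μ)
              * ∫⁻ ω, ‖G k0.1 k0.2 ω‖₊ ∂μ := by
            congr 1
            refine lintegral_congr fun ω => ?_
            rw [tsum_eq_double_sum' (fun i => nJ i ω)
              (fun k => ENNReal.ofReal (if k.2 < nJ k.1 ω then ‖c k.1 k.2 ω‖ else 0))
              (fun k hk => by
                have hk' : ¬ k.2 < nJ k.1 ω := hk
                beta_reduce
                rw [if_neg hk', ENNReal.ofReal_zero])]
            beta_reduce
            rw [ENNReal.ofReal_sum_of_nonneg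
              (fun i _ => Finset.sum_nonneg fun j _ => norm_nonneg _)]
            refine Finset.sum_congr rfl fun i _ => ?_
            rw [ENNReal.ofReal_sum_of_nonneg (fun j _ => norm_nonneg _)]
            exact Finset.sum_congr rfl fun j hj => by rw [if_pos (Finset.mem_range.1 hj)]
        _ < ⊤ := by
            refine ENNReal.mul_lt_top ?_ (hG_int k0.1 k0.2).2
            refine lt_of_eq_of_lt ?_ hc_int.2
            refine lintegral_congr fun ω => ?_
            rw [← ofReal_norm, Real.norm_of_nonneg (by positivity)]
  -- pointwise bound for the process
  have hptbound : ∀ (r : ℝ) (ω : Ω), (‖Dstar r ω‖₊ : ℝ≥0∞) ≤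
      ENNReal.ofReal ((Real.sqrt n)⁻¹) *
        ∑' k : Fin n × ℕ, ENNReal.ofReal (if k.2 < nJ k.1 ω then ‖c k.1 k.2 ω‖ else 0)
          * ‖G k.1 k.2 ω‖₊ := by
    intro r ω
    have h1 : ‖Dstar r ω‖ ≤ (Real.sqrt n)⁻¹ *
        ∑ i, ∑ j ∈ Finset.range (nJ i ω), ‖c i j ω‖ * |G i j ω| := by
      rw [hDstar]
      refine (pi_norm_le_iff_of_nonneg (by positivity)).2 fun l => ?_
      show ‖(Real.sqrt n)⁻¹ * ∑ i, ∑ j ∈ Finset.range (nJ i ω),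
        c i j ω l * G i j ω * (if T i j ω ≤ r then (1 : ℝ) else 0)‖ ≤ _
      rw [Real.norm_eq_abs, abs_mul, abs_of_nonneg (inv_nonneg.2 (Real.sqrt_nonneg _))]
      refine mul_le_mul_of_nonneg_left ?_ (inv_nonneg.2 (Real.sqrt_nonneg _))
      refine le_trans (Finset.abs_sum_le_sum_abs _ _) ?_
      refine Finset.sum_le_sum fun i _ => ?_
      refine le_trans (Finset.abs_sum_le_sum_abs _ _) ?_
      refine Finset.sum_le_sum fun j _ => ?_
      rw [abs_mul, abs_mul]
      have hcle : |c i j ω l| ≤ ‖c i j ω‖ := by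
        rw [← Real.norm_eq_abs]; exact norm_le_pi_norm (c i j ω) l
      have hχle : |if T i j ω ≤ r then (1 : ℝ) else 0| ≤ 1 := by split <;> norm_num
      calc |c i j ω l| * |G i j ω| * |if T i j ω ≤ r then (1 : ℝ) else 0|
          ≤ ‖c i j ω‖ * |G i j ω| * 1 := by
            refine mul_le_mul (mul_le_mul hcle le_rfl (abs_nonneg _) (norm_nonneg _))
              hχle (abs_nonneg _) (by positivity)
        _ = ‖c i j ω‖ * |G i j ω| := mul_one _
    rw [← enorm_eq_nnnorm, ← ofReal_norm]
    refine le_trans (ENNReal.ofReal_le_ofReal h1) ?_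
    rw [ENNReal.ofReal_mul (inv_nonneg.2 (Real.sqrt_nonneg _))]
    refine mul_le_mul_right (le_of_eq ?_) _
    rw [tsum_eq_double_sum' (fun i => nJ i ω)
      (fun k => ENNReal.ofReal (if k.2 < nJ k.1 ω then ‖c k.1 k.2 ω‖ else 0)
        * ‖G k.1 k.2 ω‖₊)
      (fun k hk => by
        have hk' : ¬ k.2 < nJ k.1 ω := hk
        beta_reduce
        rw [if_neg hk', ENNReal.ofReal_zero, zero_mul])]
    beta_reduce
    rw [ENNReal.ofReal_sum_of_nonneg
      (fun i _ => Finset.sum_nonneg fun j _ => by positivity)]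
    refine Finset.sum_congr rfl fun i _ => ?_
    rw [ENNReal.ofReal_sum_of_nonneg (fun j _ => by positivity)]
    refine Finset.sum_congr rfl fun j hj => ?_
    rw [if_pos (Finset.mem_range.1 hj), ENNReal.ofReal_mul (norm_nonneg _),
      ← enorm_eq_nnnorm, Real.enorm_eq_ofReal_abs]
  have hmeas_inner : Measurable (fun ω => ∑' k : Fin n × ℕ,
      ENNReal.ofReal (if k.2 < nJ k.1 ω then ‖c k.1 k.2 ω‖ else 0) * ‖G k.1 k.2 ω‖₊) :=
    Measurable.ennreal_tsum fun k => (hbnd_meas k).mul (hGnn_meas k.1 k.2)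
  -- Part 1 : integrability (Pi-valued)
  have part1' : ∀ r : ℝ, Integrable (Dstar r) μ := by
    intro r
    refine ⟨((part2 r).mono (hF₂_le r) le_rfl).aestronglyMeasurable, ?_⟩
    calc ∫⁻ ω, ‖Dstar r ω‖₊ ∂μ
        ≤ ∫⁻ ω, ENNReal.ofReal ((Real.sqrt n)⁻¹) *
            ∑' k : Fin n × ℕ, ENNReal.ofReal (if k.2 < nJ k.1 ω then ‖c k.1 k.2 ω‖ else 0)
              * ‖G k.1 k.2 ω‖₊ ∂μ := lintegral_mono (hptbound r)
      _ = ENNReal.ofReal ((Real.sqrt n)⁻¹) *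
            ∫⁻ ω, ∑' k : Fin n × ℕ, ENNReal.ofReal (if k.2 < nJ k.1 ω then ‖c k.1 k.2 ω‖ else 0)
              * ‖G k.1 k.2 ω‖₊ ∂μ := lintegral_const_mul _ hmeas_inner
      _ = ENNReal.ofReal ((Real.sqrt n)⁻¹) *
            ∑' k : Fin n × ℕ, ∫⁻ ω, ENNReal.ofReal (if k.2 < nJ k.1 ω then ‖c k.1 k.2 ω‖ else 0)
              * ‖G k.1 k.2 ω‖₊ ∂μ := by
          rw [lintegral_tsum fun k => ((hbnd_meas k).fun_mul (hGnn_meas k.1 k.2)).aemeasurable]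
      _ < ⊤ := ENNReal.mul_lt_top ENNReal.ofReal_lt_top master
  have part1c : ∀ (r : ℝ) (l : Fin p), Integrable (fun ω => Dstar r ω l) μ := by
    intro r l
    exact (ContinuousLinearMap.proj (R := ℝ) (φ := fun _ : Fin p => ℝ) l).integrable_comp
      (part1' r)
  refine ⟨fun t _ l => part1c t l, fun t _ => part2 t, ?_⟩
  -- Part 3 : martingale property
  intro s t hs0 hst htτ
  have hm : F₂ s ≤ m0 := hF₂_le s
  haveI : SigmaFinite (μ.trim hm) := inferInstance
  refine (ae_eq_condExp_of_forall_setIntegral_eq hm (part1' t)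
    (fun B hB hμB => (part1' s).integrableOn)
    (fun B hB hμB => ?_)
    (StronglyMeasurable.aestronglyMeasurable ((part2 s).stronglyMeasurable))).symm
  -- goal : ∫ x in B, Dstar s x ∂μ = ∫ x in B, Dstar t x ∂μ
  have hBm0 : MeasurableSet B := hm _ hB
  have hscalar : ∀ l : Fin p, ∫ ω in B, Dstar t ω l ∂μ = ∫ ω in B, Dstar s ω l ∂μ := by
    intro l
    set a : Fin n × ℕ → Ω → ℝ := fun k ω =>
      (if k.2 < nJ k.1 ω then (1 : ℝ) else 0) *
        ((Real.sqrt n)⁻¹ * c k.1 k.2 ω l *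
          ((if T k.1 k.2 ω ≤ t then (1 : ℝ) else 0)
            - (if T k.1 k.2 ω ≤ s then (1 : ℝ) else 0))) with ha_def
    have ha_meas : ∀ k : Fin n × ℕ, Measurable[𝒟] (a k) := by
      intro k
      rw [ha_def]
      exact (Measurable.ite (hκ k.1 k.2) measurable_const measurable_const).mul
        ((Measurable.const_mul (hcl k.1 k.2 l) _).mul
          ((hχ t k.1 k.2).sub (hχ s k.1 k.2)))
    have haG_meas : ∀ k : Fin n × ℕ, Measurable (fun ω => a k ω * G k.1 k.2 ω) := fun k =>
      ((ha_meas k).mono h𝒟 le_rfl).mul (hG_meas k.1 k.2)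
    have hpt : ∀ ω, Dstar t ω l - Dstar s ω l
        = ∑' k : Fin n × ℕ, a k ω * G k.1 k.2 ω := by
      intro ω
      rw [tsum_eq_double_sum' (fun i => nJ i ω) (fun k => a k ω * G k.1 k.2 ω)
        (fun k hk => by
          have hk' : ¬ k.2 < nJ k.1 ω := hk
          simp only [ha_def]
          rw [if_neg hk']
          ring)]
      beta_reduce
      simp only [hDstar]
      have hterm : ∀ i : Fin n, ∑ j ∈ Finset.range (nJ i ω), a (i, j) ω * G i j ω
          = ∑ j ∈ Finset.range (nJ i ω),
            ((Real.sqrt n)⁻¹ * (c i j ω l * G i j ω * (if T i j ω ≤ t then (1 : ℝ) else 0))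
              - (Real.sqrt n)⁻¹ * (c i j ω l * G i j ω * (if T i j ω ≤ s then (1 : ℝ) else 0))) := by
        refine fun i => Finset.sum_congr rfl fun j hj => ?_
        simp only [ha_def]
        rw [if_pos (Finset.mem_range.1 hj)]
        ring
      rw [Finset.sum_congr rfl fun i _ => hterm i]
      simp only [Finset.sum_sub_distrib, Finset.mul_sum]
    -- each set integral vanishes
    have hker : ∀ k : Fin n × ℕ, ∫ ω in B, a k ω * G k.1 k.2 ω ∂μ = 0 := by
      intro k
      refine key_setIntegral_zero'
        (fun o : Option (Fin n × ℕ) =>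
          o.elim 𝒟 fun ij => MeasurableSpace.comap (G ij.1 ij.2) inferInstance)
        hfam_le hG_indep a (fun k => G k.1 k.2)
        (fun k ω => G k.1 k.2 ω * (if T k.1 k.2 ω ≤ s then (1 : ℝ) else 0))
        ha_meas (fun k => le_rfl) (fun k => (hG_meas k.1 k.2).aestronglyMeasurable)
        (fun k => hG_mean k.1 k.2)
        (fun k => {ω | ¬ T k.1 k.2 ω ≤ s}) ?_ ?_ ?_ ((hF₂ s) ▸ hB) k
      · intro k ω hω
        simp only [Set.mem_setOf_eq, not_not] at hω
        simp only [ha_def]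
        rw [if_pos (le_trans hω hst), if_pos hω]
        ring
      · intro k ω hω
        beta_reduce
        rw [if_neg hω, mul_zero]
      · intro k
        exact (Measurable.of_comap_le le_sup_right).mul
          ((hχ s k.1 k.2).mono le_sup_left le_rfl)
    -- difference integral is zero
    have hzero : ∫ ω in B, (Dstar t ω l - Dstar s ω l) ∂μ = 0 := by
      have hrw : (fun ω => Dstar t ω l - Dstar s ω l)
          = fun ω => ∑' k : Fin n × ℕ, a k ω * G k.1 k.2 ω := funext hpt
      rw [hrw, integral_tsum (fun k => (haG_meas k).aestronglyMeasurable.restrict) ?_]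
      · simp [hker]
      · -- finiteness
        refine ne_of_lt (lt_of_le_of_lt ?_
          (ENNReal.mul_lt_top (ENNReal.ofReal_lt_top (r := (Real.sqrt n)⁻¹)) master))
        rw [← ENNReal.tsum_mul_left]
        refine ENNReal.tsum_le_tsum fun k => ?_
        refine le_trans (setLIntegral_le_lintegral _ _) ?_
        rw [← lintegral_const_mul _ ((hbnd_meas k).fun_mul (hGnn_meas k.1 k.2))]
        refine lintegral_mono fun ω => ?_
        have habs : |a k ω| ≤ (Real.sqrt n)⁻¹ * (if k.2 < nJ k.1 ω then ‖c k.1 k.2 ω‖ else 0) := by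
          simp only [ha_def]
          by_cases hk : k.2 < nJ k.1 ω
          · rw [if_pos hk, if_pos hk, one_mul]
            have hd : |(if T k.1 k.2 ω ≤ t then (1 : ℝ) else 0)
                - (if T k.1 k.2 ω ≤ s then (1 : ℝ) else 0)| ≤ 1 := by
              split_ifs <;> norm_num
            have hcle : |c k.1 k.2 ω l| ≤ ‖c k.1 k.2 ω‖ := by
              rw [← Real.norm_eq_abs]; exact norm_le_pi_norm (c k.1 k.2 ω) l
            calc |(Real.sqrt n)⁻¹ * c k.1 k.2 ω l *
                ((if T k.1 k.2 ω ≤ t then (1 : ℝ) else 0)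
                  - (if T k.1 k.2 ω ≤ s then (1 : ℝ) else 0))|
                = (Real.sqrt n)⁻¹ * |c k.1 k.2 ω l| *
                  |(if T k.1 k.2 ω ≤ t then (1 : ℝ) else 0)
                    - (if T k.1 k.2 ω ≤ s then (1 : ℝ) else 0)| := by
                  rw [abs_mul, abs_mul, abs_of_nonneg (inv_nonneg.2 (Real.sqrt_nonneg _))]
              _ ≤ (Real.sqrt n)⁻¹ * ‖c k.1 k.2 ω‖ * 1 := by
                  refine mul_le_mul (mul_le_mul le_rfl hcle (abs_nonneg _)
                    (inv_nonneg.2 (Real.sqrt_nonneg _))) hd (abs_nonneg _) (by positivity)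
              _ = (Real.sqrt n)⁻¹ * ‖c k.1 k.2 ω‖ := mul_one _
          · rw [if_neg hk, if_neg hk, zero_mul, abs_zero, mul_zero]
        calc (‖a k ω * G k.1 k.2 ω‖₊ : ℝ≥0∞)
            = (‖a k ω‖₊ : ℝ≥0∞) * ‖G k.1 k.2 ω‖₊ := by rw [nnnorm_mul, ENNReal.coe_mul]
          _ ≤ (ENNReal.ofReal ((Real.sqrt n)⁻¹) *
                ENNReal.ofReal (if k.2 < nJ k.1 ω then ‖c k.1 k.2 ω‖ else 0)) * ‖G k.1 k.2 ω‖₊ := by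
              refine mul_le_mul_left ?_ _
              rw [← enorm_eq_nnnorm, Real.enorm_eq_ofReal_abs,
                ← ENNReal.ofReal_mul (inv_nonneg.2 (Real.sqrt_nonneg _))]
              exact ENNReal.ofReal_le_ofReal habs
          _ = ENNReal.ofReal ((Real.sqrt n)⁻¹) *
              (ENNReal.ofReal (if k.2 < nJ k.1 ω then ‖c k.1 k.2 ω‖ else 0) * ‖G k.1 k.2 ω‖₊) := by
              rw [mul_assoc]
    have hsub := integral_sub ((part1c t l).integrableOn (s := B))
      ((part1c s l).integrableOn (s := B))
    rw [hsub] at hzero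
    exact sub_eq_zero.1 hzero
  funext l
  have hprojs := (ContinuousLinearMap.proj (R := ℝ) (φ := fun _ : Fin p => ℝ) l).integral_comp_comm
    ((part1' s).integrableOn (s := B))
  have hprojt := (ContinuousLinearMap.proj (R := ℝ) (φ := fun _ : Fin p => ℝ) l).integral_comp_comm
    ((part1' t).integrableOn (s := B))
  simp only [ContinuousLinearMap.proj_apply] at hprojs hprojt
  calc (∫ x in B, Dstar s x ∂μ) l = ∫ x in B, Dstar s x l ∂μ := hprojs.symm
    _ = ∫ x in B, Dstar t x l ∂μ := (hscalar l).symm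
    _ = (∫ x in B, Dstar t x ∂μ) l := hprojt
end

section
/- Under the stated setup, and assuming E[(Σ_{i=1}^n Σ_{j=1}^{nᵢ} ‖c_{i,j}‖)²] < ∞, the ℝ^{p×p}-valued process t ↦ D*(t) D*(t)ᵀ − (1/n) Σ_{i=1}^n Σ_{j=1}^{nᵢ} c_{i,j} c_{i,j}ᵀ 1{T_{i,j} ≤ t} is a martingale (entrywise) with respect to the filtration (F₂(t))_{t∈[0,τ]}. This expresses that the predictable covariation process of the wild bootstrap martingale is ⟨D*_{n,h}⟩(t) = (1/n) Σᵢ ∫₀^t h_{n,i}(u, β̂ₙ)^{⊗2} dNᵢ(u), as asserted in Lemma 3.1. -/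
open MeasureTheory ProbabilityTheory Filter Set

open scoped ENNReal

namespace WBaux

variable {Ω : Type*}

lemma meas_sum_range {M : MeasurableSpace Ω} {N : Ω → ℕ} (hN : Measurable[M] N)
    {g : ℕ → Ω → ℝ} (hg : ∀ j, Measurable[M] (g j)) :
    Measurable[M] fun ω => ∑ j ∈ Finset.range (N ω), g j ω := by
  letI : MeasurableSpace Ω := M
  have h : Measurable fun q : Ω × ℕ => ∑ j ∈ Finset.range q.2, g j q.1 :=
    measurable_from_prod_countable_left fun k => by
      simpa using Finset.measurable_sum (Finset.range k) (fun j _ => hg j)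
  exact h.comp (measurable_id.prodMk hN)

open scoped ENNReal in
lemma tsum_ind_eq {n : ℕ} (N : Fin n → ℕ) (f : Fin n × ℕ → ℝ≥0∞) :
    ∑' x : Fin n × ℕ, (f x * if x.2 < N x.1 then 1 else 0)
      = ∑ i, ∑ j ∈ Finset.range (N i), f (i, j) := by
  rw [ENNReal.tsum_prod', tsum_fintype]
  refine Finset.sum_congr rfl fun i _ => ?_
  rw [tsum_eq_sum (s := Finset.range (N i)) (fun j hj => by
    simp [Nat.le_of_not_lt (fun h => hj (Finset.mem_range.mpr h))])]
  exact Finset.sum_congr rfl fun j hj => by simp [Finset.mem_range.mp hj]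

lemma sum_range_ite (M K : ℕ) (hK : K ≤ M) (F : ℕ → ℝ) :
    ∑ j ∈ Finset.range M, (if j < K then F j else 0) = ∑ j ∈ Finset.range K, F j := by
  rw [← Finset.sum_subset (Finset.range_subset_range.mpr hK)
    (fun x _ hx => by simp [Nat.le_of_not_lt (fun h => hx (Finset.mem_range.mpr h))])]
  exact Finset.sum_congr rfl fun j hj => by simp [Finset.mem_range.mp hj]

lemma sum_sum_sq_le {κ : Type*} [Fintype κ] (R : κ → Finset ℕ) (a : κ → ℕ → ℝ)
    (ha : ∀ i j, 0 ≤ a i j) :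
    ∑ i, ∑ j ∈ R i, (a i j) ^ 2 ≤ (∑ i, ∑ j ∈ R i, a i j) ^ 2 := by
  have hS : ∀ i j, j ∈ R i → a i j ≤ ∑ i, ∑ j ∈ R i, a i j := by
    intro i j hj
    calc a i j ≤ ∑ j ∈ R i, a i j := Finset.single_le_sum (fun j _ => ha i j) hj
    _ ≤ _ := Finset.single_le_sum
        (f := fun i => ∑ j ∈ R i, a i j)
        (fun i _ => Finset.sum_nonneg fun j _ => ha i j) (Finset.mem_univ i)
  calc ∑ i, ∑ j ∈ R i, (a i j) ^ 2
      ≤ ∑ i, ∑ j ∈ R i, a i j * (∑ i, ∑ j ∈ R i, a i j) := by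
        refine Finset.sum_le_sum fun i _ => Finset.sum_le_sum fun j hj => ?_
        rw [sq]
        exact mul_le_mul_of_nonneg_left (hS i j hj) (ha i j)
    _ = (∑ i, ∑ j ∈ R i, a i j) ^ 2 := by
        rw [sq, Finset.sum_mul]
        exact Finset.sum_congr rfl fun i _ => by rw [Finset.sum_mul]

end WBaux

/-- **Predictable covariation part of Lemma 3.1 (Part I).**
The matrix-valued process
`t ↦ D*(t) D*(t)ᵀ − (1/n) Σ_{i=1}^n Σ_{j=1}^{nᵢ} c_{i,j} c_{i,j}ᵀ 1{T_{i,j} ≤ t}`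
is an entrywise martingale with respect to the wild bootstrap filtration `F₂`;
this expresses that `⟨D*_{n,h}⟩(t) = (1/n) Σᵢ ∫₀^t h_{n,i}(u, β̂ₙ)^{⊗2} dNᵢ(u)`
is the predictable covariation process of the wild bootstrap martingale. -/
theorem wild_bootstrap_predictable_covariation
    {Ω : Type*}
    -- the data σ-algebra 𝒟 = F₂(0), a sub-σ-algebra of the ambient one
    (𝒟 : MeasurableSpace Ω) [m0 : MeasurableSpace Ω] (h𝒟 : 𝒟 ≤ m0)
    (μ : Measure Ω) [IsProbabilityMeasure μ]
    (τ : ℝ) (hτ : 0 < τ) (p n : ℕ)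
    -- jump structure
    (nJ : Fin n → Ω → ℕ) (T : Fin n → ℕ → Ω → ℝ)
    (hT_pos : ∀ i ω, ∀ j < nJ i ω, 0 < T i j ω ∧ T i j ω ≤ τ)
    (hT_mono : ∀ i ω, ∀ j k : ℕ, j < k → k < nJ i ω → T i j ω < T i k ω)
    (hnJ_meas : ∀ i, Measurable[𝒟] (nJ i))
    (hT_meas : ∀ i j, Measurable[𝒟] (T i j))
    -- the wild bootstrap multipliers
    (G : Fin n → ℕ → Ω → ℝ)
    (hG_meas : ∀ i j, Measurable (G i j))
    (hG_indep : iIndep (fun o : Option (Fin n × ℕ) =>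
        o.elim 𝒟 fun ij => MeasurableSpace.comap (G ij.1 ij.2) inferInstance) μ)
    (hG_ident : ∀ i j i' j', Measure.map (G i j) μ = Measure.map (G i' j') μ)
    (hG_mean : ∀ i j, ∫ ω, G i j ω ∂μ = 0)
    (hG_var : ∀ i j, ∫ ω, (G i j ω) ^ 2 ∂μ = 1)
    -- the 𝒟-measurable integrand values
    (c : Fin n → ℕ → Ω → Fin p → ℝ)
    (hc_meas : ∀ i j, Measurable[𝒟] (c i j))
    -- integrability: E[(Σ_{i=1}^n Σ_{j=1}^{nᵢ} ‖c_{i,j}‖)²] < ∞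
    (hc_int : Integrable (fun ω =>
        (∑ i, ∑ j ∈ Finset.range (nJ i ω), ‖c i j ω‖) ^ 2) μ)
    -- the wild bootstrap filtration F₂(t)
    (F₂ : ℝ → MeasurableSpace Ω)
    (hF₂ : ∀ t, F₂ t = 𝒟 ⊔ ⨆ ij : Fin n × ℕ,
        MeasurableSpace.comap
          (fun ω => G ij.1 ij.2 ω * (if T ij.1 ij.2 ω ≤ t then (1 : ℝ) else 0))
          inferInstance)
    -- the wild bootstrap process D*(t)
    (Dstar : ℝ → Ω → Fin p → ℝ)
    (hDstar : ∀ t ω, Dstar t ω = fun l => (Real.sqrt n)⁻¹ *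
        ∑ i, ∑ j ∈ Finset.range (nJ i ω),
          c i j ω l * G i j ω * (if T i j ω ≤ t then (1 : ℝ) else 0))
    -- the compensated squared process Q(t) = D*(t)D*(t)ᵀ − ⟨D*⟩(t), entrywise
    (Q : ℝ → Ω → Fin p → Fin p → ℝ)
    (hQ : ∀ t ω l m, Q t ω l m = Dstar t ω l * Dstar t ω m -
        (n : ℝ)⁻¹ * ∑ i, ∑ j ∈ Finset.range (nJ i ω),
          c i j ω l * c i j ω m * (if T i j ω ≤ t then (1 : ℝ) else 0)) :
    ∀ l m : Fin p,
      (∀ t ∈ Icc (0 : ℝ) τ, Integrable (fun ω => Q t ω l m) μ) ∧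
      (∀ t ∈ Icc (0 : ℝ) τ, Measurable[F₂ t] (fun ω => Q t ω l m)) ∧
      (∀ s t : ℝ, 0 ≤ s → s ≤ t → t ≤ τ →
          μ[(fun ω => Q t ω l m) | F₂ s] =ᵐ[μ] fun ω => Q s ω l m) := by
  classical
  -- abbreviations
  set ms : Option (Fin n × ℕ) → MeasurableSpace Ω :=
    (fun o => o.elim 𝒟 fun ij => MeasurableSpace.comap (G ij.1 ij.2) inferInstance)
    with hms_def
  set SN : Ω → ℝ := fun ω => ∑ i, ∑ j ∈ Finset.range (nJ i ω), ‖c i j ω‖ with hSN_def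
  -- measurability toolbox
  have hGm : ∀ x : Fin n × ℕ, Measurable (G x.1 x.2) := fun x => hG_meas x.1 x.2
  have hcl : ∀ (i : Fin n) (j : ℕ) (l0 : Fin p), Measurable[𝒟] fun ω => c i j ω l0 :=
    fun i j l0 => (measurable_pi_apply l0).comp (hc_meas i j)
  have hTle : ∀ (i : Fin n) (j : ℕ) (r : ℝ), MeasurableSet[𝒟] {ω | T i j ω ≤ r} :=
    fun i j r => hT_meas i j measurableSet_Iic
  have hind : ∀ (i : Fin n) (j : ℕ) (r : ℝ),
      Measurable[𝒟] fun ω => (if T i j ω ≤ r then (1:ℝ) else 0) :=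
    fun i j r => Measurable.ite (hTle i j r) measurable_const measurable_const
  have hms_le : ∀ o, ms o ≤ m0 := by
    rintro (_ | ij)
    · exact h𝒟
    · exact (hGm ij).comap_le
  have h𝒟F : ∀ r, 𝒟 ≤ F₂ r := by intro r; rw [hF₂ r]; exact le_sup_left
  have hgen_le : ∀ (x : Fin n × ℕ) (r : ℝ),
      MeasurableSpace.comap
        (fun ω => G x.1 x.2 ω * (if T x.1 x.2 ω ≤ r then (1:ℝ) else 0)) inferInstance
        ≤ F₂ r := by
    intro x r; rw [hF₂ r]
    exact le_sup_of_le_right (le_iSup (f := fun ij : Fin n × ℕ =>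
      MeasurableSpace.comap
        (fun ω => G ij.1 ij.2 ω * (if T ij.1 ij.2 ω ≤ r then (1:ℝ) else 0))
        inferInstance) x)
  have hXmF : ∀ (x : Fin n × ℕ) (r : ℝ),
      Measurable[F₂ r] fun ω => G x.1 x.2 ω * (if T x.1 x.2 ω ≤ r then (1:ℝ) else 0) :=
    fun x r => Measurable.of_comap_le (hgen_le x r)
  have hF₂_le : ∀ r, F₂ r ≤ m0 := by
    intro r; rw [hF₂ r]
    refine sup_le h𝒟 (iSup_le fun x => Measurable.comap_le ?_)
    exact (hGm x).mul ((hind x.1 x.2 r).mono h𝒟 le_rfl)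
  set Me : Fin n × ℕ → MeasurableSpace Ω :=
    fun x => ⨆ o ∈ ({some x}ᶜ : Set (Option (Fin n × ℕ))), ms o with hMe_def
  have hMe_le : ∀ x, Me x ≤ m0 := fun x => iSup₂_le fun o _ => hms_le o
  have h𝒟Me : ∀ x, 𝒟 ≤ Me x := fun x =>
    le_iSup₂ (f := fun o (_ : o ∈ ({some x}ᶜ : Set (Option (Fin n × ℕ)))) => ms o)
      none (by simp)
  have hGMe : ∀ x y : Fin n × ℕ, y ≠ x →
      MeasurableSpace.comap (G y.1 y.2) inferInstance ≤ Me x := fun x y h =>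
    le_iSup₂ (f := fun o (_ : o ∈ ({some x}ᶜ : Set (Option (Fin n × ℕ)))) => ms o)
      (some y) (by simp [h])
  have hGMe' : ∀ x y : Fin n × ℕ, y ≠ x → Measurable[Me x] (G y.1 y.2) :=
    fun x y h => Measurable.of_comap_le (hGMe x y h)
  have hIndepMe : ∀ x : Fin n × ℕ,
      Indep (MeasurableSpace.comap (G x.1 x.2) inferInstance) (Me x) μ := by
    intro x
    have h := indep_biSup_compl hms_le hG_indep {some x}
    rw [iSup_singleton] at h
    exact h
  have hIndep𝒟 : Indep 𝒟 (⨆ o ∈ ({none}ᶜ : Set (Option (Fin n × ℕ))), ms o) μ := by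
    have h := indep_biSup_compl hms_le hG_indep {none}
    rw [iSup_singleton] at h
    exact h
  have hGnone : ∀ x : Fin n × ℕ,
      Measurable[⨆ o ∈ ({none}ᶜ : Set (Option (Fin n × ℕ))), ms o] (G x.1 x.2) :=
    fun x => Measurable.of_comap_le
      (le_iSup₂ (f := fun o (_ : o ∈ ({none}ᶜ : Set (Option (Fin n × ℕ)))) => ms o)
        (some x) (by simp))
  -- the core factorization lemma
  have hcore : ∀ (x : Fin n × ℕ) (g H : Ω → ℝ),
      Measurable[MeasurableSpace.comap (G x.1 x.2) inferInstance] g →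
      Measurable[Me x] H →
      ∫ ω, g ω * H ω ∂μ = (∫ ω, g ω ∂μ) * ∫ ω, H ω ∂μ := by
    intro x g H hg hH
    have hif : IndepFun g H μ := by
      rw [IndepFun_iff_Indep]
      exact indep_of_indep_of_le_right
        (indep_of_indep_of_le_left (hIndepMe x) hg.comap_le) hH.comap_le
    have h := hif.integral_mul_eq_mul_integral
      ((hg.mono ((hGm x).comap_le) le_rfl).aestronglyMeasurable)
      ((hH.mono (hMe_le x) le_rfl).aestronglyMeasurable)
    simpa [Pi.mul_apply] using h
  -- SN facts
  have hcn : ∀ (i : Fin n) (j : ℕ), Measurable[𝒟] fun ω => ‖c i j ω‖ := by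
    intro i j; letI := 𝒟; exact (hc_meas i j).norm
  have hSN_meas : Measurable[𝒟] SN :=
    Finset.measurable_sum _ fun i _ =>
      WBaux.meas_sum_range (hnJ_meas i) (fun j => hcn i j)
  have hSN0 : ∀ ω, 0 ≤ SN ω := fun ω =>
    Finset.sum_nonneg fun i _ => Finset.sum_nonneg fun j _ => norm_nonneg _
  have hSN2_int : Integrable (fun ω => SN ω ^ 2) μ := hc_int
  have hcSN : ∀ (x : Fin n × ℕ) (l0 : Fin p) ω, x.2 < nJ x.1 ω →
      |c x.1 x.2 ω l0| ≤ SN ω := by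
    intro x l0 ω hx
    calc |c x.1 x.2 ω l0| ≤ ‖c x.1 x.2 ω‖ := by
          rw [← Real.norm_eq_abs]; exact norm_le_pi_norm (c x.1 x.2 ω) l0
    _ ≤ ∑ j ∈ Finset.range (nJ x.1 ω), ‖c x.1 j ω‖ :=
        Finset.single_le_sum (f := fun j => ‖c x.1 j ω‖)
          (fun j _ => norm_nonneg _) (Finset.mem_range.mpr hx)
    _ ≤ SN ω := Finset.single_le_sum
        (f := fun i => ∑ j ∈ Finset.range (nJ i ω), ‖c i j ω‖)
        (fun i _ => Finset.sum_nonneg fun j _ => norm_nonneg _) (Finset.mem_univ x.1)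
  -- moments of G
  have hGsq_int : ∀ x : Fin n × ℕ, Integrable (fun ω => G x.1 x.2 ω ^ 2) μ := by
    intro x
    by_contra h
    have := hG_var x.1 x.2
    rw [integral_undef h] at this
    norm_num at this
  have hG_int : ∀ x : Fin n × ℕ, Integrable (G x.1 x.2) μ := fun x =>
    ((memLp_two_iff_integrable_sq (hGm x).aestronglyMeasurable).mpr
      (hGsq_int x)).integrable one_le_two
  have hGG_int : ∀ x y : Fin n × ℕ,
      Integrable (fun ω => G x.1 x.2 ω * G y.1 y.2 ω) μ := by
    intro x y
    by_cases h : y = x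
    · subst h; simpa [pow_two] using hGsq_int y
    · have hif : IndepFun (G x.1 x.2) (G y.1 y.2) μ := by
        rw [IndepFun_iff_Indep]
        exact indep_of_indep_of_le_right
          (indep_of_indep_of_le_left (hIndepMe x) le_rfl) (hGMe x y h)
      exact hif.integrable_mul (hG_int x) (hG_int y)
  -- integrable majorants
  have hSNGG_int : ∀ x y : Fin n × ℕ,
      Integrable (fun ω => SN ω ^ 2 * |G x.1 x.2 ω * G y.1 y.2 ω|) μ := by
    intro x y
    have hmul : IndepFun (fun ω => SN ω ^ 2) (fun ω => |G x.1 x.2 ω * G y.1 y.2 ω|) μ := by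
      rw [IndepFun_iff_Indep]
      have habs : Measurable[⨆ o ∈ ({none}ᶜ : Set (Option (Fin n × ℕ))), ms o]
          fun ω => |G x.1 x.2 ω * G y.1 y.2 ω| := by
        letI := ⨆ o ∈ ({none}ᶜ : Set (Option (Fin n × ℕ))), ms o
        exact ((hGnone x).mul (hGnone y)).abs
      exact indep_of_indep_of_le_right (indep_of_indep_of_le_left hIndep𝒟
        (hSN_meas.pow_const 2).comap_le) habs.comap_le
    exact hmul.integrable_mul hSN2_int (hGG_int x y).abs
  -- D* measurability
  have hD_meas : ∀ (r : ℝ) (l0 : Fin p), Measurable[F₂ r] fun ω => Dstar r ω l0 := by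
    intro r l0
    have he : (fun ω => Dstar r ω l0) = fun ω => (Real.sqrt n)⁻¹ *
        ∑ i, ∑ j ∈ Finset.range (nJ i ω),
          c i j ω l0 * G i j ω * (if T i j ω ≤ r then (1:ℝ) else 0) := by
      funext ω; rw [hDstar r ω]
    rw [he]
    refine Measurable.const_mul ?_ _
    refine Finset.measurable_sum _ fun i _ => ?_
    refine WBaux.meas_sum_range ((hnJ_meas i).mono (h𝒟F r) le_rfl) fun j => ?_
    have he2 : (fun ω => c i j ω l0 * G i j ω * (if T i j ω ≤ r then (1:ℝ) else 0))
        = fun ω => c i j ω l0 * (G i j ω * (if T i j ω ≤ r then (1:ℝ) else 0)) := by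
      funext ω; ring
    rw [he2]
    exact ((hcl i j l0).mono (h𝒟F r) le_rfl).mul (hXmF (i, j) r)
  have hC_meas𝒟 : ∀ (r : ℝ) (l0 m' : Fin p), Measurable[𝒟] fun ω =>
      ∑ i, ∑ j ∈ Finset.range (nJ i ω),
        c i j ω l0 * c i j ω m' * (if T i j ω ≤ r then (1:ℝ) else 0) := by
    intro r l0 m'
    refine Finset.measurable_sum _ fun i _ => ?_
    refine WBaux.meas_sum_range (hnJ_meas i) fun j => ?_
    exact ((hcl i j l0).mul (hcl i j m')).mul (hind i j r)
  have hQr : ∀ (r : ℝ) (l0 m' : Fin p), (fun ω => Q r ω l0 m') = fun ω =>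
      Dstar r ω l0 * Dstar r ω m' - (n : ℝ)⁻¹ *
        ∑ i, ∑ j ∈ Finset.range (nJ i ω),
          c i j ω l0 * c i j ω m' * (if T i j ω ≤ r then (1:ℝ) else 0) :=
    fun r l0 m' => funext fun ω => hQ r ω l0 m'
  have hQ_measF : ∀ (r : ℝ) (l0 m' : Fin p), Measurable[F₂ r] fun ω => Q r ω l0 m' := by
    intro r l0 m'
    rw [hQr]
    exact ((hD_meas r l0).mul (hD_meas r m')).sub
      (((hC_meas𝒟 r l0 m').mono (h𝒟F r) le_rfl).const_mul _)
  -- integrability of Q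
  have hDD_int : ∀ (r : ℝ) (l0 m' : Fin p),
      Integrable (fun ω => Dstar r ω l0 * Dstar r ω m') μ := by
    intro r l0 m'
    have hmeas : Measurable fun ω => Dstar r ω l0 * Dstar r ω m' :=
      ((hD_meas r l0).mono (hF₂_le r) le_rfl).mul ((hD_meas r m').mono (hF₂_le r) le_rfl)
    refine ⟨hmeas.aestronglyMeasurable, ?_⟩
    rw [hasFiniteIntegral_iff_norm]
    set U : Fin n × ℕ → Ω → ℝ≥0∞ :=
      fun x ω => ENNReal.ofReal ‖c x.1 x.2 ω‖ * (if x.2 < nJ x.1 ω then 1 else 0) with hU_def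
    set B : Fin n × ℕ → Ω → ℝ≥0∞ := fun x ω => ENNReal.ofReal |G x.1 x.2 ω| with hB_def
    have hU𝒟 : ∀ x, Measurable[𝒟] (U x) := by
      intro x
      letI := 𝒟
      exact Measurable.mul (hcn x.1 x.2).ennreal_ofReal
        (Measurable.ite (hnJ_meas x.1 MeasurableSpace.measurableSet_top) measurable_const measurable_const)
    have hU_meas : ∀ x, Measurable (U x) := fun x => (hU𝒟 x).mono h𝒟 le_rfl
    have hB_meas : ∀ x, Measurable (B x) := fun x => ((hGm x).abs).ennreal_ofReal
    have hUB_meas : ∀ x, Measurable (fun ω => U x ω * B x ω) :=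
      fun x => (hU_meas x).mul (hB_meas x)
    set W : Ω → ℝ≥0∞ := fun ω => ∑' x : Fin n × ℕ, U x ω * B x ω with hW_def
    have hW_meas : Measurable W := Measurable.ennreal_tsum hUB_meas
    have hWω : ∀ ω, W ω = ENNReal.ofReal
        (∑ i, ∑ j ∈ Finset.range (nJ i ω), ‖c i j ω‖ * |G i j ω|) := by
      intro ω
      have h2 : W ω = ∑' x : Fin n × ℕ,
          (ENNReal.ofReal (‖c x.1 x.2 ω‖ * |G x.1 x.2 ω|)) *
            (if x.2 < nJ x.1 ω then 1 else 0) := by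
        refine tsum_congr fun x => ?_
        rw [ENNReal.ofReal_mul (norm_nonneg _)]
        ring
      rw [h2, WBaux.tsum_ind_eq (fun i => nJ i ω)
        (fun x => ENNReal.ofReal (‖c x.1 x.2 ω‖ * |G x.1 x.2 ω|))]
      rw [ENNReal.ofReal_sum_of_nonneg (fun i _ => Finset.sum_nonneg fun j _ => by positivity)]
      exact Finset.sum_congr rfl fun i _ =>
        (ENNReal.ofReal_sum_of_nonneg (fun j _ => by positivity)).symm
    have hDW : ∀ (l1 : Fin p) ω, ENNReal.ofReal ‖Dstar r ω l1‖ ≤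
        ENNReal.ofReal (Real.sqrt n)⁻¹ * W ω := by
      intro l1 ω
      have h1 : ‖Dstar r ω l1‖ ≤ (Real.sqrt n)⁻¹ *
          ∑ i, ∑ j ∈ Finset.range (nJ i ω), ‖c i j ω‖ * |G i j ω| := by
        simp only [hDstar r ω]
        rw [Real.norm_eq_abs, abs_mul, abs_inv, abs_of_nonneg (Real.sqrt_nonneg _)]
        refine mul_le_mul_of_nonneg_left ?_ (by positivity)
        calc |∑ i, ∑ j ∈ Finset.range (nJ i ω),
              c i j ω l1 * G i j ω * (if T i j ω ≤ r then (1:ℝ) else 0)|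
            ≤ ∑ i, |∑ j ∈ Finset.range (nJ i ω),
              c i j ω l1 * G i j ω * (if T i j ω ≤ r then (1:ℝ) else 0)| :=
              Finset.abs_sum_le_sum_abs _ _
          _ ≤ ∑ i, ∑ j ∈ Finset.range (nJ i ω),
              |c i j ω l1 * G i j ω * (if T i j ω ≤ r then (1:ℝ) else 0)| :=
              Finset.sum_le_sum fun i _ => Finset.abs_sum_le_sum_abs _ _
          _ ≤ ∑ i, ∑ j ∈ Finset.range (nJ i ω), ‖c i j ω‖ * |G i j ω| := by
              refine Finset.sum_le_sum fun i _ => Finset.sum_le_sum fun j hj => ?_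
              rw [abs_mul, abs_mul]
              have h1 : |c i j ω l1| ≤ ‖c i j ω‖ := by
                rw [← Real.norm_eq_abs]; exact norm_le_pi_norm (c i j ω) l1
              have h3 : |(if T i j ω ≤ r then (1:ℝ) else 0)| ≤ 1 := by split <;> simp
              calc |c i j ω l1| * |G i j ω| * |(if T i j ω ≤ r then (1:ℝ) else 0)|
                  ≤ |c i j ω l1| * |G i j ω| * 1 :=
                    mul_le_mul_of_nonneg_left h3 (by positivity)
                _ = |c i j ω l1| * |G i j ω| := mul_one _
                _ ≤ ‖c i j ω‖ * |G i j ω| :=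
                    mul_le_mul_of_nonneg_right h1 (abs_nonneg _)
      calc ENNReal.ofReal ‖Dstar r ω l1‖
          ≤ ENNReal.ofReal ((Real.sqrt n)⁻¹ *
            ∑ i, ∑ j ∈ Finset.range (nJ i ω), ‖c i j ω‖ * |G i j ω|) :=
            ENNReal.ofReal_le_ofReal h1
        _ = ENNReal.ofReal (Real.sqrt n)⁻¹ * W ω := by
            rw [ENNReal.ofReal_mul (by positivity), hWω ω]
    have hUBindep : ∀ x y : Fin n × ℕ, IndepFun (fun ω => U x ω * U y ω)
        (fun ω => B x ω * B y ω) μ := by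
      intro x y
      have hBB : Measurable[⨆ o ∈ ({none}ᶜ : Set (Option (Fin n × ℕ))), ms o]
          fun ω => B x ω * B y ω := by
        letI := ⨆ o ∈ ({none}ᶜ : Set (Option (Fin n × ℕ))), ms o
        exact ((hGnone x).abs.ennreal_ofReal).mul ((hGnone y).abs.ennreal_ofReal)
      have hUU : Measurable[𝒟] fun ω => U x ω * U y ω := by
        letI := 𝒟
        exact (hU𝒟 x).mul (hU𝒟 y)
      rw [IndepFun_iff_Indep]
      exact indep_of_indep_of_le_right (indep_of_indep_of_le_left hIndep𝒟 hUU.comap_le)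
        hBB.comap_le
    have hB2 : ∀ x y : Fin n × ℕ, ∫⁻ ω, B x ω * B y ω ∂μ ≤ 1 := by
      intro x y
      have hBx : ∀ z : Fin n × ℕ, ∫⁻ ω, B z ω ^ (2:ℝ) ∂μ = 1 := by
        intro z
        have he : ∀ ω, B z ω ^ (2:ℝ) = ENNReal.ofReal (G z.1 z.2 ω ^ 2) := by
          intro ω
          simp only [hB_def]
          rw [ENNReal.ofReal_rpow_of_nonneg (abs_nonneg _) (by norm_num : (0:ℝ) ≤ 2)]
          congr 1
          rw [show (2:ℝ) = ((2:ℕ):ℝ) by norm_num, Real.rpow_natCast, sq_abs]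
        simp only [he]
        rw [← ofReal_integral_eq_lintegral_ofReal (hGsq_int z)
          (ae_of_all _ fun ω => sq_nonneg _), hG_var z.1 z.2, ENNReal.ofReal_one]
      have h := ENNReal.lintegral_mul_le_Lp_mul_Lq μ
        (Real.HolderConjugate.two_two : Real.HolderConjugate 2 2)
        (hB_meas x).aemeasurable (hB_meas y).aemeasurable
      simp only [Pi.mul_apply] at h
      calc ∫⁻ ω, B x ω * B y ω ∂μ
          ≤ (∫⁻ ω, B x ω ^ (2:ℝ) ∂μ) ^ (1/(2:ℝ)) * (∫⁻ ω, B y ω ^ (2:ℝ) ∂μ) ^ (1/(2:ℝ)) := h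
        _ = 1 := by rw [hBx x, hBx y, ENNReal.one_rpow, one_mul]
    have expand : ∀ (V : (Fin n × ℕ) → Ω → ℝ≥0∞) (ω : Ω),
        (∑' x : Fin n × ℕ, V x ω) * (∑' x : Fin n × ℕ, V x ω)
          = ∑' (x : Fin n × ℕ) (y : Fin n × ℕ), V x ω * V y ω := by
      intro V ω
      rw [← ENNReal.tsum_mul_right]
      exact tsum_congr fun x => by rw [← ENNReal.tsum_mul_left]
    have hSU : ∀ ω, (∑' x : Fin n × ℕ, U x ω) = ENNReal.ofReal (SN ω) := by
      intro ω
      simp only [hU_def]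
      rw [WBaux.tsum_ind_eq (fun i => nJ i ω) (fun x => ENNReal.ofReal ‖c x.1 x.2 ω‖)]
      simp only [hSN_def]
      rw [ENNReal.ofReal_sum_of_nonneg (fun i _ => Finset.sum_nonneg fun j _ => norm_nonneg _)]
      exact Finset.sum_congr rfl fun i _ =>
        (ENNReal.ofReal_sum_of_nonneg (fun j _ => norm_nonneg _)).symm
    have key : ∫⁻ ω, W ω * W ω ∂μ ≤ ENNReal.ofReal (∫ ω, SN ω ^ 2 ∂μ) := by
      calc ∫⁻ ω, W ω * W ω ∂μ
          = ∑' (x : Fin n × ℕ) (y : Fin n × ℕ),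
              ∫⁻ ω, (U x ω * B x ω) * (U y ω * B y ω) ∂μ := by
            rw [show (fun ω => W ω * W ω) = fun ω => ∑' (x : Fin n × ℕ) (y : Fin n × ℕ),
              (U x ω * B x ω) * (U y ω * B y ω) from funext fun ω => expand (fun x ω => U x ω * B x ω) ω]
            rw [lintegral_tsum (f := fun (x : Fin n × ℕ) ω => ∑' y : Fin n × ℕ,
              U x ω * B x ω * (U y ω * B y ω)) (fun x => (Measurable.ennreal_tsum fun y =>
              (hUB_meas x).mul (hUB_meas y)).aemeasurable)]
            exact tsum_congr fun x => lintegral_tsum fun y =>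
              ((hUB_meas x).mul (hUB_meas y)).aemeasurable
        _ ≤ ∑' (x : Fin n × ℕ) (y : Fin n × ℕ), ∫⁻ ω, U x ω * U y ω ∂μ := by
            refine Summable.tsum_le_tsum (fun x => Summable.tsum_le_tsum (fun y => ?_)
              ENNReal.summable ENNReal.summable) ENNReal.summable ENNReal.summable
            calc ∫⁻ ω, (U x ω * B x ω) * (U y ω * B y ω) ∂μ
                = ∫⁻ ω, (U x ω * U y ω) * (B x ω * B y ω) ∂μ :=
                  lintegral_congr fun ω => by ring
              _ = (∫⁻ ω, U x ω * U y ω ∂μ) * ∫⁻ ω, B x ω * B y ω ∂μ := by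
                  have h := lintegral_mul_eq_lintegral_mul_lintegral_of_indepFun
                    (μ := μ) ((hU_meas x).mul (hU_meas y)) ((hB_meas x).mul (hB_meas y))
                    (hUBindep x y)
                  simpa [Pi.mul_apply] using h
              _ ≤ (∫⁻ ω, U x ω * U y ω ∂μ) * 1 := mul_le_mul_right (hB2 x y) _
              _ = ∫⁻ ω, U x ω * U y ω ∂μ := mul_one _
        _ = ∫⁻ ω, ENNReal.ofReal (SN ω ^ 2) ∂μ := by
            have he : (fun ω => ENNReal.ofReal (SN ω ^ 2))
                = fun ω => ∑' (x : Fin n × ℕ) (y : Fin n × ℕ), U x ω * U y ω := by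
              funext ω
              calc ENNReal.ofReal (SN ω ^ 2)
                  = ENNReal.ofReal (SN ω) * ENNReal.ofReal (SN ω) := by
                    rw [sq, ENNReal.ofReal_mul (hSN0 ω)]
                _ = (∑' x : Fin n × ℕ, U x ω) * (∑' x : Fin n × ℕ, U x ω) := by rw [hSU ω]
                _ = ∑' (x : Fin n × ℕ) (y : Fin n × ℕ), U x ω * U y ω := expand U ω
            rw [he]
            rw [lintegral_tsum (f := fun (x : Fin n × ℕ) ω => ∑' y : Fin n × ℕ,
              U x ω * U y ω) (fun x => (Measurable.ennreal_tsum fun y =>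
              (hU_meas x).mul (hU_meas y)).aemeasurable)]
            exact tsum_congr fun x => (lintegral_tsum fun y =>
              ((hU_meas x).mul (hU_meas y)).aemeasurable).symm
        _ = ENNReal.ofReal (∫ ω, SN ω ^ 2 ∂μ) :=
            (ofReal_integral_eq_lintegral_ofReal hSN2_int
              (ae_of_all _ fun ω => sq_nonneg _)).symm
    calc ∫⁻ ω, ENNReal.ofReal ‖Dstar r ω l0 * Dstar r ω m'‖ ∂μ
        ≤ ∫⁻ ω, (ENNReal.ofReal (Real.sqrt n)⁻¹)^2 * (W ω * W ω) ∂μ := by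
          refine lintegral_mono fun ω => ?_
          calc ENNReal.ofReal ‖Dstar r ω l0 * Dstar r ω m'‖
              = ENNReal.ofReal ‖Dstar r ω l0‖ * ENNReal.ofReal ‖Dstar r ω m'‖ := by
                rw [norm_mul, ENNReal.ofReal_mul (norm_nonneg _)]
            _ ≤ (ENNReal.ofReal (Real.sqrt n)⁻¹ * W ω) *
                (ENNReal.ofReal (Real.sqrt n)⁻¹ * W ω) := mul_le_mul' (hDW l0 ω) (hDW m' ω)
            _ = (ENNReal.ofReal (Real.sqrt n)⁻¹)^2 * (W ω * W ω) := by ring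
      _ = (ENNReal.ofReal (Real.sqrt n)⁻¹)^2 * ∫⁻ ω, W ω * W ω ∂μ :=
          lintegral_const_mul' _ _ (by
            exact ENNReal.pow_ne_top ENNReal.ofReal_ne_top)
      _ ≤ (ENNReal.ofReal (Real.sqrt n)⁻¹)^2 * ENNReal.ofReal (∫ ω, SN ω ^ 2 ∂μ) :=
          mul_le_mul_right key _
      _ < ⊤ := ENNReal.mul_lt_top
          (ENNReal.pow_lt_top ENNReal.ofReal_lt_top) ENNReal.ofReal_lt_top
  have hC_int : ∀ (r : ℝ) (l0 m' : Fin p), Integrable (fun ω => (n : ℝ)⁻¹ *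
      ∑ i, ∑ j ∈ Finset.range (nJ i ω),
        c i j ω l0 * c i j ω m' * (if T i j ω ≤ r then (1:ℝ) else 0)) μ := by
    intro r l0 m'
    refine Integrable.const_mul ?_ _
    refine Integrable.mono' hSN2_int
      (((hC_meas𝒟 r l0 m').mono h𝒟 le_rfl).aestronglyMeasurable) (ae_of_all _ fun ω => ?_)
    rw [Real.norm_eq_abs]
    calc |∑ i, ∑ j ∈ Finset.range (nJ i ω),
          c i j ω l0 * c i j ω m' * (if T i j ω ≤ r then (1:ℝ) else 0)|
        ≤ ∑ i, |∑ j ∈ Finset.range (nJ i ω),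
          c i j ω l0 * c i j ω m' * (if T i j ω ≤ r then (1:ℝ) else 0)| :=
          Finset.abs_sum_le_sum_abs _ _
      _ ≤ ∑ i, ∑ j ∈ Finset.range (nJ i ω),
          |c i j ω l0 * c i j ω m' * (if T i j ω ≤ r then (1:ℝ) else 0)| :=
          Finset.sum_le_sum fun i _ => Finset.abs_sum_le_sum_abs _ _
      _ ≤ ∑ i, ∑ j ∈ Finset.range (nJ i ω), ‖c i j ω‖ ^ 2 := by
          refine Finset.sum_le_sum fun i _ => Finset.sum_le_sum fun j hj => ?_
          rw [abs_mul, abs_mul, sq]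
          have h1 : |c i j ω l0| ≤ ‖c i j ω‖ := by
            rw [← Real.norm_eq_abs]; exact norm_le_pi_norm (c i j ω) l0
          have h2 : |c i j ω m'| ≤ ‖c i j ω‖ := by
            rw [← Real.norm_eq_abs]; exact norm_le_pi_norm (c i j ω) m'
          have h3 : |(if T i j ω ≤ r then (1:ℝ) else 0)| ≤ 1 := by
            split <;> simp
          calc |c i j ω l0| * |c i j ω m'| * |(if T i j ω ≤ r then (1:ℝ) else 0)|
              ≤ |c i j ω l0| * |c i j ω m'| * 1 := by
                refine mul_le_mul_of_nonneg_left h3 ?_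
                positivity
            _ = |c i j ω l0| * |c i j ω m'| := mul_one _
            _ ≤ ‖c i j ω‖ * ‖c i j ω‖ :=
                mul_le_mul h1 h2 (abs_nonneg _) (norm_nonneg _)
      _ ≤ SN ω ^ 2 := WBaux.sum_sum_sq_le _ _ fun i j => norm_nonneg _
  have hQ_int : ∀ (r : ℝ) (l0 m' : Fin p), Integrable (fun ω => Q r ω l0 m') μ := by
    intro r l0 m'
    rw [hQr]
    exact (hDD_int r l0 m').sub (hC_int r l0 m')
  -- conclusion
  intro l m
  refine ⟨fun t _ => hQ_int t l m, fun t _ => hQ_measF t l m, ?_⟩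
  intro s t hs0 hst htτ
  have hm2 : F₂ s ≤ m0 := hF₂_le s
  haveI : SigmaFinite (μ.trim hm2) := by infer_instance
  have hQint_t := hQ_int t l m
  have hQint_s := hQ_int s l m
  -- the time-s generator family
  set ms' : Option (Fin n × ℕ) → MeasurableSpace Ω := fun o => o.elim 𝒟 fun x =>
    MeasurableSpace.comap (fun ω => G x.1 x.2 ω * (if T x.1 x.2 ω ≤ s then (1:ℝ) else 0))
      inferInstance with hms'_def
  have hms'_le : ∀ o, ms' o ≤ m0 := by
    rintro (_ | x)
    · exact h𝒟
    · exact Measurable.comap_le ((hXmF x s).mono (hF₂_le s) le_rfl)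
  have hms'Me : ∀ (x y : Fin n × ℕ), y ≠ x → ms' (some y) ≤ Me x := by
    intro x y hyx
    refine Measurable.comap_le ?_
    letI := Me x
    exact (hGMe' x y hyx).mul
      (Measurable.ite (h𝒟Me x _ (hTle y.1 y.2 s)) measurable_const measurable_const)
  have hgen : F₂ s = MeasurableSpace.generateFrom
      (piiUnionInter (fun o => {sa | MeasurableSet[ms' o] sa}) univ) := by
    rw [generateFrom_piiUnionInter_measurableSet ms' univ]
    rw [hF₂ s]
    rw [iSup_univ, iSup_option ms']
    rfl
  have hpi : IsPiSystem (piiUnionInter (fun o => {sa | MeasurableSet[ms' o] sa}) univ) :=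
    isPiSystem_piiUnionInter _ (fun o => @MeasurableSpace.isPiSystem_measurableSet Ω (ms' o)) _
  -- the partition by the number of jumps
  set Ak : (Fin n → ℕ) → Set Ω := fun k => {ω | ∀ i, nJ i ω = k i} with hAk_def
  have hAk_meas𝒟 : ∀ k, MeasurableSet[𝒟] (Ak k) := by
    intro k
    have hAkeq : Ak k = ⋂ i, (nJ i) ⁻¹' {k i} := by
      ext ω; simp [hAk_def, Set.mem_iInter]
    rw [hAkeq]
    exact MeasurableSet.iInter fun i => hnJ_meas i (measurableSet_singleton _)
  have hAk_meas : ∀ k, MeasurableSet (Ak k) := fun k => h𝒟 _ (hAk_meas𝒟 k)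
  have hAk_cover : ∀ ω : Ω, ω ∈ Ak (fun i => nJ i ω) := fun ω i => rfl
  have hAk_disj : Pairwise (Function.onFun Disjoint Ak) := by
    intro k k' hkk'
    rw [Function.onFun, Set.disjoint_left]
    rintro ω hω hω'
    exact hkk' (funext fun i => ((hω i).symm.trans (hω' i)))
  -- sums over the fixed finset
  have hsumS : ∀ (k : Fin n → ℕ) (F : Fin n × ℕ → ℝ),
      ∑ x ∈ (Finset.univ ×ˢ Finset.range (Finset.univ.sup k)).filter
        (fun x : Fin n × ℕ => x.2 < k x.1), F x
        = ∑ i, ∑ j ∈ Finset.range (k i), F (i, j) := by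
    intro k F
    rw [Finset.sum_filter, Finset.sum_product]
    exact Finset.sum_congr rfl fun i _ =>
      WBaux.sum_range_ite _ _ (Finset.le_sup (Finset.mem_univ i)) _
  have hr0 : (Real.sqrt n)⁻¹ * (Real.sqrt n)⁻¹ = (n:ℝ)⁻¹ := by
    rw [← mul_inv, Real.mul_self_sqrt (Nat.cast_nonneg n)]
  -- indicator facts
  have hii : ∀ (P : Prop) [Decidable P], (if P then (1:ℝ) else 0) * (if P then (1:ℝ) else 0)
      = if P then (1:ℝ) else 0 := by
    intro P _; split <;> norm_num
  -- THE MAIN PER-PIECE COMPUTATION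
  have hpiece : ∀ (K : Finset (Option (Fin n × ℕ))) (f : Option (Fin n × ℕ) → Set Ω),
      (∀ o ∈ K, MeasurableSet[ms' o] (f o)) → ∀ (k : Fin n → ℕ),
      ∫ x in ((⋂ o ∈ K, f o) ∩ Ak k), Q s x l m ∂μ
        = ∫ x in ((⋂ o ∈ K, f o) ∩ Ak k), Q t x l m ∂μ := by
    intro K f hf k
    set A : Set Ω := ⋂ o ∈ K, f o with hA_def
    set Bset : Set Ω := A ∩ Ak k with hBset_def
    have hAmeas : MeasurableSet A :=
      Finset.measurableSet_biInter K (fun o ho => hms'_le o _ (hf o ho))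
    have hBmeas : MeasurableSet Bset := hAmeas.inter (hAk_meas k)
    set S : Finset (Fin n × ℕ) := (Finset.univ ×ˢ Finset.range (Finset.univ.sup k)).filter
      (fun x : Fin n × ℕ => x.2 < k x.1) with hS_def
    have hxS : ∀ x : Fin n × ℕ, x ∈ S → x.2 < k x.1 := by
      intro x hx
      simp only [hS_def, Finset.mem_filter] at hx
      exact hx.2
    set χ : Ω → ℝ := fun ω => if ω ∈ Bset then 1 else 0 with hχ_def
    have hχ_meas : Measurable χ := Measurable.ite hBmeas measurable_const measurable_const
    have hχ_split : ∀ ω, χ ω = (if ω ∈ A then (1:ℝ) else 0) * (if ω ∈ Ak k then (1:ℝ) else 0) := by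
      intro ω
      by_cases h1 : ω ∈ A <;> by_cases h2 : ω ∈ Ak k <;>
        simp [hχ_def, hBset_def, Set.mem_inter_iff, h1, h2]
    -- set-integral as a full-space integral of the fixed-finset expression
    have hsetI : ∀ (r : ℝ), ∫ x in Bset, Q r x l m ∂μ
        = ∫ ω, χ ω * ((n:ℝ)⁻¹ * ((∑ x ∈ S, ∑ y ∈ S,
              c x.1 x.2 ω l * c y.1 y.2 ω m *
              ((G x.1 x.2 ω * (if T x.1 x.2 ω ≤ r then (1:ℝ) else 0)) *
               (G y.1 y.2 ω * (if T y.1 y.2 ω ≤ r then (1:ℝ) else 0))))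
            - ∑ x ∈ S, c x.1 x.2 ω l * c x.1 x.2 ω m *
                (if T x.1 x.2 ω ≤ r then (1:ℝ) else 0))) ∂μ := by
      intro r
      rw [← integral_indicator hBmeas]
      refine integral_congr_ae (ae_of_all _ fun ω => ?_)
      dsimp only
      rw [Set.indicator_apply]
      by_cases hω : ω ∈ Bset
      · have hχ1 : χ ω = 1 := by rw [hχ_def]; exact if_pos hω
        rw [if_pos hω, hχ1, one_mul]
        have hωk : ∀ i, nJ i ω = k i := hω.2
        rw [hQ r ω l m]
        simp only [hDstar r ω, hωk]
        have hPl : ∀ (l1 : Fin p),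
            (∑ x ∈ S, c x.1 x.2 ω l1 *
              (G x.1 x.2 ω * (if T x.1 x.2 ω ≤ r then (1:ℝ) else 0)))
            = ∑ i, ∑ j ∈ Finset.range (k i),
                c i j ω l1 * G i j ω * (if T i j ω ≤ r then (1:ℝ) else 0) := by
          intro l1
          rw [hsumS k]
          exact Finset.sum_congr rfl fun i _ => Finset.sum_congr rfl fun j _ => by ring
        have hC : (∑ x ∈ S, c x.1 x.2 ω l * c x.1 x.2 ω m *
              (if T x.1 x.2 ω ≤ r then (1:ℝ) else 0))
            = ∑ i, ∑ j ∈ Finset.range (k i),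
                c i j ω l * c i j ω m * (if T i j ω ≤ r then (1:ℝ) else 0) := hsumS k _
        have hDD : (∑ x ∈ S, ∑ y ∈ S,
              c x.1 x.2 ω l * c y.1 y.2 ω m *
              ((G x.1 x.2 ω * (if T x.1 x.2 ω ≤ r then (1:ℝ) else 0)) *
               (G y.1 y.2 ω * (if T y.1 y.2 ω ≤ r then (1:ℝ) else 0))))
            = (∑ x ∈ S, c x.1 x.2 ω l *
                (G x.1 x.2 ω * (if T x.1 x.2 ω ≤ r then (1:ℝ) else 0))) *
              (∑ y ∈ S, c y.1 y.2 ω m *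
                (G y.1 y.2 ω * (if T y.1 y.2 ω ≤ r then (1:ℝ) else 0))) := by
          rw [Finset.sum_mul_sum]
          exact Finset.sum_congr rfl fun x _ => Finset.sum_congr rfl fun y _ => by ring
        rw [hDD, hPl l, hPl m, ← hC]
        rw [show ((Real.sqrt n)⁻¹ * ∑ i, ∑ j ∈ Finset.range (k i),
              c i j ω l * G i j ω * (if T i j ω ≤ r then (1:ℝ) else 0)) *
            ((Real.sqrt n)⁻¹ * ∑ i, ∑ j ∈ Finset.range (k i),
              c i j ω m * G i j ω * (if T i j ω ≤ r then (1:ℝ) else 0))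
            = ((Real.sqrt n)⁻¹ * (Real.sqrt n)⁻¹) *
              ((∑ i, ∑ j ∈ Finset.range (k i),
                c i j ω l * G i j ω * (if T i j ω ≤ r then (1:ℝ) else 0)) *
               (∑ i, ∑ j ∈ Finset.range (k i),
                c i j ω m * G i j ω * (if T i j ω ≤ r then (1:ℝ) else 0))) from by ring,
          hr0]
        ring
      · rw [if_neg hω]
        have hχ0 : χ ω = 0 := by rw [hχ_def]; exact if_neg hω
        rw [hχ0, zero_mul]
    -- pointwise bound and integrability for the canonical terms
    have hptb : ∀ (x y : Fin n × ℕ), x ∈ S → y ∈ S → ∀ (w1 w2 : Ω → ℝ) (ω : Ω),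
        |w1 ω| ≤ |G x.1 x.2 ω| → |w2 ω| ≤ |G y.1 y.2 ω| →
        |χ ω * (c x.1 x.2 ω l * c y.1 y.2 ω m * (w1 ω * w2 ω))|
          ≤ SN ω ^ 2 * |G x.1 x.2 ω * G y.1 y.2 ω| := by
      intro x y hx hy w1 w2 ω h1 h2
      by_cases hω : ω ∈ Bset
      · have hχ1 : χ ω = 1 := by rw [hχ_def]; exact if_pos hω
        have hωk : ∀ i, nJ i ω = k i := hω.2
        have hcx : |c x.1 x.2 ω l| ≤ SN ω := hcSN x l ω (by rw [hωk x.1]; exact hxS x hx)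
        have hcy : |c y.1 y.2 ω m| ≤ SN ω := hcSN y m ω (by rw [hωk y.1]; exact hxS y hy)
        rw [hχ1, one_mul, abs_mul, abs_mul, abs_mul, abs_mul, sq]
        calc |c x.1 x.2 ω l| * |c y.1 y.2 ω m| * (|w1 ω| * |w2 ω|)
            ≤ (SN ω * SN ω) * (|G x.1 x.2 ω| * |G y.1 y.2 ω|) := by
              refine mul_le_mul (mul_le_mul hcx hcy (abs_nonneg _) (hSN0 ω)) ?_
                (by positivity) (by positivity)
              exact mul_le_mul h1 h2 (abs_nonneg _) (abs_nonneg _)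
          _ = SN ω * SN ω * (|G x.1 x.2 ω| * |G y.1 y.2 ω|) := rfl
      · have hχ0 : χ ω = 0 := by rw [hχ_def]; exact if_neg hω
        rw [hχ0, zero_mul, abs_zero]
        positivity
    have hint_term : ∀ (x y : Fin n × ℕ), x ∈ S → y ∈ S → ∀ (w1 w2 : Ω → ℝ),
        Measurable w1 → Measurable w2 →
        (∀ ω, |w1 ω| ≤ |G x.1 x.2 ω|) → (∀ ω, |w2 ω| ≤ |G y.1 y.2 ω|) →
        Integrable (fun ω => χ ω * (c x.1 x.2 ω l * c y.1 y.2 ω m * (w1 ω * w2 ω))) μ := by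
      intro x y hx hy w1 w2 hw1 hw2 hb1 hb2
      refine Integrable.mono' (hSNGG_int x y) ?_ (ae_of_all _ fun ω => ?_)
      · exact (hχ_meas.mul ((((hcl x.1 x.2 l).mono h𝒟 le_rfl).mul
          ((hcl y.1 y.2 m).mono h𝒟 le_rfl)).mul (hw1.mul hw2))).aestronglyMeasurable
      · rw [Real.norm_eq_abs]
        exact hptb x y hx hy w1 w2 ω (hb1 ω) (hb2 ω)
    have hint_J : ∀ (x : Fin n × ℕ), x ∈ S → ∀ (w : Ω → ℝ),
        Measurable w → (∀ ω, |w ω| ≤ 1) →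
        Integrable (fun ω => χ ω * (c x.1 x.2 ω l * c x.1 x.2 ω m * w ω)) μ := by
      intro x hx w hw hb
      refine Integrable.mono' hSN2_int ?_ (ae_of_all _ fun ω => ?_)
      · exact (hχ_meas.mul ((((hcl x.1 x.2 l).mono h𝒟 le_rfl).mul
          ((hcl x.1 x.2 m).mono h𝒟 le_rfl)).mul hw)).aestronglyMeasurable
      · rw [Real.norm_eq_abs]
        by_cases hω : ω ∈ Bset
        · have hχ1 : χ ω = 1 := by rw [hχ_def]; exact if_pos hω
          have hωk : ∀ i, nJ i ω = k i := hω.2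
          have hcx : |c x.1 x.2 ω l| ≤ SN ω := hcSN x l ω (by rw [hωk x.1]; exact hxS x hx)
          have hcy : |c x.1 x.2 ω m| ≤ SN ω := hcSN x m ω (by rw [hωk x.1]; exact hxS x hx)
          rw [hχ1, one_mul, abs_mul, abs_mul, sq]
          calc |c x.1 x.2 ω l| * |c x.1 x.2 ω m| * |w ω|
              ≤ SN ω * SN ω * 1 := by
                refine mul_le_mul (mul_le_mul hcx hcy (abs_nonneg _) (hSN0 ω)) (hb ω)
                  (abs_nonneg _) (by positivity)
            _ = SN ω * SN ω := mul_one _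
        · have hχ0 : χ ω = 0 := by rw [hχ_def]; exact if_neg hω
          rw [hχ0, zero_mul, abs_zero]
          positivity
    -- bounds on the basic factors
    have habsX : ∀ (x : Fin n × ℕ) (r : ℝ) (ω : Ω),
        |G x.1 x.2 ω * (if T x.1 x.2 ω ≤ r then (1:ℝ) else 0)| ≤ |G x.1 x.2 ω| := by
      intro x r ω
      rw [abs_mul]
      calc |G x.1 x.2 ω| * |if T x.1 x.2 ω ≤ r then (1:ℝ) else 0|
          ≤ |G x.1 x.2 ω| * 1 :=
            mul_le_mul_of_nonneg_left (by split <;> norm_num) (abs_nonneg _)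
        _ = _ := mul_one _
    have habsd : ∀ (x : Fin n × ℕ) (ω : Ω),
        |G x.1 x.2 ω * ((if T x.1 x.2 ω ≤ t then (1:ℝ) else 0)
          - (if T x.1 x.2 ω ≤ s then (1:ℝ) else 0))| ≤ |G x.1 x.2 ω| := by
      intro x ω
      rw [abs_mul]
      have : |(if T x.1 x.2 ω ≤ t then (1:ℝ) else 0)
          - (if T x.1 x.2 ω ≤ s then (1:ℝ) else 0)| ≤ 1 := by
        by_cases h1 : T x.1 x.2 ω ≤ s
        · rw [if_pos h1, if_pos (h1.trans hst)]; norm_num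
        · by_cases h2 : T x.1 x.2 ω ≤ t <;> simp [h1, h2]
      calc |G x.1 x.2 ω| * |_| ≤ |G x.1 x.2 ω| * 1 :=
            mul_le_mul_of_nonneg_left this (abs_nonneg _)
        _ = _ := mul_one _
    -- the replacement function
    have hrepl : ∀ x : Fin n × ℕ, ∃ χ' : Ω → ℝ, Measurable[Me x] χ' ∧
        ∀ ω, ¬ T x.1 x.2 ω ≤ s → χ' ω = (if ω ∈ A then (1:ℝ) else 0) := by
      intro x
      by_cases hK : some x ∈ K
      · obtain ⟨Bx, hBx_meas, hBx_eq⟩ := MeasurableSpace.measurableSet_comap.mp (hf (some x) hK)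
        refine ⟨fun ω => (if (0:ℝ) ∈ Bx then (1:ℝ) else 0) *
          (if ω ∈ ⋂ o ∈ K.erase (some x), f o then (1:ℝ) else 0), ?_, ?_⟩
        · letI := Me x
          refine Measurable.const_mul (Measurable.ite ?_ measurable_const measurable_const) _
          refine Finset.measurableSet_biInter _ fun o ho => ?_
          have hoK := Finset.mem_of_mem_erase ho
          have hox := Finset.ne_of_mem_erase ho
          match o with
          | none => exact h𝒟Me x _ (hf none hoK)
          | some y =>
            have hyx : y ≠ x := fun he => hox (by rw [he])
            exact hms'Me x y hyx _ (hf (some y) hoK)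
        · intro ω hTs
          have hx0 : G x.1 x.2 ω * (if T x.1 x.2 ω ≤ s then (1:ℝ) else 0) = 0 := by
            simp [if_neg hTs]
          have hωfx : (ω ∈ f (some x)) ↔ ((0:ℝ) ∈ Bx) := by
            rw [← hBx_eq, Set.mem_preimage]
            exact iff_of_eq (congrArg (· ∈ Bx) hx0)
          have hA_split : (ω ∈ A) ↔ (ω ∈ f (some x) ∧ ω ∈ ⋂ o ∈ K.erase (some x), f o) := by
            rw [hA_def]
            constructor
            · intro h
              exact ⟨Set.mem_iInter₂.mp h _ hK, Set.mem_iInter₂.mpr fun o ho =>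
                Set.mem_iInter₂.mp h o (Finset.mem_of_mem_erase ho)⟩
            · rintro ⟨h1, h2⟩
              refine Set.mem_iInter₂.mpr fun o ho => ?_
              by_cases he : o = some x
              · rw [he]; exact h1
              · exact Set.mem_iInter₂.mp h2 o (Finset.mem_erase.mpr ⟨he, ho⟩)
          by_cases h2 : ω ∈ ⋂ o ∈ K.erase (some x), f o <;> by_cases h1 : (0:ℝ) ∈ Bx <;>
            simp [hA_split, hωfx, h1, h2]
      · refine ⟨fun ω => if ω ∈ A then (1:ℝ) else 0, ?_, fun ω _ => rfl⟩
        letI := Me x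
        refine Measurable.ite ?_ measurable_const measurable_const
        rw [hA_def]
        refine Finset.measurableSet_biInter _ fun o ho => ?_
        match o with
        | none => exact h𝒟Me x _ (hf none ho)
        | some y =>
          have hyx : y ≠ x := fun he => hK (by rw [← he]; exact ho)
          exact hms'Me x y hyx _ (hf (some y) ho)
    -- d * indicator-of-A can be replaced by d * χ'
    have hdχA : ∀ (x : Fin n × ℕ) (χ' : Ω → ℝ),
        (∀ ω, ¬ T x.1 x.2 ω ≤ s → χ' ω = (if ω ∈ A then (1:ℝ) else 0)) →
        ∀ ω, ((if T x.1 x.2 ω ≤ t then (1:ℝ) else 0)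
            - (if T x.1 x.2 ω ≤ s then (1:ℝ) else 0)) * (if ω ∈ A then (1:ℝ) else 0)
          = ((if T x.1 x.2 ω ≤ t then (1:ℝ) else 0)
            - (if T x.1 x.2 ω ≤ s then (1:ℝ) else 0)) * χ' ω := by
      intro x χ' hχ' ω
      by_cases hT : T x.1 x.2 ω ≤ s
      · rw [if_pos hT, if_pos (hT.trans hst)]
        norm_num
      · rw [hχ' ω hT]
    -- zero lemma
    have hzero : ∀ (x : Fin n × ℕ) (ψ : Ω → ℝ), Measurable[Me x] ψ →
        ∫ ω, (G x.1 x.2 ω * ((if T x.1 x.2 ω ≤ t then (1:ℝ) else 0)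
            - (if T x.1 x.2 ω ≤ s then (1:ℝ) else 0))) *
          ((if ω ∈ A then (1:ℝ) else 0) * ψ ω) ∂μ = 0 := by
      intro x ψ hψ
      obtain ⟨χ', hχ'm, hχ'eq⟩ := hrepl x
      have hpt : ∀ ω, (G x.1 x.2 ω * ((if T x.1 x.2 ω ≤ t then (1:ℝ) else 0)
            - (if T x.1 x.2 ω ≤ s then (1:ℝ) else 0))) *
          ((if ω ∈ A then (1:ℝ) else 0) * ψ ω)
          = G x.1 x.2 ω * (((if T x.1 x.2 ω ≤ t then (1:ℝ) else 0)
            - (if T x.1 x.2 ω ≤ s then (1:ℝ) else 0)) * χ' ω * ψ ω) := by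
        intro ω
        have h := hdχA x χ' hχ'eq ω
        calc (G x.1 x.2 ω * ((if T x.1 x.2 ω ≤ t then (1:ℝ) else 0)
              - (if T x.1 x.2 ω ≤ s then (1:ℝ) else 0))) *
            ((if ω ∈ A then (1:ℝ) else 0) * ψ ω)
            = G x.1 x.2 ω * ((((if T x.1 x.2 ω ≤ t then (1:ℝ) else 0)
              - (if T x.1 x.2 ω ≤ s then (1:ℝ) else 0)) *
                (if ω ∈ A then (1:ℝ) else 0)) * ψ ω) := by ring
          _ = G x.1 x.2 ω * ((((if T x.1 x.2 ω ≤ t then (1:ℝ) else 0)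
              - (if T x.1 x.2 ω ≤ s then (1:ℝ) else 0)) * χ' ω) * ψ ω) := by rw [h]
          _ = _ := by ring
      rw [show (fun ω => (G x.1 x.2 ω * ((if T x.1 x.2 ω ≤ t then (1:ℝ) else 0)
            - (if T x.1 x.2 ω ≤ s then (1:ℝ) else 0))) *
          ((if ω ∈ A then (1:ℝ) else 0) * ψ ω))
          = fun ω => G x.1 x.2 ω * (((if T x.1 x.2 ω ≤ t then (1:ℝ) else 0)
            - (if T x.1 x.2 ω ≤ s then (1:ℝ) else 0)) * χ' ω * ψ ω)
          from funext hpt]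
      have hH : Measurable[Me x] fun ω => ((if T x.1 x.2 ω ≤ t then (1:ℝ) else 0)
          - (if T x.1 x.2 ω ≤ s then (1:ℝ) else 0)) * χ' ω * ψ ω := by
        letI := Me x
        have h1 : Measurable[Me x] fun ω => (if T x.1 x.2 ω ≤ t then (1:ℝ) else 0) :=
          (hind x.1 x.2 t).mono (h𝒟Me x) le_rfl
        have h2 : Measurable[Me x] fun ω => (if T x.1 x.2 ω ≤ s then (1:ℝ) else 0) :=
          (hind x.1 x.2 s).mono (h𝒟Me x) le_rfl
        exact ((h1.sub h2).mul hχ'm).mul hψ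
      rw [hcore x _ _ (Measurable.of_comap_le le_rfl) hH, hG_mean x.1 x.2, zero_mul]
    -- diagonal lemma
    have hdiag : ∀ (x : Fin n × ℕ) (ψ : Ω → ℝ), Measurable[Me x] ψ →
        ∫ ω, (G x.1 x.2 ω * G x.1 x.2 ω * ((if T x.1 x.2 ω ≤ t then (1:ℝ) else 0)
            - (if T x.1 x.2 ω ≤ s then (1:ℝ) else 0))) *
          ((if ω ∈ A then (1:ℝ) else 0) * ψ ω) ∂μ
        = ∫ ω, ((if T x.1 x.2 ω ≤ t then (1:ℝ) else 0)
            - (if T x.1 x.2 ω ≤ s then (1:ℝ) else 0)) *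
          ((if ω ∈ A then (1:ℝ) else 0) * ψ ω) ∂μ := by
      intro x ψ hψ
      obtain ⟨χ', hχ'm, hχ'eq⟩ := hrepl x
      have hH : Measurable[Me x] fun ω => ((if T x.1 x.2 ω ≤ t then (1:ℝ) else 0)
          - (if T x.1 x.2 ω ≤ s then (1:ℝ) else 0)) * χ' ω * ψ ω := by
        letI := Me x
        have h1 : Measurable[Me x] fun ω => (if T x.1 x.2 ω ≤ t then (1:ℝ) else 0) :=
          (hind x.1 x.2 t).mono (h𝒟Me x) le_rfl
        have h2 : Measurable[Me x] fun ω => (if T x.1 x.2 ω ≤ s then (1:ℝ) else 0) :=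
          (hind x.1 x.2 s).mono (h𝒟Me x) le_rfl
        exact ((h1.sub h2).mul hχ'm).mul hψ
      have hL : ∫ ω, (G x.1 x.2 ω * G x.1 x.2 ω * ((if T x.1 x.2 ω ≤ t then (1:ℝ) else 0)
            - (if T x.1 x.2 ω ≤ s then (1:ℝ) else 0))) *
          ((if ω ∈ A then (1:ℝ) else 0) * ψ ω) ∂μ
          = ∫ ω, ((if T x.1 x.2 ω ≤ t then (1:ℝ) else 0)
            - (if T x.1 x.2 ω ≤ s then (1:ℝ) else 0)) * χ' ω * ψ ω ∂μ := by
        rw [show (fun ω => (G x.1 x.2 ω * G x.1 x.2 ω * ((if T x.1 x.2 ω ≤ t then (1:ℝ) else 0)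
            - (if T x.1 x.2 ω ≤ s then (1:ℝ) else 0))) *
            ((if ω ∈ A then (1:ℝ) else 0) * ψ ω))
            = fun ω => (G x.1 x.2 ω * G x.1 x.2 ω) * (((if T x.1 x.2 ω ≤ t then (1:ℝ) else 0)
            - (if T x.1 x.2 ω ≤ s then (1:ℝ) else 0)) * χ' ω * ψ ω) from funext fun ω => by
          have h := hdχA x χ' hχ'eq ω
          calc (G x.1 x.2 ω * G x.1 x.2 ω * ((if T x.1 x.2 ω ≤ t then (1:ℝ) else 0)
              - (if T x.1 x.2 ω ≤ s then (1:ℝ) else 0))) *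
              ((if ω ∈ A then (1:ℝ) else 0) * ψ ω)
              = (G x.1 x.2 ω * G x.1 x.2 ω) * ((((if T x.1 x.2 ω ≤ t then (1:ℝ) else 0)
              - (if T x.1 x.2 ω ≤ s then (1:ℝ) else 0)) *
                (if ω ∈ A then (1:ℝ) else 0)) * ψ ω) := by ring
            _ = (G x.1 x.2 ω * G x.1 x.2 ω) * ((((if T x.1 x.2 ω ≤ t then (1:ℝ) else 0)
              - (if T x.1 x.2 ω ≤ s then (1:ℝ) else 0)) * χ' ω) * ψ ω) := by rw [h]
            _ = _ := by ring]
        rw [hcore x (fun ω => G x.1 x.2 ω * G x.1 x.2 ω) _ ((Measurable.of_comap_le le_rfl).mul (Measurable.of_comap_le le_rfl)) hH]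
        rw [show (∫ ω, G x.1 x.2 ω * G x.1 x.2 ω ∂μ) = 1 from by
          rw [show (fun ω => G x.1 x.2 ω * G x.1 x.2 ω) = fun ω => G x.1 x.2 ω ^ 2 from
            funext fun ω => by ring]
          exact hG_var x.1 x.2, one_mul]
      have hR : ∫ ω, ((if T x.1 x.2 ω ≤ t then (1:ℝ) else 0)
            - (if T x.1 x.2 ω ≤ s then (1:ℝ) else 0)) *
          ((if ω ∈ A then (1:ℝ) else 0) * ψ ω) ∂μ
          = ∫ ω, ((if T x.1 x.2 ω ≤ t then (1:ℝ) else 0)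
            - (if T x.1 x.2 ω ≤ s then (1:ℝ) else 0)) * χ' ω * ψ ω ∂μ := by
        refine integral_congr_ae (ae_of_all _ fun ω => ?_)
        dsimp only
        have h := hdχA x χ' hχ'eq ω
        calc ((if T x.1 x.2 ω ≤ t then (1:ℝ) else 0)
            - (if T x.1 x.2 ω ≤ s then (1:ℝ) else 0)) *
            ((if ω ∈ A then (1:ℝ) else 0) * ψ ω)
            = (((if T x.1 x.2 ω ≤ t then (1:ℝ) else 0)
            - (if T x.1 x.2 ω ≤ s then (1:ℝ) else 0)) *
              (if ω ∈ A then (1:ℝ) else 0)) * ψ ω := by ring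
          _ = (((if T x.1 x.2 ω ≤ t then (1:ℝ) else 0)
            - (if T x.1 x.2 ω ≤ s then (1:ℝ) else 0)) * χ' ω) * ψ ω := by rw [h]
      rw [hL, hR]
    -- measurability of the generator factors in m0
    have hXm0 : ∀ (x : Fin n × ℕ) (r : ℝ),
        Measurable fun ω => G x.1 x.2 ω * (if T x.1 x.2 ω ≤ r then (1:ℝ) else 0) :=
      fun x r => (hXmF x r).mono (hF₂_le r) le_rfl
    have hdm0 : ∀ (x : Fin n × ℕ), Measurable fun ω =>
        G x.1 x.2 ω * ((if T x.1 x.2 ω ≤ t then (1:ℝ) else 0)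
          - (if T x.1 x.2 ω ≤ s then (1:ℝ) else 0)) :=
      fun x => (hGm x).mul (((hind x.1 x.2 t).mono h𝒟 le_rfl).sub
        ((hind x.1 x.2 s).mono h𝒟 le_rfl))
    have hIint : ∀ (r : ℝ) (x y : Fin n × ℕ), x ∈ S → y ∈ S →
        Integrable (fun ω => χ ω * (c x.1 x.2 ω l * c y.1 y.2 ω m * ((G x.1 x.2 ω * (if T x.1 x.2 ω ≤ r then (1:ℝ) else 0)) * (G y.1 y.2 ω * (if T y.1 y.2 ω ≤ r then (1:ℝ) else 0))))) μ :=
      fun r x y hx hy => hint_term x y hx hy _ _ (hXm0 x r) (hXm0 y r)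
        (fun ω => habsX x r ω) (fun ω => habsX y r ω)
    have hJint : ∀ (r : ℝ) (x : Fin n × ℕ), x ∈ S →
        Integrable (fun ω => χ ω * (c x.1 x.2 ω l * c x.1 x.2 ω m * (if T x.1 x.2 ω ≤ r then (1:ℝ) else 0))) μ :=
      fun r x hx => hint_J x hx _ ((hind x.1 x.2 r).mono h𝒟 le_rfl)
        (fun ω => by split <;> norm_num)
    -- splitting the integral into finitely many terms
    have hsplit : ∀ r : ℝ, ∫ ω, χ ω * ((n:ℝ)⁻¹ * ((∑ x ∈ S, ∑ y ∈ S,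
            c x.1 x.2 ω l * c y.1 y.2 ω m * ((G x.1 x.2 ω * (if T x.1 x.2 ω ≤ r then (1:ℝ) else 0)) * (G y.1 y.2 ω * (if T y.1 y.2 ω ≤ r then (1:ℝ) else 0))))
          - ∑ x ∈ S, c x.1 x.2 ω l * c x.1 x.2 ω m *
              (if T x.1 x.2 ω ≤ r then (1:ℝ) else 0))) ∂μ
        = (n:ℝ)⁻¹ * ((∑ x ∈ S, ∑ y ∈ S, ∫ ω, χ ω * (c x.1 x.2 ω l * c y.1 y.2 ω m * ((G x.1 x.2 ω * (if T x.1 x.2 ω ≤ r then (1:ℝ) else 0)) * (G y.1 y.2 ω * (if T y.1 y.2 ω ≤ r then (1:ℝ) else 0)))) ∂μ) - ∑ x ∈ S, ∫ ω, χ ω * (c x.1 x.2 ω l * c x.1 x.2 ω m * (if T x.1 x.2 ω ≤ r then (1:ℝ) else 0)) ∂μ) := by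
      intro r
      have h1 : (fun ω => χ ω * ((n:ℝ)⁻¹ * ((∑ x ∈ S, ∑ y ∈ S,
            c x.1 x.2 ω l * c y.1 y.2 ω m * ((G x.1 x.2 ω * (if T x.1 x.2 ω ≤ r then (1:ℝ) else 0)) * (G y.1 y.2 ω * (if T y.1 y.2 ω ≤ r then (1:ℝ) else 0))))
          - ∑ x ∈ S, c x.1 x.2 ω l * c x.1 x.2 ω m *
              (if T x.1 x.2 ω ≤ r then (1:ℝ) else 0))))
          = fun ω => (n:ℝ)⁻¹ * ((∑ x ∈ S, ∑ y ∈ S, χ ω * (c x.1 x.2 ω l * c y.1 y.2 ω m * ((G x.1 x.2 ω * (if T x.1 x.2 ω ≤ r then (1:ℝ) else 0)) * (G y.1 y.2 ω * (if T y.1 y.2 ω ≤ r then (1:ℝ) else 0)))))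
            - ∑ x ∈ S, χ ω * (c x.1 x.2 ω l * c x.1 x.2 ω m * (if T x.1 x.2 ω ≤ r then (1:ℝ) else 0))) := by
        funext ω
        have hP : χ ω * (∑ x ∈ S, ∑ y ∈ S,
            c x.1 x.2 ω l * c y.1 y.2 ω m * ((G x.1 x.2 ω * (if T x.1 x.2 ω ≤ r then (1:ℝ) else 0)) * (G y.1 y.2 ω * (if T y.1 y.2 ω ≤ r then (1:ℝ) else 0))))
            = ∑ x ∈ S, ∑ y ∈ S, χ ω * (c x.1 x.2 ω l * c y.1 y.2 ω m * ((G x.1 x.2 ω * (if T x.1 x.2 ω ≤ r then (1:ℝ) else 0)) * (G y.1 y.2 ω * (if T y.1 y.2 ω ≤ r then (1:ℝ) else 0)))) := by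
          rw [Finset.mul_sum]
          exact Finset.sum_congr rfl fun x _ => Finset.mul_sum _ _ _
        have hCc : χ ω * (∑ x ∈ S, c x.1 x.2 ω l * c x.1 x.2 ω m *
              (if T x.1 x.2 ω ≤ r then (1:ℝ) else 0))
            = ∑ x ∈ S, χ ω * (c x.1 x.2 ω l * c x.1 x.2 ω m * (if T x.1 x.2 ω ≤ r then (1:ℝ) else 0)) := Finset.mul_sum _ _ _
        rw [← hP, ← hCc]
        ring
      rw [h1, integral_const_mul]
      congr 1
      rw [integral_sub (integrable_finset_sum S fun x hx => integrable_finset_sum S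
          fun y hy => hIint r x y hx hy)
        (integrable_finset_sum S fun x hx => hJint r x hx)]
      congr 1
      · rw [integral_finset_sum S fun x hx => integrable_finset_sum S
          fun y hy => hIint r x y hx hy]
        exact Finset.sum_congr rfl fun x hx =>
          integral_finset_sum S fun y hy => hIint r x y hx hy
      · exact integral_finset_sum S fun x hx => hJint r x hx
    -- off-diagonal terms do not move
    have hoff : ∀ (x y : Fin n × ℕ), x ∈ S → y ∈ S → y ≠ x →
        ∫ ω, χ ω * (c x.1 x.2 ω l * c y.1 y.2 ω m * ((G x.1 x.2 ω * (if T x.1 x.2 ω ≤ t then (1:ℝ) else 0)) * (G y.1 y.2 ω * (if T y.1 y.2 ω ≤ t then (1:ℝ) else 0)))) ∂μ = ∫ ω, χ ω * (c x.1 x.2 ω l * c y.1 y.2 ω m * ((G x.1 x.2 ω * (if T x.1 x.2 ω ≤ s then (1:ℝ) else 0)) * (G y.1 y.2 ω * (if T y.1 y.2 ω ≤ s then (1:ℝ) else 0)))) ∂μ := by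
      intro x y hx hy hyx
      have hxy : x ≠ y := fun h => hyx h.symm
      have hp1int : Integrable (fun ω => χ ω * (c x.1 x.2 ω l * c y.1 y.2 ω m *
          ((G x.1 x.2 ω * ((if T x.1 x.2 ω ≤ t then (1:ℝ) else 0) - (if T x.1 x.2 ω ≤ s then (1:ℝ) else 0))) * (G y.1 y.2 ω * (if T y.1 y.2 ω ≤ t then (1:ℝ) else 0))))) μ :=
        hint_term x y hx hy _ _ (hdm0 x) (hXm0 y t) (fun ω => habsd x ω) (fun ω => habsX y t ω)
      have hp2int : Integrable (fun ω => χ ω * (c x.1 x.2 ω l * c y.1 y.2 ω m *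
          ((G x.1 x.2 ω * (if T x.1 x.2 ω ≤ s then (1:ℝ) else 0)) * (G y.1 y.2 ω * ((if T y.1 y.2 ω ≤ t then (1:ℝ) else 0) - (if T y.1 y.2 ω ≤ s then (1:ℝ) else 0)))))) μ :=
        hint_term x y hx hy _ _ (hXm0 x s) (hdm0 y) (fun ω => habsX x s ω) (fun ω => habsd y ω)
      have hdiff : (fun ω => χ ω * (c x.1 x.2 ω l * c y.1 y.2 ω m * ((G x.1 x.2 ω * (if T x.1 x.2 ω ≤ t then (1:ℝ) else 0)) * (G y.1 y.2 ω * (if T y.1 y.2 ω ≤ t then (1:ℝ) else 0)))))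
          = fun ω => χ ω * (c x.1 x.2 ω l * c y.1 y.2 ω m * ((G x.1 x.2 ω * (if T x.1 x.2 ω ≤ s then (1:ℝ) else 0)) * (G y.1 y.2 ω * (if T y.1 y.2 ω ≤ s then (1:ℝ) else 0))))
            + (χ ω * (c x.1 x.2 ω l * c y.1 y.2 ω m * ((G x.1 x.2 ω * ((if T x.1 x.2 ω ≤ t then (1:ℝ) else 0) - (if T x.1 x.2 ω ≤ s then (1:ℝ) else 0))) * (G y.1 y.2 ω * (if T y.1 y.2 ω ≤ t then (1:ℝ) else 0))))
              + χ ω * (c x.1 x.2 ω l * c y.1 y.2 ω m * ((G x.1 x.2 ω * (if T x.1 x.2 ω ≤ s then (1:ℝ) else 0)) * (G y.1 y.2 ω * ((if T y.1 y.2 ω ≤ t then (1:ℝ) else 0) - (if T y.1 y.2 ω ≤ s then (1:ℝ) else 0)))))) :=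
        funext fun ω => by ring
      have hp12 : Integrable (fun ω => χ ω * (c x.1 x.2 ω l * c y.1 y.2 ω m * ((G x.1 x.2 ω * ((if T x.1 x.2 ω ≤ t then (1:ℝ) else 0) - (if T x.1 x.2 ω ≤ s then (1:ℝ) else 0))) * (G y.1 y.2 ω * (if T y.1 y.2 ω ≤ t then (1:ℝ) else 0))))
          + χ ω * (c x.1 x.2 ω l * c y.1 y.2 ω m * ((G x.1 x.2 ω * (if T x.1 x.2 ω ≤ s then (1:ℝ) else 0)) * (G y.1 y.2 ω * ((if T y.1 y.2 ω ≤ t then (1:ℝ) else 0) - (if T y.1 y.2 ω ≤ s then (1:ℝ) else 0)))))) μ := hp1int.add hp2int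
      rw [hdiff, integral_add (hIint s x y hx hy) hp12, integral_add hp1int hp2int]
      have h1 : (∫ ω, χ ω * (c x.1 x.2 ω l * c y.1 y.2 ω m * ((G x.1 x.2 ω * ((if T x.1 x.2 ω ≤ t then (1:ℝ) else 0) - (if T x.1 x.2 ω ≤ s then (1:ℝ) else 0))) * (G y.1 y.2 ω * (if T y.1 y.2 ω ≤ t then (1:ℝ) else 0)))) ∂μ) = 0 := by
        have hψ : Measurable[Me x] fun ω => (if ω ∈ Ak k then (1:ℝ) else 0) *
            (c x.1 x.2 ω l * c y.1 y.2 ω m * (G y.1 y.2 ω * (if T y.1 y.2 ω ≤ t then (1:ℝ) else 0))) := by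
          letI := Me x
          refine (Measurable.ite ((h𝒟Me x) _ (hAk_meas𝒟 k)) measurable_const
            measurable_const).mul ?_
          exact (((hcl x.1 x.2 l).mono (h𝒟Me x) le_rfl).mul
            ((hcl y.1 y.2 m).mono (h𝒟Me x) le_rfl)).mul
            ((hGMe' x y hyx).mul ((hind y.1 y.2 t).mono (h𝒟Me x) le_rfl))
        have he : (fun ω => χ ω * (c x.1 x.2 ω l * c y.1 y.2 ω m * ((G x.1 x.2 ω * ((if T x.1 x.2 ω ≤ t then (1:ℝ) else 0) - (if T x.1 x.2 ω ≤ s then (1:ℝ) else 0))) * (G y.1 y.2 ω * (if T y.1 y.2 ω ≤ t then (1:ℝ) else 0)))))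
            = fun ω => (G x.1 x.2 ω * ((if T x.1 x.2 ω ≤ t then (1:ℝ) else 0) - (if T x.1 x.2 ω ≤ s then (1:ℝ) else 0))) *
              ((if ω ∈ A then (1:ℝ) else 0) * ((if ω ∈ Ak k then (1:ℝ) else 0) *
                (c x.1 x.2 ω l * c y.1 y.2 ω m * (G y.1 y.2 ω * (if T y.1 y.2 ω ≤ t then (1:ℝ) else 0))))) := funext fun ω => by
          rw [hχ_split ω]; ring
        rw [he]
        exact hzero x _ hψ
      have h2 : (∫ ω, χ ω * (c x.1 x.2 ω l * c y.1 y.2 ω m * ((G x.1 x.2 ω * (if T x.1 x.2 ω ≤ s then (1:ℝ) else 0)) * (G y.1 y.2 ω * ((if T y.1 y.2 ω ≤ t then (1:ℝ) else 0) - (if T y.1 y.2 ω ≤ s then (1:ℝ) else 0))))) ∂μ) = 0 := by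
        have hψ : Measurable[Me y] fun ω => (if ω ∈ Ak k then (1:ℝ) else 0) *
            (c x.1 x.2 ω l * c y.1 y.2 ω m * (G x.1 x.2 ω * (if T x.1 x.2 ω ≤ s then (1:ℝ) else 0))) := by
          letI := Me y
          refine (Measurable.ite ((h𝒟Me y) _ (hAk_meas𝒟 k)) measurable_const
            measurable_const).mul ?_
          exact (((hcl x.1 x.2 l).mono (h𝒟Me y) le_rfl).mul
            ((hcl y.1 y.2 m).mono (h𝒟Me y) le_rfl)).mul
            ((hGMe' y x hxy).mul ((hind x.1 x.2 s).mono (h𝒟Me y) le_rfl))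
        have he : (fun ω => χ ω * (c x.1 x.2 ω l * c y.1 y.2 ω m * ((G x.1 x.2 ω * (if T x.1 x.2 ω ≤ s then (1:ℝ) else 0)) * (G y.1 y.2 ω * ((if T y.1 y.2 ω ≤ t then (1:ℝ) else 0) - (if T y.1 y.2 ω ≤ s then (1:ℝ) else 0))))))
            = fun ω => (G y.1 y.2 ω * ((if T y.1 y.2 ω ≤ t then (1:ℝ) else 0) - (if T y.1 y.2 ω ≤ s then (1:ℝ) else 0))) *
              ((if ω ∈ A then (1:ℝ) else 0) * ((if ω ∈ Ak k then (1:ℝ) else 0) *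
                (c x.1 x.2 ω l * c y.1 y.2 ω m * (G x.1 x.2 ω * (if T x.1 x.2 ω ≤ s then (1:ℝ) else 0))))) := funext fun ω => by
          rw [hχ_split ω]; ring
        rw [he]
        exact hzero y _ hψ
      rw [h1, h2]
      ring
    -- diagonal terms move exactly like the compensator
    have hdiagterm : ∀ (x : Fin n × ℕ), x ∈ S →
        (∫ ω, χ ω * (c x.1 x.2 ω l * c x.1 x.2 ω m * ((G x.1 x.2 ω * (if T x.1 x.2 ω ≤ t then (1:ℝ) else 0)) * (G x.1 x.2 ω * (if T x.1 x.2 ω ≤ t then (1:ℝ) else 0)))) ∂μ) - (∫ ω, χ ω * (c x.1 x.2 ω l * c x.1 x.2 ω m * ((G x.1 x.2 ω * (if T x.1 x.2 ω ≤ s then (1:ℝ) else 0)) * (G x.1 x.2 ω * (if T x.1 x.2 ω ≤ s then (1:ℝ) else 0)))) ∂μ)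
          = (∫ ω, χ ω * (c x.1 x.2 ω l * c x.1 x.2 ω m * (if T x.1 x.2 ω ≤ t then (1:ℝ) else 0)) ∂μ) - (∫ ω, χ ω * (c x.1 x.2 ω l * c x.1 x.2 ω m * (if T x.1 x.2 ω ≤ s then (1:ℝ) else 0)) ∂μ) := by
      intro x hx
      have hψ : Measurable[Me x] fun ω => (if ω ∈ Ak k then (1:ℝ) else 0) *
          (c x.1 x.2 ω l * c x.1 x.2 ω m) := by
        letI := Me x
        exact (Measurable.ite ((h𝒟Me x) _ (hAk_meas𝒟 k)) measurable_const
          measurable_const).mul (((hcl x.1 x.2 l).mono (h𝒟Me x) le_rfl).mul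
          ((hcl x.1 x.2 m).mono (h𝒟Me x) le_rfl))
      have hL : (∫ ω, χ ω * (c x.1 x.2 ω l * c x.1 x.2 ω m * ((G x.1 x.2 ω * (if T x.1 x.2 ω ≤ t then (1:ℝ) else 0)) * (G x.1 x.2 ω * (if T x.1 x.2 ω ≤ t then (1:ℝ) else 0)))) ∂μ) - (∫ ω, χ ω * (c x.1 x.2 ω l * c x.1 x.2 ω m * ((G x.1 x.2 ω * (if T x.1 x.2 ω ≤ s then (1:ℝ) else 0)) * (G x.1 x.2 ω * (if T x.1 x.2 ω ≤ s then (1:ℝ) else 0)))) ∂μ)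
          = ∫ ω, (G x.1 x.2 ω * G x.1 x.2 ω * ((if T x.1 x.2 ω ≤ t then (1:ℝ) else 0) - (if T x.1 x.2 ω ≤ s then (1:ℝ) else 0))) *
              ((if ω ∈ A then (1:ℝ) else 0) * ((if ω ∈ Ak k then (1:ℝ) else 0) *
                (c x.1 x.2 ω l * c x.1 x.2 ω m))) ∂μ := by
        rw [← integral_sub (hIint t x x hx hx) (hIint s x x hx hx)]
        refine integral_congr_ae (ae_of_all _ fun ω => ?_)
        dsimp only
        by_cases h1 : T x.1 x.2 ω ≤ s <;> by_cases h2 : T x.1 x.2 ω ≤ t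
        · simp only [if_pos h1, if_pos h2, hχ_split ω]; ring
        · exact absurd (h1.trans hst) h2
        · simp only [if_neg h1, if_pos h2, hχ_split ω]; ring
        · simp only [if_neg h1, if_neg h2, hχ_split ω]; ring
      have hR : (∫ ω, χ ω * (c x.1 x.2 ω l * c x.1 x.2 ω m * (if T x.1 x.2 ω ≤ t then (1:ℝ) else 0)) ∂μ) - (∫ ω, χ ω * (c x.1 x.2 ω l * c x.1 x.2 ω m * (if T x.1 x.2 ω ≤ s then (1:ℝ) else 0)) ∂μ)
          = ∫ ω, (((if T x.1 x.2 ω ≤ t then (1:ℝ) else 0) - (if T x.1 x.2 ω ≤ s then (1:ℝ) else 0))) *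
              ((if ω ∈ A then (1:ℝ) else 0) * ((if ω ∈ Ak k then (1:ℝ) else 0) *
                (c x.1 x.2 ω l * c x.1 x.2 ω m))) ∂μ := by
        rw [← integral_sub (hJint t x hx) (hJint s x hx)]
        refine integral_congr_ae (ae_of_all _ fun ω => ?_)
        dsimp only
        rw [hχ_split ω]
        ring
      rw [hL, hR]
      exact hdiag x _ hψ
    -- put everything together
    rw [hsetI s, hsetI t, hsplit s, hsplit t]
    congr 1
    have htot : (∑ x ∈ S, ∑ y ∈ S, ∫ ω, χ ω * (c x.1 x.2 ω l * c y.1 y.2 ω m * ((G x.1 x.2 ω * (if T x.1 x.2 ω ≤ t then (1:ℝ) else 0)) * (G y.1 y.2 ω * (if T y.1 y.2 ω ≤ t then (1:ℝ) else 0)))) ∂μ) - (∑ x ∈ S, ∑ y ∈ S, ∫ ω, χ ω * (c x.1 x.2 ω l * c y.1 y.2 ω m * ((G x.1 x.2 ω * (if T x.1 x.2 ω ≤ s then (1:ℝ) else 0)) * (G y.1 y.2 ω * (if T y.1 y.2 ω ≤ s then (1:ℝ) else 0)))) ∂μ)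
        = (∑ x ∈ S, ∫ ω, χ ω * (c x.1 x.2 ω l * c x.1 x.2 ω m * (if T x.1 x.2 ω ≤ t then (1:ℝ) else 0)) ∂μ) - ∑ x ∈ S, ∫ ω, χ ω * (c x.1 x.2 ω l * c x.1 x.2 ω m * (if T x.1 x.2 ω ≤ s then (1:ℝ) else 0)) ∂μ := by
      rw [← Finset.sum_sub_distrib, ← Finset.sum_sub_distrib]
      refine Finset.sum_congr rfl fun x hx => ?_
      rw [← Finset.sum_sub_distrib]
      have hterm : ∀ y ∈ S, (∫ ω, χ ω * (c x.1 x.2 ω l * c y.1 y.2 ω m * ((G x.1 x.2 ω * (if T x.1 x.2 ω ≤ t then (1:ℝ) else 0)) * (G y.1 y.2 ω * (if T y.1 y.2 ω ≤ t then (1:ℝ) else 0)))) ∂μ) - (∫ ω, χ ω * (c x.1 x.2 ω l * c y.1 y.2 ω m * ((G x.1 x.2 ω * (if T x.1 x.2 ω ≤ s then (1:ℝ) else 0)) * (G y.1 y.2 ω * (if T y.1 y.2 ω ≤ s then (1:ℝ) else 0)))) ∂μ)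
          = if y = x then (∫ ω, χ ω * (c x.1 x.2 ω l * c x.1 x.2 ω m * (if T x.1 x.2 ω ≤ t then (1:ℝ) else 0)) ∂μ) - (∫ ω, χ ω * (c x.1 x.2 ω l * c x.1 x.2 ω m * (if T x.1 x.2 ω ≤ s then (1:ℝ) else 0)) ∂μ) else 0 := by
        intro y hy
        by_cases hyx : y = x
        · subst hyx
          rw [if_pos rfl]
          exact hdiagterm y hx
        · rw [if_neg hyx, hoff x y hx hy hyx]
          ring
      rw [Finset.sum_congr rfl hterm, Finset.sum_ite_eq' S x
        (fun _ => (∫ ω, χ ω * (c x.1 x.2 ω l * c x.1 x.2 ω m * (if T x.1 x.2 ω ≤ t then (1:ℝ) else 0)) ∂μ) - (∫ ω, χ ω * (c x.1 x.2 ω l * c x.1 x.2 ω m * (if T x.1 x.2 ω ≤ s then (1:ℝ) else 0)) ∂μ)), if_pos hx]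
    linarith [htot]
  -- the set-integral equality on all of F₂ s via the π-λ theorem
  have key : ∀ A : Set Ω, MeasurableSet[F₂ s] A →
      ∫ x in A, Q s x l m ∂μ = ∫ x in A, Q t x l m ∂μ := by
    have hbasic : ∀ B ∈ piiUnionInter (fun o => {sa | MeasurableSet[ms' o] sa}) univ,
        ∫ x in B, Q s x l m ∂μ = ∫ x in B, Q t x l m ∂μ := by
      rintro B ⟨K, -, f, hfm, rfl⟩
      have hfm' : ∀ o ∈ K, MeasurableSet[ms' o] (f o) := hfm
      have hAmeas : MeasurableSet (⋂ o ∈ K, f o) :=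
        Finset.measurableSet_biInter K fun o ho => hms'_le o _ (hfm' o ho)
      have hcover : (⋂ o ∈ K, f o) = ⋃ kk : Fin n → ℕ, ((⋂ o ∈ K, f o) ∩ Ak kk) := by
        rw [← Set.inter_iUnion, show (⋃ kk : Fin n → ℕ, Ak kk) = univ from
          Set.eq_univ_of_forall fun ω => Set.mem_iUnion.mpr ⟨_, hAk_cover ω⟩, Set.inter_univ]
      have hdisj : Pairwise (Function.onFun Disjoint fun kk => ((⋂ o ∈ K, f o) ∩ Ak kk)) :=
        fun k1 k2 h12 =>
          Disjoint.mono Set.inter_subset_right Set.inter_subset_right (hAk_disj h12)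
      rw [hcover,
        integral_iUnion (fun kk => hAmeas.inter (hAk_meas kk)) hdisj hQint_s.integrableOn,
        integral_iUnion (fun kk => hAmeas.inter (hAk_meas kk)) hdisj hQint_t.integrableOn]
      exact tsum_congr fun kk => hpiece K f hfm' kk
    have huniv : ∫ ω, Q s ω l m ∂μ = ∫ ω, Q t ω l m ∂μ := by
      have h := hbasic univ ⟨∅, by simp, fun _ => univ, by simp, by simp⟩
      simpa using h
    intro A hA
    refine MeasurableSpace.induction_on_inter (m := F₂ s) (C := fun B _ =>
        ∫ x in B, Q s x l m ∂μ = ∫ x in B, Q t x l m ∂μ) hgen hpi (by simp) hbasic ?_ ?_ A hA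
    · intro B hBm hBeq
      have hB0 : MeasurableSet B := hm2 _ hBm
      have h1 := integral_add_compl hB0 hQint_s
      have h2 := integral_add_compl hB0 hQint_t
      linarith
    · intro g hdisj hmeasg hCg
      rw [integral_iUnion (fun i => hm2 _ (hmeasg i)) hdisj hQint_s.integrableOn,
        integral_iUnion (fun i => hm2 _ (hmeasg i)) hdisj hQint_t.integrableOn]
      exact tsum_congr hCg
  have hQsm : AEStronglyMeasurable[F₂ s] (fun ω => Q s ω l m) μ :=
    StronglyMeasurable.aestronglyMeasurable (by
      letI := F₂ s
      exact (hQ_measF s l m).stronglyMeasurable)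
  exact (ae_eq_condExp_of_forall_setIntegral_eq hm2 hQint_t
    (fun A hAm _ => hQint_s.integrableOn)
    (fun A hAm _ => key A hAm) hQsm).symm
end

section
/- Under the stated assumptions, sup_{t∈[0,τ]} ‖ (1/n) Σ_{i=1}^n ∫₀^t K̃ᵢ(u) λᵢ(u) du − ∫₀^t E[K̃₁(u) λ₁(u)] du ‖ → 0 in probability as n → ∞. (Uniform law of large numbers for the integrated intensity processes, equation (eq:kvgz_2_B-1), established by a partitioning/chaining argument in the proof of Lemma 2.2.) -/
open MeasureTheory ProbabilityTheory Filter Set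
open scoped ENNReal NNReal Topology

namespace UniformLLNAux

variable {Ω : Type*} [MeasurableSpace Ω]

/-- Pi-norm of a matrix is at most the sum of absolute values of entries. -/
lemma pi_norm_le_sum_abs {p q : ℕ} (M : Fin p → Fin q → ℝ) :
    ‖M‖ ≤ ∑ e : Fin p × Fin q, |M e.1 e.2| := by
  have hnn : 0 ≤ ∑ e : Fin p × Fin q, |M e.1 e.2| :=
    Finset.sum_nonneg fun e _ => abs_nonneg _
  rw [pi_norm_le_iff_of_nonneg hnn]
  intro l
  rw [pi_norm_le_iff_of_nonneg hnn]
  intro m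
  rw [Real.norm_eq_abs]
  exact Finset.single_le_sum (f := fun e : Fin p × Fin q => |M e.1 e.2|)
    (fun e _ => abs_nonneg _) (Finset.mem_univ (l, m))

/-- Finiteness of the double (lower) integral of the intensity. -/
lemma lam_fin (μ : Measure Ω) [IsProbabilityMeasure μ] (τ : ℝ) (hτ : 0 < τ)
    (lam0 : ℝ → Ω → ℝ) (hnn : ∀ u ω, 0 ≤ lam0 u ω)
    (hmeas : Measurable fun x : ℝ × Ω => lam0 x.1 x.2)
    (hint : ∀ᵐ ω ∂μ, IntervalIntegrable (fun u => lam0 u ω) volume 0 τ)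
    (hΛ : Integrable (fun ω => ∫ u in (0:ℝ)..τ, lam0 u ω) μ) :
    ∫⁻ u in Ioc (0:ℝ) τ, ∫⁻ ω, ENNReal.ofReal (lam0 u ω) ∂μ ∂volume ≠ ⊤ := by
  have hswap : ∫⁻ u in Ioc (0:ℝ) τ, ∫⁻ ω, ENNReal.ofReal (lam0 u ω) ∂μ ∂volume
      = ∫⁻ ω, ∫⁻ u in Ioc (0:ℝ) τ, ENNReal.ofReal (lam0 u ω) ∂volume ∂μ := by
    refine lintegral_lintegral_swap ?_
    exact (ENNReal.measurable_ofReal.comp hmeas).aemeasurable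
  rw [hswap]
  have hX_int : Integrable (fun ω => ∫ u in Ioc (0:ℝ) τ, lam0 u ω ∂volume) μ := by
    have : (fun ω => ∫ u in (0:ℝ)..τ, lam0 u ω)
        = fun ω => ∫ u in Ioc (0:ℝ) τ, lam0 u ω ∂volume := by
      funext ω; rw [intervalIntegral.integral_of_le hτ.le]
    rwa [this] at hΛ
  have hcongr : ∀ᵐ ω ∂μ, ∫⁻ u in Ioc (0:ℝ) τ, ENNReal.ofReal (lam0 u ω) ∂volume
      = ENNReal.ofReal (∫ u in Ioc (0:ℝ) τ, lam0 u ω ∂volume) := by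
    filter_upwards [hint] with ω hω
    rw [← ofReal_integral_eq_lintegral_ofReal
      ((intervalIntegrable_iff_integrableOn_Ioc_of_le hτ.le).mp hω)
      (ae_of_all _ fun u => hnn u ω)]
  rw [lintegral_congr_ae hcongr,
    ← ofReal_integral_eq_lintegral_ofReal hX_int
      (ae_of_all _ fun ω => setIntegral_nonneg measurableSet_Ioc fun u _ => hnn u ω)]
  exact ENNReal.ofReal_ne_top

/-- Integrability of the mean function `u ↦ ∫ f0 u dμ` on `Ioc 0 τ`. -/
lemma phi_integrableOn (μ : Measure Ω) [IsProbabilityMeasure μ] (τ : ℝ)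
    (f0 : ℝ → Ω → ℝ) (hf_meas : Measurable fun x : ℝ × Ω => f0 x.1 x.2)
    (lam0 : ℝ → Ω → ℝ) (hnn : ∀ u ω, 0 ≤ lam0 u ω)
    (hmeas : Measurable fun x : ℝ × Ω => lam0 x.1 x.2)
    (C' : ℝ) (hC' : 0 ≤ C')
    (hbd : ∀ᵐ ω ∂μ, ∀ u ∈ Icc (0:ℝ) τ, |f0 u ω| ≤ C' * lam0 u ω)
    (hLam_fin : ∫⁻ u in Ioc (0:ℝ) τ, ∫⁻ ω, ENNReal.ofReal (lam0 u ω) ∂μ ∂volume ≠ ⊤) :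
    IntegrableOn (fun u => ∫ ω', f0 u ω' ∂μ) (Ioc (0:ℝ) τ) volume := by
  set Lam : ℝ → ℝ≥0∞ := fun u => ∫⁻ ω, ENNReal.ofReal (lam0 u ω) ∂μ with hLamdef
  have hLam_meas : Measurable Lam :=
    Measurable.lintegral_prod_right' (ENNReal.measurable_ofReal.comp hmeas)
  have hlam_sec : ∀ u : ℝ, Measurable fun ω => lam0 u ω := fun u =>
    hmeas.comp (measurable_const.prodMk measurable_id)
  have hf_sec : ∀ u : ℝ, Measurable fun ω => f0 u ω := fun u =>
    hf_meas.comp (measurable_const.prodMk measurable_id)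
  have hlam_int_u : ∀ u : ℝ, Lam u < ⊤ → Integrable (fun ω => lam0 u ω) μ := by
    intro u hu
    refine ⟨(hlam_sec u).aestronglyMeasurable, ?_⟩
    rw [hasFiniteIntegral_iff_norm]
    have heq : ∫⁻ a, ENNReal.ofReal ‖lam0 u a‖ ∂μ = Lam u :=
      lintegral_congr fun ω => by rw [Real.norm_eq_abs, abs_of_nonneg (hnn u ω)]
    rw [heq]; exact hu
  have hmean : ∀ u : ℝ, ∫ ω, lam0 u ω ∂μ = (Lam u).toReal := fun u => by
    rw [integral_eq_lintegral_of_nonneg_ae (ae_of_all _ fun ω => hnn u ω)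
      (hlam_sec u).aestronglyMeasurable]
  -- the dominating function
  have hdom_int : IntegrableOn (fun u => C' * (Lam u).toReal) (Ioc (0:ℝ) τ) volume := by
    refine ⟨(measurable_const.mul hLam_meas.ennreal_toReal).aestronglyMeasurable, ?_⟩
    rw [hasFiniteIntegral_iff_norm]
    have hb : ∀ u : ℝ, ENNReal.ofReal ‖C' * (Lam u).toReal‖
        ≤ ENNReal.ofReal C' * Lam u := by
      intro u
      rw [Real.norm_eq_abs, abs_mul, abs_of_nonneg hC', abs_of_nonneg ENNReal.toReal_nonneg,
        ENNReal.ofReal_mul hC']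
      exact mul_le_mul_right ENNReal.ofReal_toReal_le _
    calc ∫⁻ u in Ioc (0:ℝ) τ, ENNReal.ofReal ‖C' * (Lam u).toReal‖ ∂volume
        ≤ ∫⁻ u in Ioc (0:ℝ) τ, ENNReal.ofReal C' * Lam u ∂volume := lintegral_mono hb
      _ = ENNReal.ofReal C' * ∫⁻ u in Ioc (0:ℝ) τ, Lam u ∂volume :=
          lintegral_const_mul _ hLam_meas
      _ < ⊤ := ENNReal.mul_lt_top ENNReal.ofReal_lt_top (lt_top_iff_ne_top.mpr hLam_fin)
  -- a.e. bound on |φ|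
  refine Integrable.mono' hdom_int ?_ ?_
  · exact ((hf_meas.stronglyMeasurable.integral_prod_right')).aestronglyMeasurable
  · have hae : ∀ᵐ u ∂(volume.restrict (Ioc (0:ℝ) τ)), u ∈ Ioc (0:ℝ) τ ∧ Lam u < ⊤ :=
      (ae_restrict_mem measurableSet_Ioc).and (ae_lt_top hLam_meas hLam_fin)
    filter_upwards [hae] with u hu
    obtain ⟨huI, huL⟩ := hu
    have huIcc : u ∈ Icc (0:ℝ) τ := ⟨huI.1.le, huI.2⟩
    have hbd_u : ∀ᵐ ω ∂μ, |f0 u ω| ≤ C' * lam0 u ω := by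
      filter_upwards [hbd] with ω hω using hω u huIcc
    have hlam_int : Integrable (fun ω => lam0 u ω) μ := hlam_int_u u huL
    have hf0_int : Integrable (fun ω => f0 u ω) μ := by
      refine Integrable.mono' (hlam_int.const_mul C') (hf_sec u).aestronglyMeasurable ?_
      filter_upwards [hbd_u] with ω hω
      rwa [Real.norm_eq_abs]
    calc ‖∫ ω', f0 u ω' ∂μ‖ ≤ ∫ ω', ‖f0 u ω'‖ ∂μ := norm_integral_le_integral_norm _
      _ ≤ ∫ ω', C' * lam0 u ω' ∂μ := by
          refine integral_mono_ae hf0_int.norm (hlam_int.const_mul C') ?_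
          filter_upwards [hbd_u] with ω hω
          rwa [Real.norm_eq_abs]
      _ = C' * (Lam u).toReal := by rw [integral_const_mul, hmean u]


/-- Core: L¹-type uniform LLN for a single scalar entry process. -/
lemma core (μ : Measure Ω) [IsProbabilityMeasure μ] (τ : ℝ) (hτ : 0 < τ)
    (f : ℕ → ℝ → Ω → ℝ) (hf_meas : ∀ i, Measurable fun x : ℝ × Ω => f i x.1 x.2)
    (lam : ℕ → ℝ → Ω → ℝ) (hlam_nonneg : ∀ i u ω, 0 ≤ lam i u ω)
    (hlam_meas : ∀ i, Measurable fun x : ℝ × Ω => lam i x.1 x.2)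
    (C' : ℝ) (hC' : 0 ≤ C')
    (hbd : ∀ᵐ ω ∂μ, ∀ i, ∀ u ∈ Icc (0:ℝ) τ, |f i u ω| ≤ C' * lam i u ω)
    (hf_indep : ∀ u : ℝ, Pairwise (Function.onFun (IndepFun · · μ) fun (i : ℕ) ω => f i u ω))
    (hf_ident : ∀ i u, IdentDistrib (fun ω => f i u ω) (fun ω => f 0 u ω) μ μ)
    (hlam_ident : ∀ i u, IdentDistrib (fun ω => lam i u ω) (fun ω => lam 0 u ω) μ μ)
    (hLam_fin : ∫⁻ u in Ioc (0:ℝ) τ, ∫⁻ ω, ENNReal.ofReal (lam 0 u ω) ∂μ ∂volume ≠ ⊤) :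
    Tendsto (fun n : ℕ => ∫⁻ u in Ioc (0:ℝ) τ,
        ∫⁻ ω, ENNReal.ofReal |(n:ℝ)⁻¹ * ∑ i ∈ Finset.range n, f i u ω - ∫ ω', f 0 u ω' ∂μ| ∂μ ∂volume)
      atTop (𝓝 0) := by
  classical
  set Lam : ℝ → ℝ≥0∞ := fun u => ∫⁻ ω, ENNReal.ofReal (lam 0 u ω) ∂μ with hLamdef
  have hLam_meas : Measurable Lam :=
    Measurable.lintegral_prod_right' (ENNReal.measurable_ofReal.comp (hlam_meas 0))
  have hlam_sec : ∀ i (u : ℝ), Measurable fun ω => lam i u ω := fun i u =>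
    (hlam_meas i).comp (measurable_const.prodMk measurable_id)
  have hf_sec : ∀ i (u : ℝ), Measurable fun ω => f i u ω := fun i u =>
    (hf_meas i).comp (measurable_const.prodMk measurable_id)
  -- identical distribution of intensities transfers lintegrals
  have hLam_eq : ∀ i (u : ℝ), ∫⁻ ω, ENNReal.ofReal (lam i u ω) ∂μ = Lam u := by
    intro i u
    have hmap := (hlam_ident i u).map_eq
    rw [hLamdef]
    calc ∫⁻ ω, ENNReal.ofReal (lam i u ω) ∂μ
        = ∫⁻ x, ENNReal.ofReal x ∂(Measure.map (fun ω => lam i u ω) μ) :=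
          (lintegral_map ENNReal.measurable_ofReal (hlam_sec i u)).symm
      _ = ∫⁻ x, ENNReal.ofReal x ∂(Measure.map (fun ω => lam 0 u ω) μ) := by rw [hmap]
      _ = ∫⁻ ω, ENNReal.ofReal (lam 0 u ω) ∂μ :=
          lintegral_map ENNReal.measurable_ofReal (hlam_sec 0 u)
  have hlam_int_u : ∀ u : ℝ, Lam u < ⊤ → Integrable (fun ω => lam 0 u ω) μ := by
    intro u hu
    refine ⟨(hlam_sec 0 u).aestronglyMeasurable, ?_⟩
    rw [hasFiniteIntegral_iff_norm]
    have heq : ∫⁻ a, ENNReal.ofReal ‖lam 0 u a‖ ∂μ = Lam u :=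
      lintegral_congr fun ω => by rw [Real.norm_eq_abs, abs_of_nonneg (hlam_nonneg 0 u ω)]
    rw [heq]; exact hu
  have hmean : ∀ u : ℝ, ∫ ω, lam 0 u ω ∂μ = (Lam u).toReal := fun u => by
    rw [integral_eq_lintegral_of_nonneg_ae (ae_of_all _ fun ω => hlam_nonneg 0 u ω)
      (hlam_sec 0 u).aestronglyMeasurable]
  have hgood : ∀ᵐ u ∂(volume.restrict (Ioc (0:ℝ) τ)), u ∈ Ioc (0:ℝ) τ ∧ Lam u < ⊤ :=
    (ae_restrict_mem measurableSet_Ioc).and (ae_lt_top hLam_meas hLam_fin)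
  -- measurability of the integrand family
  have hG_meas : ∀ n : ℕ, Measurable fun u =>
      ∫⁻ ω, ENNReal.ofReal |(n:ℝ)⁻¹ * ∑ i ∈ Finset.range n, f i u ω - ∫ ω', f 0 u ω' ∂μ| ∂μ := by
    intro n
    have hφ : StronglyMeasurable fun u : ℝ => ∫ ω', f 0 u ω' ∂μ :=
      (hf_meas 0).stronglyMeasurable.integral_prod_right'
    have hj : Measurable fun x : ℝ × Ω =>
        ENNReal.ofReal |(n:ℝ)⁻¹ * ∑ i ∈ Finset.range n, f i x.1 x.2 - ∫ ω', f 0 x.1 ω' ∂μ| :=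
      ENNReal.measurable_ofReal.comp
        (((measurable_const.mul (Finset.measurable_sum _ fun i _ => hf_meas i)).sub
          (hφ.measurable.comp measurable_fst)).abs)
    exact Measurable.lintegral_prod_right' hj
  -- pointwise convergence at good u, via the L¹ strong law
  have hSL : ∀ u : ℝ, u ∈ Ioc (0:ℝ) τ → Lam u < ⊤ →
      Tendsto (fun n : ℕ =>
        ∫⁻ ω, ENNReal.ofReal |(n:ℝ)⁻¹ * ∑ i ∈ Finset.range n, f i u ω - ∫ ω', f 0 u ω' ∂μ| ∂μ)
        atTop (𝓝 0) := by
    intro u huI huL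
    have huIcc : u ∈ Icc (0:ℝ) τ := ⟨huI.1.le, huI.2⟩
    have hbd_u : ∀ᵐ ω ∂μ, |f 0 u ω| ≤ C' * lam 0 u ω := by
      filter_upwards [hbd] with ω hω using hω 0 u huIcc
    have hf0_int : Integrable (fun ω => f 0 u ω) μ := by
      refine Integrable.mono' ((hlam_int_u u huL).const_mul C')
        (hf_sec 0 u).aestronglyMeasurable ?_
      filter_upwards [hbd_u] with ω hω; rwa [Real.norm_eq_abs]
    have h := strong_law_Lp (μ := μ) (le_refl 1) ENNReal.one_ne_top (fun i ω => f i u ω)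
      (memLp_one_iff_integrable.mpr hf0_int) (hf_indep u) (fun i => hf_ident i u)
    have heq : ∀ n : ℕ,
        eLpNorm (fun ω => (n:ℝ)⁻¹ • ∑ i ∈ Finset.range n, f i u ω - ∫ x, f 0 u x ∂μ) 1 μ
        = ∫⁻ ω, ENNReal.ofReal |(n:ℝ)⁻¹ * ∑ i ∈ Finset.range n, f i u ω - ∫ ω', f 0 u ω' ∂μ| ∂μ := by
      intro n
      rw [eLpNorm_one_eq_lintegral_enorm]
      refine lintegral_congr fun ω => ?_
      rw [← ofReal_norm_eq_enorm, Real.norm_eq_abs, smul_eq_mul]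
    refine Tendsto.congr (fun n => heq n) h
  -- the uniform bound at good u
  have hGbd : ∀ n : ℕ, ∀ u : ℝ, u ∈ Ioc (0:ℝ) τ → Lam u < ⊤ →
      (∫⁻ ω, ENNReal.ofReal |(n:ℝ)⁻¹ * ∑ i ∈ Finset.range n, f i u ω - ∫ ω', f 0 u ω' ∂μ| ∂μ)
        ≤ 2 * ENNReal.ofReal C' * Lam u := by
    intro n u huI huL
    have huIcc : u ∈ Icc (0:ℝ) τ := ⟨huI.1.le, huI.2⟩
    have hbd_u : ∀ᵐ ω ∂μ, ∀ i, |f i u ω| ≤ C' * lam i u ω := by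
      filter_upwards [hbd] with ω hω using fun i => hω i u huIcc
    have hf0_int : Integrable (fun ω => f 0 u ω) μ := by
      refine Integrable.mono' ((hlam_int_u u huL).const_mul C')
        (hf_sec 0 u).aestronglyMeasurable ?_
      filter_upwards [hbd_u] with ω hω
      rw [Real.norm_eq_abs]; exact hω 0
    have hφ_le : |∫ ω', f 0 u ω' ∂μ| ≤ C' * (Lam u).toReal := by
      calc |∫ ω', f 0 u ω' ∂μ| ≤ ∫ ω', ‖f 0 u ω'‖ ∂μ := by
            rw [← Real.norm_eq_abs]; exact norm_integral_le_integral_norm _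
        _ ≤ ∫ ω', C' * lam 0 u ω' ∂μ := by
            refine integral_mono_ae hf0_int.norm ((hlam_int_u u huL).const_mul C') ?_
            filter_upwards [hbd_u] with ω hω
            rw [Real.norm_eq_abs]; exact hω 0
        _ = C' * (Lam u).toReal := by rw [integral_const_mul, hmean u]
    -- pointwise bound
    have hpt : ∀ᵐ ω ∂μ, ENNReal.ofReal
          |(n:ℝ)⁻¹ * ∑ i ∈ Finset.range n, f i u ω - ∫ ω', f 0 u ω' ∂μ|
        ≤ ENNReal.ofReal C' * (ENNReal.ofReal ((n:ℝ)⁻¹)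
            * ∑ i ∈ Finset.range n, ENNReal.ofReal (lam i u ω))
          + ENNReal.ofReal (C' * (Lam u).toReal) := by
      filter_upwards [hbd_u] with ω hω
      have h1 : |(n:ℝ)⁻¹ * ∑ i ∈ Finset.range n, f i u ω - ∫ ω', f 0 u ω' ∂μ|
          ≤ C' * ((n:ℝ)⁻¹ * ∑ i ∈ Finset.range n, lam i u ω) + C' * (Lam u).toReal := by
        refine (abs_sub _ _).trans (add_le_add ?_ hφ_le)
        calc |(n:ℝ)⁻¹ * ∑ i ∈ Finset.range n, f i u ω|
              = (n:ℝ)⁻¹ * |∑ i ∈ Finset.range n, f i u ω| := by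
                rw [abs_mul, abs_of_nonneg (by positivity : (0:ℝ) ≤ (n:ℝ)⁻¹)]
            _ ≤ (n:ℝ)⁻¹ * ∑ i ∈ Finset.range n, (C' * lam i u ω) := by
                gcongr
                exact (Finset.abs_sum_le_sum_abs _ _).trans
                  (Finset.sum_le_sum fun i _ => hω i)
            _ = C' * ((n:ℝ)⁻¹ * ∑ i ∈ Finset.range n, lam i u ω) := by
                rw [← Finset.mul_sum]; ring
      calc ENNReal.ofReal |(n:ℝ)⁻¹ * ∑ i ∈ Finset.range n, f i u ω - ∫ ω', f 0 u ω' ∂μ|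
          ≤ ENNReal.ofReal (C' * ((n:ℝ)⁻¹ * ∑ i ∈ Finset.range n, lam i u ω)
              + C' * (Lam u).toReal) := ENNReal.ofReal_le_ofReal h1
        _ ≤ ENNReal.ofReal C' * (ENNReal.ofReal ((n:ℝ)⁻¹)
              * ∑ i ∈ Finset.range n, ENNReal.ofReal (lam i u ω))
            + ENNReal.ofReal (C' * (Lam u).toReal) := by
            have h01 : (0:ℝ) ≤ (n:ℝ)⁻¹ := inv_nonneg.mpr (Nat.cast_nonneg n)
            have h02 : (0:ℝ) ≤ (n:ℝ)⁻¹ * ∑ i ∈ Finset.range n, lam i u ω :=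
              mul_nonneg h01 (Finset.sum_nonneg fun i _ => hlam_nonneg i u ω)
            rw [ENNReal.ofReal_add (mul_nonneg hC' h02) (mul_nonneg hC' ENNReal.toReal_nonneg),
              ENNReal.ofReal_mul hC', ENNReal.ofReal_mul h01,
              ENNReal.ofReal_sum_of_nonneg (fun i _ => hlam_nonneg i u ω)]
    calc (∫⁻ ω, ENNReal.ofReal |(n:ℝ)⁻¹ * ∑ i ∈ Finset.range n, f i u ω - ∫ ω', f 0 u ω' ∂μ| ∂μ)
        ≤ ∫⁻ ω, (ENNReal.ofReal C' * (ENNReal.ofReal ((n:ℝ)⁻¹)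
            * ∑ i ∈ Finset.range n, ENNReal.ofReal (lam i u ω))
          + ENNReal.ofReal (C' * (Lam u).toReal)) ∂μ := lintegral_mono_ae hpt
      _ = ENNReal.ofReal C' * (ENNReal.ofReal ((n:ℝ)⁻¹)
            * ∑ i ∈ Finset.range n, (∫⁻ ω, ENNReal.ofReal (lam i u ω) ∂μ))
          + ENNReal.ofReal (C' * (Lam u).toReal) := by
          have hms : ∀ i : ℕ, Measurable fun ω => ENNReal.ofReal (lam i u ω) := fun i =>
            ENNReal.measurable_ofReal.comp (hlam_sec i u)
          have hsum_meas : Measurable fun ω => ∑ i ∈ Finset.range n, ENNReal.ofReal (lam i u ω) :=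
            Finset.measurable_sum _ fun i _ => hms i
          rw [lintegral_add_right _ measurable_const, lintegral_const, measure_univ, mul_one]
          congr 1
          rw [lintegral_const_mul _ (hsum_meas.const_mul _)]
          congr 1
          rw [lintegral_const_mul _ hsum_meas]
          congr 1
          exact lintegral_finset_sum _ fun i _ => hms i
      _ ≤ 2 * ENNReal.ofReal C' * Lam u := by
          have hsum : ∑ i ∈ Finset.range n, (∫⁻ ω, ENNReal.ofReal (lam i u ω) ∂μ)
              = (n : ℝ≥0∞) * Lam u := by
            rw [Finset.sum_congr rfl fun i _ => hLam_eq i u, Finset.sum_const,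
              Finset.card_range, nsmul_eq_mul]
          rw [hsum]
          have hn1 : ENNReal.ofReal ((n:ℝ)⁻¹) * (n : ℝ≥0∞) ≤ 1 := by
            rcases Nat.eq_zero_or_pos n with h0 | hpos
            · subst h0; simp
            · rw [ENNReal.ofReal_inv_of_pos (by exact_mod_cast hpos), ENNReal.ofReal_natCast,
                ENNReal.inv_mul_cancel (by exact_mod_cast hpos.ne') (ENNReal.natCast_ne_top n)]
          have h2 : ENNReal.ofReal ((n:ℝ)⁻¹) * ((n : ℝ≥0∞) * Lam u) ≤ Lam u := by
            rw [← mul_assoc]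
            calc ENNReal.ofReal ((n:ℝ)⁻¹) * (n : ℝ≥0∞) * Lam u ≤ 1 * Lam u :=
                mul_le_mul_left hn1 _
              _ = Lam u := one_mul _
          have h3 : ENNReal.ofReal (C' * (Lam u).toReal) ≤ ENNReal.ofReal C' * Lam u := by
            rw [ENNReal.ofReal_mul hC']
            exact mul_le_mul_right ENNReal.ofReal_toReal_le _
          calc ENNReal.ofReal C' * (ENNReal.ofReal ((n:ℝ)⁻¹) * ((n : ℝ≥0∞) * Lam u))
                + ENNReal.ofReal (C' * (Lam u).toReal)
              ≤ ENNReal.ofReal C' * Lam u + ENNReal.ofReal C' * Lam u :=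
                add_le_add (mul_le_mul_right h2 _) h3
            _ = 2 * ENNReal.ofReal C' * Lam u := by ring
  -- dominated convergence
  have hdct := tendsto_lintegral_of_dominated_convergence
    (μ := volume.restrict (Ioc (0:ℝ) τ))
    (F := fun n u => ∫⁻ ω, ENNReal.ofReal
      |(n:ℝ)⁻¹ * ∑ i ∈ Finset.range n, f i u ω - ∫ ω', f 0 u ω' ∂μ| ∂μ)
    (f := fun _ => 0) (fun u => 2 * ENNReal.ofReal C' * Lam u)
    hG_meas
    (fun n => by filter_upwards [hgood] with u hu using hGbd n u hu.1 hu.2)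
    (by
      rw [lintegral_const_mul _ hLam_meas]
      exact ENNReal.mul_ne_top (ENNReal.mul_ne_top (by simp) ENNReal.ofReal_ne_top) hLam_fin)
    (by filter_upwards [hgood] with u hu using hSL u hu.1 hu.2)
  simpa using hdct

end UniformLLNAux


/-- **Uniform law of large numbers (eq. (eq:kvgz_2_B-1), proof of Lemma 2.2, Part I).**
`sup_{t∈[0,τ]} ‖(1/n) Σ_{i=1}^n ∫₀^t K̃ᵢ(u) λᵢ(u) du − ∫₀^t E[K̃₁(u) λ₁(u)] du‖ → 0`
in probability as `n → ∞`. -/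
theorem uniform_lln_integrated_intensities
    {Ω : Type*} [m0 : MeasurableSpace Ω]
    (μ : Measure Ω) [IsProbabilityMeasure μ]
    (τ : ℝ) (hτ : 0 < τ) (p q : ℕ)
    -- the matrix-valued processes K̃ᵢ, jointly measurable, uniformly bounded
    (Ktilde : ℕ → ℝ → Ω → Fin p → Fin q → ℝ)
    (Ktilde_meas : ∀ i, Measurable fun x : ℝ × Ω => Ktilde i x.1 x.2)
    (C : ℝ)
    (Ktilde_bdd : ∀ᵐ ω ∂μ, ∀ i, ∀ t ∈ Icc (0:ℝ) τ, ‖Ktilde i t ω‖ ≤ C)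
    -- intensity processes, jointly measurable, with E[∫₀^τ λ₁] < ∞
    (lam : ℕ → ℝ → Ω → ℝ) (hlam_nonneg : ∀ i t ω, 0 ≤ lam i t ω)
    (hlam_meas : ∀ i, Measurable fun x : ℝ × Ω => lam i x.1 x.2)
    (hlam_intble : ∀ i, ∀ᵐ ω ∂μ,
        IntervalIntegrable (fun u => lam i u ω) volume 0 τ)
    (hΛ_int : Integrable (fun ω => ∫ u in (0:ℝ)..τ, lam 0 u ω) μ)
    -- the pairs (K̃ᵢ, λᵢ) are pairwise i.i.d. as path-space elements
    (path : ℕ → Ω → ℝ → (Fin p → Fin q → ℝ) × ℝ)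
    (hpath : ∀ i ω t, path i ω t = (Ktilde i t ω, lam i t ω))
    (hpath_meas : ∀ i, Measurable (path i))
    (hpath_indep : ∀ i j, i ≠ j → IndepFun (path i) (path j) μ)
    (hpath_ident : ∀ i, Measure.map (path i) μ = Measure.map (path 0) μ) :
    ∀ ε > (0:ℝ),
      Tendsto (fun (n : ℕ) => μ {ω | ∃ t ∈ Icc (0:ℝ) τ,
          ε ≤ ‖(fun l m => ((n : ℝ)⁻¹ *
                  ∑ i ∈ Finset.range n,
                    ∫ u in (0:ℝ)..t, Ktilde i u ω l m * lam i u ω) -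
                ∫ u in (0:ℝ)..t,
                  ∫ ω', Ktilde 0 u ω' l m * lam 0 u ω' ∂μ)‖})
        atTop (nhds 0) := by
  intro ε hε
  classical
  set C' : ℝ := max C 0 with hC'def
  have hC' : (0:ℝ) ≤ C' := le_max_right _ _
  -- identical distribution / independence of the per-entry processes
  have hpath_id : ∀ i, IdentDistrib (path i) (path 0) μ μ := fun i =>
    ⟨(hpath_meas i).aemeasurable, (hpath_meas 0).aemeasurable, hpath_ident i⟩
  have heval2_meas : ∀ u : ℝ, Measurable fun ψ : ℝ → (Fin p → Fin q → ℝ) × ℝ => (ψ u).2 :=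
    fun u => measurable_snd.comp (measurable_pi_apply u)
  have hF_meas : ∀ (e : Fin p × Fin q) (u : ℝ),
      Measurable fun ψ : ℝ → (Fin p → Fin q → ℝ) × ℝ => (ψ u).1 e.1 e.2 * (ψ u).2 := fun e u =>
    ((measurable_pi_apply e.2).comp ((measurable_pi_apply e.1).comp
        (measurable_fst.comp (measurable_pi_apply u)))).fun_mul (heval2_meas u)
  have hlam_ident : ∀ (i : ℕ) (u : ℝ),
      IdentDistrib (fun ω => lam i u ω) (fun ω => lam 0 u ω) μ μ := by
    intro i u
    have h := (hpath_id i).comp (heval2_meas u)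
    have e1 : ∀ j, (fun ψ : ℝ → (Fin p → Fin q → ℝ) × ℝ => (ψ u).2) ∘ path j
        = fun ω => lam j u ω := by
      intro j; funext ω; simp [Function.comp, hpath]
    rwa [e1 i, e1 0] at h
  have hf_meas : ∀ (e : Fin p × Fin q) (i : ℕ),
      Measurable fun x : ℝ × Ω => Ktilde i x.1 x.2 e.1 e.2 * lam i x.1 x.2 := fun e i =>
    (((measurable_pi_apply e.2).comp ((measurable_pi_apply e.1).comp
        (Ktilde_meas i))).fun_mul (hlam_meas i))
  have hf_eval : ∀ (e : Fin p × Fin q) (i : ℕ) (u : ℝ),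
      (fun ψ : ℝ → (Fin p → Fin q → ℝ) × ℝ => (ψ u).1 e.1 e.2 * (ψ u).2) ∘ path i
        = fun ω => Ktilde i u ω e.1 e.2 * lam i u ω := by
    intro e i u; funext ω; simp [Function.comp, hpath]
  have hf_ident : ∀ (e : Fin p × Fin q) (i : ℕ) (u : ℝ),
      IdentDistrib (fun ω => Ktilde i u ω e.1 e.2 * lam i u ω)
        (fun ω => Ktilde 0 u ω e.1 e.2 * lam 0 u ω) μ μ := by
    intro e i u
    have h := (hpath_id i).comp (hF_meas e u)
    rwa [hf_eval e i u, hf_eval e 0 u] at h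
  have hf_indep : ∀ (e : Fin p × Fin q) (u : ℝ),
      Pairwise (Function.onFun (IndepFun · · μ) fun (i : ℕ) ω => Ktilde i u ω e.1 e.2 * lam i u ω) := by
    intro e u i j hij
    have h := (hpath_indep i j hij).comp (hF_meas e u) (hF_meas e u)
    rw [hf_eval e i u, hf_eval e j u] at h
    exact h
  -- the uniform bound
  have hbd : ∀ᵐ ω ∂μ, ∀ (e : Fin p × Fin q) (i : ℕ), ∀ u ∈ Icc (0:ℝ) τ,
      |Ktilde i u ω e.1 e.2 * lam i u ω| ≤ C' * lam i u ω := by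
    filter_upwards [Ktilde_bdd] with ω hω e i u hu
    rw [abs_mul, abs_of_nonneg (hlam_nonneg i u ω)]
    refine mul_le_mul_of_nonneg_right ?_ (hlam_nonneg i u ω)
    calc |Ktilde i u ω e.1 e.2| = ‖Ktilde i u ω e.1 e.2‖ := (Real.norm_eq_abs _).symm
      _ ≤ ‖Ktilde i u ω e.1‖ := norm_le_pi_norm _ e.2
      _ ≤ ‖Ktilde i u ω‖ := norm_le_pi_norm _ e.1
      _ ≤ C := hω i u hu
      _ ≤ C' := le_max_left _ _
  have hLam_fin := UniformLLNAux.lam_fin μ τ hτ (lam 0) (hlam_nonneg 0) (hlam_meas 0)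
    (hlam_intble 0) hΛ_int
  -- per-entry core convergence
  have hcoreE : ∀ e : Fin p × Fin q, Tendsto (fun n : ℕ => ∫⁻ u in Ioc (0:ℝ) τ,
      ∫⁻ ω, ENNReal.ofReal |((n:ℝ)⁻¹ * ∑ i ∈ Finset.range n, Ktilde i u ω e.1 e.2 * lam i u ω - ∫ ω', Ktilde 0 u ω' e.1 e.2 * lam 0 u ω' ∂μ)| ∂μ ∂volume) atTop (𝓝 0) := by
    intro e
    exact UniformLLNAux.core μ τ hτ (fun i u ω => Ktilde i u ω e.1 e.2 * lam i u ω)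
      (hf_meas e) lam hlam_nonneg hlam_meas C' hC'
      (by filter_upwards [hbd] with ω h i u hu using h e i u hu)
      (hf_indep e) (hf_ident e) hlam_ident hLam_fin
  -- integrability of the mean function
  have hφ_int : ∀ e : Fin p × Fin q,
      IntegrableOn (fun u => ∫ ω', Ktilde 0 u ω' e.1 e.2 * lam 0 u ω' ∂μ)
        (Ioc (0:ℝ) τ) volume := by
    intro e
    exact UniformLLNAux.phi_integrableOn μ τ
      (fun u ω => Ktilde 0 u ω e.1 e.2 * lam 0 u ω) (hf_meas e 0)
      (lam 0) (hlam_nonneg 0) (hlam_meas 0) C' hC'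
      (by filter_upwards [hbd] with ω h u hu using h e 0 u hu) hLam_fin
  -- measurability of the deviation process
  have hφ_sm : ∀ e : Fin p × Fin q,
      StronglyMeasurable fun u : ℝ => ∫ ω', Ktilde 0 u ω' e.1 e.2 * lam 0 u ω' ∂μ :=
    fun e => (hf_meas e 0).stronglyMeasurable.integral_prod_right'
  have hg_meas : ∀ (e : Fin p × Fin q) (n : ℕ),
      Measurable fun x : ℝ × Ω => ((n:ℝ)⁻¹ * ∑ i ∈ Finset.range n,
        Ktilde i x.1 x.2 e.1 e.2 * lam i x.1 x.2
        - ∫ ω', Ktilde 0 x.1 ω' e.1 e.2 * lam 0 x.1 ω' ∂μ) := fun e n =>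
    (measurable_const.mul (Finset.measurable_sum _ fun i _ => hf_meas e i)).sub
      ((hφ_sm e).measurable.comp measurable_fst)
  have hg_sec_u : ∀ (e : Fin p × Fin q) (n : ℕ) (ω : Ω),
      Measurable fun u : ℝ => ENNReal.ofReal |((n:ℝ)⁻¹ * ∑ i ∈ Finset.range n, Ktilde i u ω e.1 e.2 * lam i u ω - ∫ ω', Ktilde 0 u ω' e.1 e.2 * lam 0 u ω' ∂μ)| := fun e n ω =>
    ENNReal.measurable_ofReal.comp (((hg_meas e n).comp
      (measurable_id.prodMk measurable_const)).abs)
  have hg_sec_om : ∀ (e : Fin p × Fin q) (n : ℕ) (u : ℝ),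
      Measurable fun ω : Ω => ENNReal.ofReal |((n:ℝ)⁻¹ * ∑ i ∈ Finset.range n, Ktilde i u ω e.1 e.2 * lam i u ω - ∫ ω', Ktilde 0 u ω' e.1 e.2 * lam 0 u ω' ∂μ)| := fun e n u =>
    ENNReal.measurable_ofReal.comp (((hg_meas e n).comp
      (measurable_const.prodMk measurable_id)).abs)
  have hGmeas : ∀ (e : Fin p × Fin q) (n : ℕ),
      Measurable fun u : ℝ => ∫⁻ ω, ENNReal.ofReal |((n:ℝ)⁻¹ * ∑ i ∈ Finset.range n, Ktilde i u ω e.1 e.2 * lam i u ω - ∫ ω', Ktilde 0 u ω' e.1 e.2 * lam 0 u ω' ∂μ)| ∂μ := fun e n =>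
    Measurable.lintegral_prod_right' (ENNReal.measurable_ofReal.comp ((hg_meas e n).abs))
  -- the dominating random variable
  set H : ℕ → Ω → ℝ≥0∞ := fun n ω => ∫⁻ u in Ioc (0:ℝ) τ,
      ∑ e : Fin p × Fin q, ENNReal.ofReal |((n:ℝ)⁻¹ * ∑ i ∈ Finset.range n, Ktilde i u ω e.1 e.2 * lam i u ω - ∫ ω', Ktilde 0 u ω' e.1 e.2 * lam 0 u ω' ∂μ)| ∂volume with hHdef
  have hH_meas : ∀ n, Measurable (H n) := by
    intro n
    have hj : Measurable fun x : Ω × ℝ =>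
        ∑ e : Fin p × Fin q, ENNReal.ofReal |((n:ℝ)⁻¹ * ∑ i ∈ Finset.range n, Ktilde i x.2 x.1 e.1 e.2 * lam i x.2 x.1 - ∫ ω', Ktilde 0 x.2 ω' e.1 e.2 * lam 0 x.2 ω' ∂μ)| :=
      Finset.measurable_sum _ fun e _ =>
        ENNReal.measurable_ofReal.comp (((hg_meas e n).comp measurable_swap).abs)
    exact Measurable.lintegral_prod_right' hj
  have hswap : ∀ n, ∫⁻ ω, H n ω ∂μ = ∑ e : Fin p × Fin q,
      ∫⁻ u in Ioc (0:ℝ) τ, ∫⁻ ω, ENNReal.ofReal |((n:ℝ)⁻¹ * ∑ i ∈ Finset.range n, Ktilde i u ω e.1 e.2 * lam i u ω - ∫ ω', Ktilde 0 u ω' e.1 e.2 * lam 0 u ω' ∂μ)| ∂μ ∂volume := by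
    intro n
    rw [hHdef]
    rw [lintegral_lintegral_swap (Finset.measurable_sum
      (Finset.univ : Finset (Fin p × Fin q)) (fun e _ =>
        ENNReal.measurable_ofReal.comp (((hg_meas e n).comp measurable_swap).abs))).aemeasurable]
    calc ∫⁻ u in Ioc (0:ℝ) τ, ∫⁻ ω, ∑ e : Fin p × Fin q, ENNReal.ofReal |((n:ℝ)⁻¹ * ∑ i ∈ Finset.range n, Ktilde i u ω e.1 e.2 * lam i u ω - ∫ ω', Ktilde 0 u ω' e.1 e.2 * lam 0 u ω' ∂μ)| ∂μ ∂volume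
        = ∫⁻ u in Ioc (0:ℝ) τ, ∑ e : Fin p × Fin q,
            ∫⁻ ω, ENNReal.ofReal |((n:ℝ)⁻¹ * ∑ i ∈ Finset.range n, Ktilde i u ω e.1 e.2 * lam i u ω - ∫ ω', Ktilde 0 u ω' e.1 e.2 * lam 0 u ω' ∂μ)| ∂μ ∂volume :=
          lintegral_congr fun u => lintegral_finset_sum _ fun e _ => hg_sec_om e n u
      _ = ∑ e : Fin p × Fin q, ∫⁻ u in Ioc (0:ℝ) τ,
            ∫⁻ ω, ENNReal.ofReal |((n:ℝ)⁻¹ * ∑ i ∈ Finset.range n, Ktilde i u ω e.1 e.2 * lam i u ω - ∫ ω', Ktilde 0 u ω' e.1 e.2 * lam 0 u ω' ∂μ)| ∂μ ∂volume :=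
          lintegral_finset_sum _ fun e _ => hGmeas e n
  have hεE : ENNReal.ofReal ε ≠ 0 := (ENNReal.ofReal_pos.mpr hε).ne'
  refine tendsto_of_tendsto_of_tendsto_of_le_of_le (g := fun _ : ℕ => (0:ℝ≥0∞))
    (h := fun n : ℕ => (∫⁻ ω, H n ω ∂μ) / ENNReal.ofReal ε)
    tendsto_const_nhds ?_ (fun n => zero_le) (fun n => ?_)
  · -- the upper bound tends to zero
    have h1 : Tendsto (fun n : ℕ => ∫⁻ ω, H n ω ∂μ) atTop (𝓝 0) := by
      have h2 := tendsto_finset_sum (Finset.univ : Finset (Fin p × Fin q))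
        (fun e _ => hcoreE e)
      simp only [Finset.sum_const_zero] at h2
      refine Tendsto.congr (fun n => (hswap n).symm) h2
    have h3 := ENNReal.Tendsto.mul_const h1
      (Or.inr (ENNReal.inv_ne_top.mpr hεE))
    simp only [zero_mul] at h3
    simpa [div_eq_mul_inv] using h3
  · -- Markov / Chebyshev step with the a.e. inclusion of events
    refine le_trans (measure_mono_ae ?_)
      (meas_ge_le_lintegral_div (hH_meas n).aemeasurable hεE ENNReal.ofReal_ne_top)
    filter_upwards [hbd, ae_all_iff.2 hlam_intble] with ω hb hlamI
    intro hmem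
    obtain ⟨t, ht, hεt⟩ := hmem
    show ENNReal.ofReal ε ≤ H n ω
    by_cases hfin : H n ω = ⊤
    · rw [hfin]; exact le_top
    have hsub' : Ioc (0:ℝ) t ⊆ Ioc (0:ℝ) τ := Ioc_subset_Ioc_right ht.2
    have hlam_int : ∀ i, IntegrableOn (fun u => lam i u ω) (Ioc (0:ℝ) τ) volume := fun i =>
      (intervalIntegrable_iff_integrableOn_Ioc_of_le hτ.le).mp (hlamI i)
    have hf_sec_meas : ∀ (e : Fin p × Fin q) (i : ℕ),
        Measurable fun u => Ktilde i u ω e.1 e.2 * lam i u ω := fun e i =>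
      (hf_meas e i).comp (measurable_id.prodMk measurable_const)
    have hfInt : ∀ (e : Fin p × Fin q) (i : ℕ),
        IntegrableOn (fun u => Ktilde i u ω e.1 e.2 * lam i u ω) (Ioc (0:ℝ) τ) volume := by
      intro e i
      refine Integrable.mono' ((hlam_int i).const_mul C')
        (hf_sec_meas e i).aestronglyMeasurable ?_
      filter_upwards [ae_restrict_mem measurableSet_Ioc] with u hu
      rw [Real.norm_eq_abs]
      exact hb e i u ⟨hu.1.le, hu.2⟩
    have hgInt : ∀ e : Fin p × Fin q,
        IntegrableOn (fun u => ((n:ℝ)⁻¹ * ∑ i ∈ Finset.range n, Ktilde i u ω e.1 e.2 * lam i u ω - ∫ ω', Ktilde 0 u ω' e.1 e.2 * lam 0 u ω' ∂μ)) (Ioc (0:ℝ) τ) volume := fun e =>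
      ((integrable_finset_sum _ fun i _ => hfInt e i).const_mul _).sub (hφ_int e)
    have hent : ∀ e : Fin p × Fin q,
        ((n:ℝ)⁻¹ * ∑ i ∈ Finset.range n,
            ∫ u in (0:ℝ)..t, Ktilde i u ω e.1 e.2 * lam i u ω)
          - ∫ u in (0:ℝ)..t, ∫ ω', Ktilde 0 u ω' e.1 e.2 * lam 0 u ω' ∂μ
        = ∫ u in Ioc (0:ℝ) t, ((n:ℝ)⁻¹ * ∑ i ∈ Finset.range n, Ktilde i u ω e.1 e.2 * lam i u ω - ∫ ω', Ktilde 0 u ω' e.1 e.2 * lam 0 u ω' ∂μ) ∂volume := by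
      intro e
      symm
      rw [integral_sub ((integrable_finset_sum _ fun i _ =>
          (hfInt e i).mono_set hsub').const_mul _) ((hφ_int e).mono_set hsub'),
        integral_const_mul, integral_finset_sum _ fun i _ => (hfInt e i).mono_set hsub']
      simp only [intervalIntegral.integral_of_le ht.1]
    have habs : ∀ e : Fin p × Fin q,
        |((n:ℝ)⁻¹ * ∑ i ∈ Finset.range n,
            ∫ u in (0:ℝ)..t, Ktilde i u ω e.1 e.2 * lam i u ω)
          - ∫ u in (0:ℝ)..t, ∫ ω', Ktilde 0 u ω' e.1 e.2 * lam 0 u ω' ∂μ|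
        ≤ (∫⁻ u in Ioc (0:ℝ) τ, ENNReal.ofReal |((n:ℝ)⁻¹ * ∑ i ∈ Finset.range n, Ktilde i u ω e.1 e.2 * lam i u ω - ∫ ω', Ktilde 0 u ω' e.1 e.2 * lam 0 u ω' ∂μ)| ∂volume).toReal := by
      intro e
      rw [hent e]
      calc |∫ u in Ioc (0:ℝ) t, ((n:ℝ)⁻¹ * ∑ i ∈ Finset.range n, Ktilde i u ω e.1 e.2 * lam i u ω - ∫ ω', Ktilde 0 u ω' e.1 e.2 * lam 0 u ω' ∂μ) ∂volume|
          ≤ ∫ u in Ioc (0:ℝ) t, |((n:ℝ)⁻¹ * ∑ i ∈ Finset.range n, Ktilde i u ω e.1 e.2 * lam i u ω - ∫ ω', Ktilde 0 u ω' e.1 e.2 * lam 0 u ω' ∂μ)| ∂volume := by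
            rw [← Real.norm_eq_abs]
            exact (norm_integral_le_integral_norm _).trans (le_of_eq
              (integral_congr_ae (ae_of_all _ fun u => Real.norm_eq_abs _)))
        _ ≤ ∫ u in Ioc (0:ℝ) τ, |((n:ℝ)⁻¹ * ∑ i ∈ Finset.range n, Ktilde i u ω e.1 e.2 * lam i u ω - ∫ ω', Ktilde 0 u ω' e.1 e.2 * lam 0 u ω' ∂μ)| ∂volume :=
            setIntegral_mono_set (hgInt e).abs (ae_of_all _ fun u => abs_nonneg _)
              (HasSubset.Subset.eventuallyLE hsub')
        _ = (∫⁻ u in Ioc (0:ℝ) τ, ENNReal.ofReal |((n:ℝ)⁻¹ * ∑ i ∈ Finset.range n, Ktilde i u ω e.1 e.2 * lam i u ω - ∫ ω', Ktilde 0 u ω' e.1 e.2 * lam 0 u ω' ∂μ)| ∂volume).toReal :=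
            integral_eq_lintegral_of_nonneg_ae (ae_of_all _ fun u => abs_nonneg _)
              (hgInt e).abs.aestronglyMeasurable
    have hH_sum : H n ω = ∑ e : Fin p × Fin q,
        ∫⁻ u in Ioc (0:ℝ) τ, ENNReal.ofReal |((n:ℝ)⁻¹ * ∑ i ∈ Finset.range n, Ktilde i u ω e.1 e.2 * lam i u ω - ∫ ω', Ktilde 0 u ω' e.1 e.2 * lam 0 u ω' ∂μ)| ∂volume := by
      rw [hHdef]
      exact lintegral_finset_sum _ fun e _ => hg_sec_u e n ω
    have hne : ∀ e ∈ (Finset.univ : Finset (Fin p × Fin q)),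
        (∫⁻ u in Ioc (0:ℝ) τ, ENNReal.ofReal |((n:ℝ)⁻¹ * ∑ i ∈ Finset.range n, Ktilde i u ω e.1 e.2 * lam i u ω - ∫ ω', Ktilde 0 u ω' e.1 e.2 * lam 0 u ω' ∂μ)| ∂volume) ≠ ⊤ := by
      intro e _ hc
      exact hfin (by rw [hH_sum]; exact ENNReal.sum_eq_top.mpr ⟨e, Finset.mem_univ e, hc⟩)
    refine ENNReal.ofReal_le_of_le_toReal ?_
    calc ε ≤ _ := hεt
      _ ≤ ∑ e : Fin p × Fin q, |((n:ℝ)⁻¹ * ∑ i ∈ Finset.range n,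
            ∫ u in (0:ℝ)..t, Ktilde i u ω e.1 e.2 * lam i u ω)
          - ∫ u in (0:ℝ)..t, ∫ ω', Ktilde 0 u ω' e.1 e.2 * lam 0 u ω' ∂μ| :=
          UniformLLNAux.pi_norm_le_sum_abs _
      _ ≤ ∑ e : Fin p × Fin q,
          (∫⁻ u in Ioc (0:ℝ) τ, ENNReal.ofReal |((n:ℝ)⁻¹ * ∑ i ∈ Finset.range n, Ktilde i u ω e.1 e.2 * lam i u ω - ∫ ω', Ktilde 0 u ω' e.1 e.2 * lam 0 u ω' ∂μ)| ∂volume).toReal :=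
          Finset.sum_le_sum fun e _ => habs e
      _ = (H n ω).toReal := by rw [hH_sum, ENNReal.toReal_sum hne]
end

section
/- For all 0 ≤ s ≤ t ≤ τ, E[D^ε(t) | F₂(s)] = D^ε(s) + n^{−1/2} · E[G₁ · 1{|G₁| ≥ ε √n}] · Σ_{i=1}^n (Nᵢ(t) − Nᵢ(s)) almost surely. Consequently, if E[G₁ · 1{|G₁| ≥ ε √n}] ≠ 0 and P(Σ_{i=1}^n (Nᵢ(t) − Nᵢ(s)) ≥ 1) > 0 for some 0 ≤ s < t ≤ τ, then D^ε is not a martingale with respect to (F₂(t))_{t∈[0,τ]}; thus for multiplier distributions with E[G₁·1{|G₁| ≥ ε√n}] ≠ 0 (for instance asymmetric zero-mean distributions), the ε-jump process of the wild bootstrap martingale fails the martingale property (Example 3.1). -/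
open MeasureTheory ProbabilityTheory Filter Set

set_option maxHeartbeats 1000000 in
/-- **Example 3.1 (Part I).**
For the ε-jump process `D^ε(t) = n^{-1/2} Σᵢ Gᵢ 1{|Gᵢ| ≥ ε√n} Nᵢ(t)` of the
wild bootstrap martingale `D*(t) = n^{-1/2} Σᵢ Gᵢ Nᵢ(t)`, one has, for all
`0 ≤ s ≤ t ≤ τ`,
`E[D^ε(t) | F₂(s)] = D^ε(s) + n^{-1/2} E[G₁ 1{|G₁| ≥ ε√n}] Σᵢ (Nᵢ(t) − Nᵢ(s))`
a.s.; consequently, if `E[G₁ 1{|G₁| ≥ ε√n}] ≠ 0` and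
`P(Σᵢ(Nᵢ(t) − Nᵢ(s)) ≥ 1) > 0` for some `0 ≤ s < t ≤ τ`, then `D^ε` is not a
martingale with respect to `(F₂(t))_{t∈[0,τ]}`. -/
theorem epsilon_jump_process_not_martingale
    {Ω : Type*}
    -- the data σ-algebra 𝒟
    (𝒟 : MeasurableSpace Ω) [m0 : MeasurableSpace Ω] (h𝒟 : 𝒟 ≤ m0)
    (μ : Measure Ω) [IsProbabilityMeasure μ]
    (τ : ℝ) (hτ : 0 < τ) (n : ℕ) (hn : 0 < n) (ε : ℝ) (hε : 0 < ε)
    -- single-jump times, 𝒟-measurable, positive, a.s. pairwise distinct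
    (T : Fin n → Ω → ℝ)
    (hT_meas : ∀ i, Measurable[𝒟] (T i))
    (hT_pos : ∀ i ω, 0 < T i ω)
    (hT_distinct : ∀ᵐ ω ∂μ, ∀ i j : Fin n, i ≠ j → T i ω ≠ T j ω)
    -- counting processes with at most one jump each
    (N : Fin n → ℝ → Ω → ℝ)
    (hN : ∀ i t ω, N i t ω = if T i ω ≤ t then (1 : ℝ) else 0)
    -- i.i.d. integrable zero-mean multipliers, jointly independent of 𝒟
    (G : Fin n → Ω → ℝ)
    (hG_meas : ∀ i, Measurable (G i))
    (hG_int : ∀ i, Integrable (G i) μ)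
    (hG_indep : iIndep (fun o : Option (Fin n) =>
        o.elim 𝒟 fun i => MeasurableSpace.comap (G i) inferInstance) μ)
    (hG_ident : ∀ i j, Measure.map (G i) μ = Measure.map (G j) μ)
    (hG_mean : ∀ i, ∫ ω, G i ω ∂μ = 0)
    -- the wild bootstrap filtration F₂(t)
    (F₂ : ℝ → MeasurableSpace Ω)
    (hF₂ : ∀ t, F₂ t = 𝒟 ⊔ ⨆ i : Fin n,
        MeasurableSpace.comap
          (fun ω => G i ω * (if T i ω ≤ t then (1 : ℝ) else 0)) inferInstance)
    -- the ε-jump process of the wild bootstrap martingale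
    (Dε : ℝ → Ω → ℝ)
    (hDε : ∀ t ω, Dε t ω = (Real.sqrt n)⁻¹ *
        ∑ i, G i ω * (if ε * Real.sqrt n ≤ |G i ω| then (1 : ℝ) else 0) *
          N i t ω) :
    (∀ s t : ℝ, 0 ≤ s → s ≤ t → t ≤ τ →
        μ[Dε t | F₂ s] =ᵐ[μ]
          fun ω => Dε s ω + (Real.sqrt n)⁻¹ *
            (∫ ω', G ⟨0, hn⟩ ω' *
                (if ε * Real.sqrt n ≤ |G ⟨0, hn⟩ ω'| then (1 : ℝ) else 0) ∂μ) *
            ∑ i, (N i t ω - N i s ω)) ∧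
    ((∫ ω', G ⟨0, hn⟩ ω' *
          (if ε * Real.sqrt n ≤ |G ⟨0, hn⟩ ω'| then (1 : ℝ) else 0) ∂μ) ≠ 0 →
      (∃ s t : ℝ, 0 ≤ s ∧ s < t ∧ t ≤ τ ∧
          0 < μ {ω | 1 ≤ ∑ i, (N i t ω - N i s ω)}) →
      ¬ (∀ s t : ℝ, 0 ≤ s → s ≤ t → t ≤ τ →
          μ[Dε t | F₂ s] =ᵐ[μ] Dε s)) := by

  classical
  obtain ⟨h, hh_def⟩ : ∃ h : ℝ → ℝ,
      h = fun x => x * (if ε * Real.sqrt n ≤ |x| then (1 : ℝ) else 0) := ⟨_, rfl⟩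
  have hsqrt_pos : (0 : ℝ) < Real.sqrt n := Real.sqrt_pos.mpr (by exact_mod_cast hn)
  have hhmeas : Measurable h := by
    have : h = fun x => x * Set.indicator {x : ℝ | ε * Real.sqrt n ≤ |x|}
        (fun _ => (1 : ℝ)) x := by
      rw [hh_def]; funext x
      by_cases hx : ε * Real.sqrt n ≤ |x| <;> simp [Set.indicator_apply, hx]
    rw [this]
    exact measurable_id.mul
      (measurable_const.indicator (measurableSet_le measurable_const measurable_abs))
  have hhabs : ∀ x, |h x| ≤ |x| := by
    intro x; by_cases hx : ε * Real.sqrt n ≤ |x| <;> simp [hh_def, hx, abs_nonneg]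
  have hind_meas : ∀ (u : ℝ) (j : Fin n),
      Measurable[𝒟] (fun ω => if T j ω ≤ u then (1 : ℝ) else 0) := by
    intro u j
    have hset : MeasurableSet[𝒟] {ω | T j ω ≤ u} := (hT_meas j) measurableSet_Iic
    have : (fun ω => if T j ω ≤ u then (1 : ℝ) else 0)
        = Set.indicator {ω | T j ω ≤ u} (fun _ => (1 : ℝ)) := by
      funext ω; by_cases hω : T j ω ≤ u <;> simp [Set.indicator_apply, hω]
    rw [this]
    exact measurable_const.indicator hset
  have hF₂le : ∀ u, F₂ u ≤ m0 := by
    intro u; rw [hF₂]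
    refine sup_le h𝒟 (iSup_le fun j => ?_)
    exact measurable_iff_comap_le.mp
      ((hG_meas j).mul ((hind_meas u j).mono h𝒟 le_rfl))
  have hcomap_le : ∀ (u : ℝ) (j : Fin n),
      MeasurableSpace.comap
        (fun ω => G j ω * (if T j ω ≤ u then (1 : ℝ) else 0)) inferInstance ≤ F₂ u := by
    intro u j; rw [hF₂]
    exact le_sup_of_le_right (le_iSup (fun i : Fin n => MeasurableSpace.comap
      (fun ω => G i ω * (if T i ω ≤ u then (1 : ℝ) else 0)) inferInstance) j)
  have hhG_int : ∀ i, Integrable (fun ω => h (G i ω)) μ := fun i =>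
    (hG_int i).abs.mono' (hhmeas.comp (hG_meas i)).aestronglyMeasurable
      (Filter.Eventually.of_forall fun ω => by
        simpa [Real.norm_eq_abs] using hhabs (G i ω))
  have hci : ∀ i : Fin n, ∫ ω, h (G i ω) ∂μ = ∫ ω, h (G ⟨0, hn⟩ ω) ∂μ := by
    intro i
    have h1 : ∫ ω, h (G i ω) ∂μ = ∫ x, h x ∂(Measure.map (G i) μ) :=
      (integral_map (hG_meas i).aemeasurable hhmeas.aestronglyMeasurable).symm
    have h2 : ∫ x, h x ∂(Measure.map (G ⟨0, hn⟩) μ) = ∫ ω, h (G ⟨0, hn⟩ ω) ∂μ :=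
      integral_map (hG_meas _).aemeasurable hhmeas.aestronglyMeasurable
    rw [h1, hG_ident i ⟨0, hn⟩, h2]
  have hc_eq : (∫ ω', G ⟨0, hn⟩ ω' *
      (if ε * Real.sqrt n ≤ |G ⟨0, hn⟩ ω'| then (1 : ℝ) else 0) ∂μ)
      = ∫ ω, h (G ⟨0, hn⟩ ω) ∂μ := by rw [hh_def]
  have hNabs : ∀ (i : Fin n) (u : ℝ) (ω : Ω), |N i u ω| ≤ 1 := by
    intro i u ω; rw [hN]; by_cases hTu : T i ω ≤ u <;> simp [hTu]
  have hN_meas : ∀ (i : Fin n) (u : ℝ), Measurable (N i u) := by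
    intro i u
    have : N i u = fun ω => if T i ω ≤ u then (1 : ℝ) else 0 := funext fun ω => hN i u ω
    rw [this]; exact (hind_meas u i).mono h𝒟 le_rfl
  have hDε_int : ∀ u, Integrable (Dε u) μ := by
    intro u
    have hDu : Dε u = fun ω => (Real.sqrt n)⁻¹ * ∑ i, h (G i ω) * N i u ω := by
      funext ω; rw [hDε, hh_def]
    rw [hDu]
    refine (integrable_finset_sum Finset.univ fun i _ => ?_).const_mul _
    refine (hG_int i).abs.mono'
      (((hhmeas.comp (hG_meas i)).mul (hN_meas i u)).aestronglyMeasurable)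
      (Filter.Eventually.of_forall fun ω => ?_)
    rw [Real.norm_eq_abs, abs_mul]
    calc |h (G i ω)| * |N i u ω| ≤ |G i ω| * 1 :=
          mul_le_mul (hhabs _) (hNabs i u ω) (abs_nonneg _) (abs_nonneg _)
      _ = |G i ω| := mul_one _
  have hDε_sm : ∀ u, StronglyMeasurable[F₂ u] (Dε u) := by
    intro u
    have hDu : Dε u = fun ω =>
        (Real.sqrt n)⁻¹ * ∑ i, h (G i ω * (if T i ω ≤ u then (1 : ℝ) else 0)) := by
      funext ω
      rw [hDε]
      congr 1
      refine Finset.sum_congr rfl fun i _ => ?_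
      rw [hN, hh_def]
      by_cases hTu : T i ω ≤ u <;> simp [hTu]
    rw [hDu]
    refine Measurable.stronglyMeasurable ?_
    refine Measurable.const_mul ?_ _
    refine Finset.measurable_sum _ fun i _ => ?_
    exact (hhmeas.comp (comap_measurable _)).mono (hcomap_le u i) le_rfl
  -- Part I
  have part1 : ∀ s t : ℝ, 0 ≤ s → s ≤ t → t ≤ τ →
      μ[Dε t | F₂ s] =ᵐ[μ]
        fun ω => Dε s ω + (Real.sqrt n)⁻¹ *
          (∫ ω', G ⟨0, hn⟩ ω' *
              (if ε * Real.sqrt n ≤ |G ⟨0, hn⟩ ω'| then (1 : ℝ) else 0) ∂μ) *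
          ∑ i, (N i t ω - N i s ω) := by
    intro s t hs hst htτ
    haveI : SigmaFinite (μ.trim (hF₂le s)) := inferInstance
    obtain ⟨A, hA_def⟩ : ∃ A : Fin n → Ω → ℝ,
        A = fun i ω => N i t ω - N i s ω := ⟨_, rfl⟩
    have hA_ind : ∀ (i : Fin n) (ω : Ω), A i ω
        = (if T i ω ≤ t then (1 : ℝ) else 0) - (if T i ω ≤ s then (1 : ℝ) else 0) := by
      intro i ω; rw [hA_def]; simp only [hN]
    have hA_meas𝒟 : ∀ i, Measurable[𝒟] (A i) := by
      intro i
      have : A i = fun ω =>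
          (if T i ω ≤ t then (1 : ℝ) else 0) - (if T i ω ≤ s then (1 : ℝ) else 0) :=
        funext fun ω => hA_ind i ω
      rw [this]; exact (hind_meas t i).sub (hind_meas s i)
    have hA_abs : ∀ i ω, |A i ω| ≤ 1 := by
      intro i ω; rw [hA_ind]
      by_cases h1 : T i ω ≤ s
      · simp [h1, h1.trans hst]
      · by_cases h2 : T i ω ≤ t <;> simp [h1, h2]
    have hA_zero : ∀ i ω, ¬ s < T i ω → A i ω = 0 := by
      intro i ω hω
      rw [hA_ind, if_pos ((not_lt.mp hω).trans hst), if_pos (not_lt.mp hω), sub_self]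
    have hfA_int : ∀ i, Integrable (fun ω => h (G i ω) * A i ω) μ := by
      intro i
      refine (hG_int i).abs.mono'
        (((hhmeas.comp (hG_meas i)).mul ((hA_meas𝒟 i).mono h𝒟 le_rfl)).aestronglyMeasurable)
        (Filter.Eventually.of_forall fun ω => ?_)
      rw [Real.norm_eq_abs, abs_mul]
      calc |h (G i ω)| * |A i ω| ≤ |G i ω| * 1 :=
            mul_le_mul (hhabs _) (hA_abs i ω) (abs_nonneg _) (abs_nonneg _)
        _ = |G i ω| := mul_one _
    -- the key conditional expectation computation
    have key : ∀ i : Fin n, μ[fun ω => h (G i ω) * A i ω | F₂ s] =ᵐ[μ]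
        fun ω => (∫ ω', h (G i ω') ∂μ) * A i ω := by
      intro i
      obtain ⟨E, hE_def⟩ : ∃ E : Set Ω, E = {ω | s < T i ω} := ⟨_, rfl⟩
      obtain ⟨m', hm'_def⟩ : ∃ m' : MeasurableSpace Ω,
          m' = 𝒟 ⊔ ⨆ j ∈ ({i}ᶜ : Set (Fin n)), MeasurableSpace.comap
            (fun ω => G j ω * (if T j ω ≤ s then (1 : ℝ) else 0)) inferInstance := ⟨_, rfl⟩
      letI : MeasurableSpace Ω := m0
      have h𝒟m' : 𝒟 ≤ m' := hm'_def ▸ le_sup_left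
      have hm'le : m' ≤ m0 := by
        rw [hm'_def]
        refine sup_le h𝒟 (iSup_le fun j => iSup_le fun _ => ?_)
        exact measurable_iff_comap_le.mp ((hG_meas j).mul ((hind_meas s j).mono h𝒟 le_rfl))
      -- independence of m' from σ(G i)
      have hindep : Indep m' (MeasurableSpace.comap (G i) inferInstance) μ := by
        have hκle : ∀ o : Option (Fin n),
            (Option.elim o 𝒟 fun j => MeasurableSpace.comap (G j) inferInstance) ≤ m0 := by
          intro o; cases o with
          | none => exact h𝒟
          | some j => exact measurable_iff_comap_le.mp (hG_meas j)
        have hbig := indep_iSup_of_disjoint hκle hG_indep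
          (disjoint_compl_left : Disjoint (({some i} : Set (Option (Fin n)))ᶜ) {some i})
        have hsingle : (⨆ o ∈ ({some i} : Set (Option (Fin n))),
            (Option.elim o 𝒟 fun j => MeasurableSpace.comap (G j) inferInstance))
            = MeasurableSpace.comap (G i) inferInstance := by simp
        rw [hsingle] at hbig
        have hm'le' : m' ≤ ⨆ o ∈ (({some i} : Set (Option (Fin n)))ᶜ),
            (Option.elim o 𝒟 fun j => MeasurableSpace.comap (G j) inferInstance) := by
          rw [hm'_def]
          refine sup_le ?_ (iSup_le fun j => iSup_le fun hj => ?_)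
          · exact le_biSup
              (fun o => Option.elim o 𝒟 fun j => MeasurableSpace.comap (G j) inferInstance)
              (show (none : Option (Fin n)) ∈ ({some i} : Set (Option (Fin n)))ᶜ by simp)
          · have h1 : MeasurableSpace.comap
                (fun ω => G j ω * (if T j ω ≤ s then (1 : ℝ) else 0)) inferInstance
                ≤ 𝒟 ⊔ MeasurableSpace.comap (G j) inferInstance :=
              measurable_iff_comap_le.mp
                (Measurable.mul ((comap_measurable (G j)).mono le_sup_right le_rfl)
                  ((hind_meas s j).mono le_sup_left le_rfl))
            refine h1.trans (sup_le ?_ ?_)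
            · exact le_biSup
                (fun o => Option.elim o 𝒟 fun j => MeasurableSpace.comap (G j) inferInstance)
                (show (none : Option (Fin n)) ∈ ({some i} : Set (Option (Fin n)))ᶜ by simp)
            · refine le_biSup
                (fun o => Option.elim o 𝒟 fun j => MeasurableSpace.comap (G j) inferInstance)
                (show (some j : Option (Fin n)) ∈ ({some i} : Set (Option (Fin n)))ᶜ from ?_)
              simpa using hj
        rw [Indep_iff] at hbig ⊢
        intro t1 t2 ht1 ht2
        exact hbig t1 t2 (hm'le' t1 ht1) ht2
      -- trace of F₂ s on E is contained in the trace of m'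
      have htrace : ∀ B : Set Ω, MeasurableSet[F₂ s] B →
          ∃ C : Set Ω, MeasurableSet[m'] C ∧ B ∩ E = C ∩ E := by
        intro B hB
        let m'' : MeasurableSpace Ω :=
          { MeasurableSet' := fun B => ∃ C, MeasurableSet[m'] C ∧ B ∩ E = C ∩ E
            measurableSet_empty := ⟨∅, (@MeasurableSet.empty Ω m'), by simp⟩
            measurableSet_compl := by
              rintro B ⟨C, hC, hBC⟩
              refine ⟨Cᶜ, hC.compl, ?_⟩
              ext x
              simp only [Set.mem_inter_iff, Set.mem_compl_iff]
              constructor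
              · rintro ⟨hxB, hxE⟩
                refine ⟨fun hxC => hxB ?_, hxE⟩
                have hx := Set.ext_iff.mp hBC x
                simp only [Set.mem_inter_iff, hxE, and_true] at hx
                exact hx.mpr hxC
              · rintro ⟨hxC, hxE⟩
                refine ⟨fun hxB => hxC ?_, hxE⟩
                have hx := Set.ext_iff.mp hBC x
                simp only [Set.mem_inter_iff, hxE, and_true] at hx
                exact hx.mp hxB
            measurableSet_iUnion := by
              intro f hf
              choose C hC hBC using hf
              exact ⟨⋃ k, C k, MeasurableSet.iUnion hC, by
                rw [Set.iUnion_inter, Set.iUnion_inter]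
                exact Set.iUnion_congr hBC⟩ }
        have hle : F₂ s ≤ m'' := by
          rw [hF₂]
          refine sup_le ?_ (iSup_le fun j => ?_)
          · intro S hS
            exact ⟨S, h𝒟m' S hS, rfl⟩
          · intro S hS
            obtain ⟨Bb, hBb, rfl⟩ := hS
            by_cases hji : j = i
            · subst hji
              have hz : ∀ ω ∈ E, G j ω * (if T j ω ≤ s then (1 : ℝ) else 0) = 0 := by
                intro ω hω
                rw [hE_def] at hω
                rw [if_neg (not_le.mpr hω), mul_zero]
              by_cases h0 : (0 : ℝ) ∈ Bb
              · refine ⟨Set.univ, (@MeasurableSet.univ Ω m'), ?_⟩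
                ext x
                simp only [Set.mem_inter_iff, Set.mem_preimage, Set.univ_inter,
                  Set.mem_univ, true_and]
                exact ⟨fun hx => hx.2, fun hx => ⟨by rw [hz x hx]; exact h0, hx⟩⟩
              · refine ⟨∅, (@MeasurableSet.empty Ω m'), ?_⟩
                ext x
                simp only [Set.mem_inter_iff, Set.mem_preimage, Set.empty_inter,
                  Set.mem_empty_iff_false, iff_false, not_and]
                intro hxB hxE
                rw [hz x hxE] at hxB
                exact h0 hxB
            · refine ⟨_, ?_, rfl⟩
              have hle' : MeasurableSpace.comap
                  (fun ω => G j ω * (if T j ω ≤ s then (1 : ℝ) else 0)) inferInstance ≤ m' := by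
                rw [hm'_def]
                exact le_sup_of_le_right (le_biSup
                  (fun k : Fin n => MeasurableSpace.comap
                    (fun ω => G k ω * (if T k ω ≤ s then (1 : ℝ) else 0)) inferInstance)
                  (show j ∈ ({i}ᶜ : Set (Fin n)) by simpa using hji))
              exact hle' _ ⟨Bb, hBb, rfl⟩
        exact hle B hB
      -- integrability and measurability facts
      have hAint : Integrable (A i) μ :=
        (integrable_const (1 : ℝ)).mono' ((hA_meas𝒟 i).mono h𝒟 le_rfl).aestronglyMeasurable
          (Filter.Eventually.of_forall fun ω => by
            simpa [Real.norm_eq_abs] using hA_abs i ω)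
      have hg_meas' : StronglyMeasurable[F₂ s] (fun ω => (∫ ω', h (G i ω') ∂μ) * A i ω) := by
        have h𝒟F : 𝒟 ≤ F₂ s := by rw [hF₂]; exact le_sup_left
        exact (measurable_const.mul ((hA_meas𝒟 i).mono h𝒟F le_rfl)).stronglyMeasurable
      refine (ae_eq_condExp_of_forall_setIntegral_eq (hF₂le s) (hfA_int i)
        (fun B hB _ => (hAint.const_mul _).integrableOn)
        ?_ hg_meas'.aestronglyMeasurable).symm
      intro B hB _
      obtain ⟨C, hC, hBE⟩ := htrace B hB
      have hBm0 : MeasurableSet[m0] B := hF₂le s B hB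
      obtain ⟨ψ, hψ_def⟩ : ∃ ψ : Ω → ℝ,
          ψ = fun ω => A i ω * Set.indicator C (fun _ => (1 : ℝ)) ω := ⟨_, rfl⟩
      have hψm' : Measurable[m'] ψ := by
        rw [hψ_def]
        exact ((hA_meas𝒟 i).mono h𝒟m' le_rfl).mul (measurable_const.indicator hC)
      have hψabs : ∀ ω, |ψ ω| ≤ 1 := by
        intro ω
        simp only [hψ_def]
        rw [abs_mul]
        by_cases hω : ω ∈ C
        · simp only [Set.indicator_of_mem hω, abs_one, mul_one]
          exact hA_abs i ω
        · simp [Set.indicator_of_notMem hω]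
      have hψint : Integrable ψ μ :=
        (integrable_const (1 : ℝ)).mono' (hψm'.mono hm'le le_rfl).aestronglyMeasurable
          (Filter.Eventually.of_forall fun ω => by
            simpa [Real.norm_eq_abs] using hψabs ω)
      have hmem : ∀ ω ∈ E, (ω ∈ B ↔ ω ∈ C) := by
        intro ω hω
        have hx := Set.ext_iff.mp hBE ω
        simp only [Set.mem_inter_iff, hω, and_true] at hx
        exact hx
      have hAE : ∀ ω, ω ∉ E → A i ω = 0 := by
        intro ω hω
        refine hA_zero i ω ?_
        rw [hE_def] at hω
        exact hω
      have hpt1 : ∀ ω, Set.indicator B (fun ω => h (G i ω) * A i ω) ω = h (G i ω) * ψ ω := by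
        intro ω
        simp only [hψ_def]
        by_cases hωE : ω ∈ E
        · by_cases hωB : ω ∈ B
          · rw [Set.indicator_of_mem hωB, Set.indicator_of_mem ((hmem ω hωE).mp hωB), mul_one]
          · rw [Set.indicator_of_notMem hωB,
              Set.indicator_of_notMem (fun hc => hωB ((hmem ω hωE).mpr hc)), mul_zero, mul_zero]
        · simp [Set.indicator_apply, hAE ω hωE]
      have hpt2 : ∀ ω, Set.indicator B (fun ω => (∫ ω', h (G i ω') ∂μ) * A i ω) ω
          = (∫ ω', h (G i ω') ∂μ) * ψ ω := by
        intro ω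
        simp only [hψ_def]
        by_cases hωE : ω ∈ E
        · by_cases hωB : ω ∈ B
          · rw [Set.indicator_of_mem hωB, Set.indicator_of_mem ((hmem ω hωE).mp hωB), mul_one]
          · rw [Set.indicator_of_notMem hωB,
              Set.indicator_of_notMem (fun hc => hωB ((hmem ω hωE).mpr hc)), mul_zero, mul_zero]
        · simp [Set.indicator_apply, hAE ω hωE]
      have hIndepF : IndepFun (fun ω => h (G i ω)) ψ μ := by
        rw [indepFun_iff_measure_inter_preimage_eq_mul]
        intro s1 s2 hs1 hs2
        rw [Indep_iff] at hindep
        have h2' : MeasurableSet[m'] (ψ ⁻¹' s2) := hψm' hs2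
        have h1' : MeasurableSet[MeasurableSpace.comap (G i) inferInstance]
            ((fun ω => h (G i ω)) ⁻¹' s1) := ⟨h ⁻¹' s1, hhmeas hs1, rfl⟩
        rw [Set.inter_comm, hindep _ _ h2' h1', mul_comm]
      calc ∫ ω in B, (∫ ω', h (G i ω') ∂μ) * A i ω ∂μ
          = ∫ ω, Set.indicator B (fun ω => (∫ ω', h (G i ω') ∂μ) * A i ω) ω ∂μ :=
            (integral_indicator hBm0).symm
        _ = ∫ ω, (∫ ω', h (G i ω') ∂μ) * ψ ω ∂μ :=
            integral_congr_ae (Filter.Eventually.of_forall hpt2)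
        _ = (∫ ω', h (G i ω') ∂μ) * ∫ ω, ψ ω ∂μ := integral_const_mul _ _
        _ = ∫ ω, h (G i ω) * ψ ω ∂μ := by
            have hmul := hIndepF.integral_mul_eq_mul_integral (hhG_int i).aestronglyMeasurable hψint.aestronglyMeasurable
            simpa [Pi.mul_apply] using hmul.symm
        _ = ∫ ω, Set.indicator B (fun ω => h (G i ω) * A i ω) ω ∂μ :=
            (integral_congr_ae (Filter.Eventually.of_forall hpt1)).symm
        _ = ∫ ω in B, h (G i ω) * A i ω ∂μ := integral_indicator hBm0
    -- decomposition
    obtain ⟨gi, hgi_def⟩ : ∃ gi : Fin n → Ω → ℝ,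
        gi = fun i ω => (Real.sqrt n)⁻¹ * (h (G i ω) * A i ω) := ⟨_, rfl⟩
    have hgi_int : ∀ i, Integrable (gi i) μ := by
      intro i; rw [hgi_def]; exact (hfA_int i).const_mul _
    have hdecomp : Dε t = Dε s + ∑ i : Fin n, gi i := by
      funext ω
      rw [Pi.add_apply, hDε, hDε, Finset.sum_apply]
      simp only [hgi_def]
      rw [← Finset.mul_sum, ← mul_add, ← Finset.sum_add_distrib]
      congr 1
      refine Finset.sum_congr rfl fun i _ => ?_
      rw [hA_def, hh_def]
      ring
    have hDεs_ce : μ[Dε s|F₂ s] = Dε s :=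
      condExp_of_stronglyMeasurable (hF₂le s) (hDε_sm s) (hDε_int s)
    have hadd : μ[Dε t|F₂ s] =ᵐ[μ] μ[Dε s|F₂ s] + μ[∑ i : Fin n, gi i|F₂ s] := by
      rw [hdecomp]
      exact condExp_add (hDε_int s) (integrable_finset_sum' _ fun i _ => hgi_int i) (F₂ s)
    have hsum_ce : μ[∑ i : Fin n, gi i|F₂ s] =ᵐ[μ] ∑ i : Fin n, μ[gi i|F₂ s] :=
      condExp_finset_sum (fun i _ => hgi_int i) (F₂ s)
    have hgi_ce : ∀ i : Fin n, μ[gi i|F₂ s] =ᵐ[μ]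
        fun ω => (Real.sqrt n)⁻¹ * ((∫ ω', h (G i ω') ∂μ) * A i ω) := by
      intro i
      have hsm : gi i = (Real.sqrt n)⁻¹ • (fun ω => h (G i ω) * A i ω) := by
        rw [hgi_def]; funext ω; simp [smul_eq_mul]
      rw [hsm]
      refine (condExp_smul _ _ (F₂ s)).trans ?_
      filter_upwards [key i] with ω hω
      simp only [Pi.smul_apply, smul_eq_mul, hω]
    have hgi_all : ∀ᵐ ω ∂μ, ∀ i : Fin n, (μ[gi i|F₂ s]) ω
        = (Real.sqrt n)⁻¹ * ((∫ ω', h (G i ω') ∂μ) * A i ω) :=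
      ae_all_iff.mpr fun i => hgi_ce i
    refine hadd.trans ?_
    filter_upwards [hsum_ce, hgi_all] with ω h1 h2
    rw [Pi.add_apply, hDεs_ce, h1, Finset.sum_apply]
    congr 1
    rw [Finset.mul_sum]
    refine Finset.sum_congr rfl fun i _ => ?_
    rw [h2 i, hci i, ← hc_eq]
    simp only [hA_def]
    ring
  refine ⟨part1, ?_⟩
  intro hc0 ⟨s, t, hs, hst, htτ, hpos⟩ hmart
  have h1 := part1 s t hs hst.le htτ
  have h2 := hmart s t hs hst.le htτ
  have h3 : ∀ᵐ ω ∂μ, Dε s ω = Dε s ω + (Real.sqrt n)⁻¹ *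
      (∫ ω', G ⟨0, hn⟩ ω' *
          (if ε * Real.sqrt n ≤ |G ⟨0, hn⟩ ω'| then (1 : ℝ) else 0) ∂μ) *
      ∑ i, (N i t ω - N i s ω) := h2.symm.trans h1
  have h4 : ∀ᵐ ω ∂μ, ∑ i, (N i t ω - N i s ω) = 0 := by
    filter_upwards [h3] with ω hω
    have := hω
    have hne : (Real.sqrt n)⁻¹ *
        (∫ ω', G ⟨0, hn⟩ ω' *
            (if ε * Real.sqrt n ≤ |G ⟨0, hn⟩ ω'| then (1 : ℝ) else 0) ∂μ) ≠ 0 :=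
      mul_ne_zero (inv_ne_zero hsqrt_pos.ne') hc0
    have h5 : (Real.sqrt n)⁻¹ *
        (∫ ω', G ⟨0, hn⟩ ω' *
            (if ε * Real.sqrt n ≤ |G ⟨0, hn⟩ ω'| then (1 : ℝ) else 0) ∂μ) *
        ∑ i, (N i t ω - N i s ω) = 0 := by linarith
    rcases mul_eq_zero.mp h5 with h6 | h6
    · exact absurd h6 hne
    · exact h6
  have h7 : μ {ω | 1 ≤ ∑ i, (N i t ω - N i s ω)} = 0 := by
    refine measure_mono_null ?_ (ae_iff.mp h4)
    intro ω hω
    simp only [Set.mem_setOf_eq] at hω ⊢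
    intro hcontra
    rw [hcontra] at hω
    linarith
  rw [h7] at hpos
  exact lt_irrefl 0 hpos
end

section
/- The map Γ is Fréchet differentiable at every point (β₀, A₀) ∈ ℝ^q × C([0,τ], ℝ), with derivative the bounded linear map dΓ(β₀, A₀) : ℝ^q × C([0,τ], ℝ) → C([0,τ], ℝ) given by dΓ(β₀, A₀)(x, y)(t) = exp(−exp(⟨Z, β₀⟩) · A₀(t)) · exp(⟨Z, β₀⟩) · ( A₀(t) · ⟨Z, x⟩ + y(t) ), for t ∈ [0,τ]. In particular Γ is Hadamard differentiable with exactly the derivative asserted in Lemma II.4 (lem:Hadamard) of the paper: dΓ(θ)·(x,y) = exp(−exp(⟨Z,β⟩)A) · exp(⟨Z,β⟩) · [A · Zᵀx + y] at θ = (β, A). -/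
open MeasureTheory Filter Set

set_option maxHeartbeats 1000000
set_option synthInstance.maxHeartbeats 400000

/-- Pointwise formula for the Banach-algebra exponential in `C(X, ℝ)`. -/
lemma exp_continuousMap_apply {X : Type*} [TopologicalSpace X] [CompactSpace X]
    (f : C(X, ℝ)) (t : X) :
    NormedSpace.exp f t = Real.exp (f t) := by
  have h := NormedSpace.map_exp (ContinuousMap.evalAlgHom ℝ ℝ t)
    (continuous_eval_const t) f
  simpa [Real.exp_eq_exp_ℝ] using h

/-- The Fine–Gray cumulative incidence functional
`Γ(β, A)(t) = 1 − exp(−exp⟨Z,β⟩ · A(t))` on `ℝ^q × C([0,τ], ℝ)`. -/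
noncomputable def fineGrayCIF (τ : ℝ) {q : ℕ} (Z : Fin q → ℝ)
    (θ : (Fin q → ℝ) × C(Icc (0:ℝ) τ, ℝ)) : C(Icc (0:ℝ) τ, ℝ) where
  toFun t := 1 - Real.exp (-(Real.exp (∑ k, Z k * θ.1 k)) * θ.2 t)
  continuous_toFun := by fun_prop

/-- **Lemma II.4 (lem:Hadamard), Part II.**
The Fine–Gray cumulative incidence functional `Γ` is Fréchet (hence Hadamard)
differentiable at every `(β₀, A₀) ∈ ℝ^q × C([0,τ], ℝ)`, with derivative the
bounded linear map
`(x, y) ↦ (t ↦ exp(−exp⟨Z,β₀⟩ A₀(t)) exp⟨Z,β₀⟩ (A₀(t)⟨Z,x⟩ + y(t)))`. -/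
theorem fineGrayCIF_hasFDerivAt (τ : ℝ) (hτ : 0 < τ) (q : ℕ)
    (Z : Fin q → ℝ) :
    ∀ (β₀ : Fin q → ℝ) (A₀ : C(Icc (0:ℝ) τ, ℝ)),
      ∃ L : ((Fin q → ℝ) × C(Icc (0:ℝ) τ, ℝ)) →L[ℝ] C(Icc (0:ℝ) τ, ℝ),
        HasFDerivAt (fineGrayCIF τ Z) L (β₀, A₀) ∧
        ∀ (x : Fin q → ℝ) (y : C(Icc (0:ℝ) τ, ℝ)) (t : Icc (0:ℝ) τ),
          L (x, y) t =
            Real.exp (-(Real.exp (∑ k, Z k * β₀ k)) * A₀ t) *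
              Real.exp (∑ k, Z k * β₀ k) *
              (A₀ t * (∑ k, Z k * x k) + y t) := by
  intro β₀ A₀
  -- the linear functional β ↦ ⟨Z, β⟩
  set ℓ : (Fin q → ℝ) →L[ℝ] ℝ := ∑ k, (Z k) • ContinuousLinearMap.proj k with hℓ
  have hℓ_apply : ∀ x : Fin q → ℝ, ℓ x = ∑ k, Z k * x k := by
    intro x
    simp [hℓ, ContinuousLinearMap.sum_apply]
  set c : ℝ := Real.exp (∑ k, Z k * β₀ k) with hc
  -- derivative of θ ↦ ∑ Z k * θ.1 k
  have hlin : HasFDerivAt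
      (fun θ : (Fin q → ℝ) × C(Icc (0:ℝ) τ, ℝ) => ∑ k, Z k * θ.1 k)
      (ℓ.comp (ContinuousLinearMap.fst ℝ (Fin q → ℝ) C(Icc (0:ℝ) τ, ℝ))) (β₀, A₀) := by
    have h := (ℓ.comp
      (ContinuousLinearMap.fst ℝ (Fin q → ℝ) C(Icc (0:ℝ) τ, ℝ))).hasFDerivAt
      (x := (β₀, A₀))
    refine h.congr_of_eventuallyEq ?_
    filter_upwards with θ
    simp [hℓ_apply]
  -- derivative of θ ↦ exp⟨Z, θ.1⟩
  have hcder : HasFDerivAt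
      (fun θ : (Fin q → ℝ) × C(Icc (0:ℝ) τ, ℝ) => Real.exp (∑ k, Z k * θ.1 k))
      (c • ℓ.comp (ContinuousLinearMap.fst ℝ (Fin q → ℝ) C(Icc (0:ℝ) τ, ℝ)))
      (β₀, A₀) := by
    simpa [hc] using hlin.exp
  have hsnd : HasFDerivAt
      (fun θ : (Fin q → ℝ) × C(Icc (0:ℝ) τ, ℝ) => θ.2)
      (ContinuousLinearMap.snd ℝ (Fin q → ℝ) C(Icc (0:ℝ) τ, ℝ)) (β₀, A₀) :=
    hasFDerivAt_snd
  -- derivative of θ ↦ exp⟨Z, θ.1⟩ • θ.2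
  have hg : HasFDerivAt
      (fun θ : (Fin q → ℝ) × C(Icc (0:ℝ) τ, ℝ) =>
        Real.exp (∑ k, Z k * θ.1 k) • θ.2)
      (c • ContinuousLinearMap.snd ℝ (Fin q → ℝ) C(Icc (0:ℝ) τ, ℝ) +
        (c • ℓ.comp (ContinuousLinearMap.fst ℝ (Fin q → ℝ) C(Icc (0:ℝ) τ, ℝ))).smulRight A₀)
      (β₀, A₀) := hcder.smul hsnd
  have hng := hg.neg
  -- exponential in the Banach algebra C([0,τ], ℝ)
  set a₀ : C(Icc (0:ℝ) τ, ℝ) := -(c • A₀) with ha₀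
  have hexp := hasFDerivAt_exp (𝕂 := ℝ) (x := a₀)
  have hcomp := hexp.comp (β₀, A₀) hng
  have hfinal := hcomp.const_sub (1 : C(Icc (0:ℝ) τ, ℝ))
  refine ⟨-((NormedSpace.exp a₀ •
      (1 : C(Icc (0:ℝ) τ, ℝ) →L[ℝ] C(Icc (0:ℝ) τ, ℝ))).comp
      (-(c • ContinuousLinearMap.snd ℝ (Fin q → ℝ) C(Icc (0:ℝ) τ, ℝ) +
        (c • ℓ.comp (ContinuousLinearMap.fst ℝ (Fin q → ℝ)
          C(Icc (0:ℝ) τ, ℝ))).smulRight A₀))), ?_, ?_⟩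
  · -- the functional equals 1 - exp(-(exp⟨Z,β⟩ • A))
    refine hfinal.congr_of_eventuallyEq ?_
    filter_upwards with θ
    ext t
    simp [fineGrayCIF, exp_continuousMap_apply, ContinuousMap.sub_apply,
      ContinuousMap.one_apply, ContinuousMap.neg_apply, ContinuousMap.smul_apply,
      smul_eq_mul, neg_mul, Function.comp]
  · intro x y t
    simp only [ContinuousLinearMap.coe_comp', ContinuousLinearMap.neg_apply,
      ContinuousLinearMap.comp_apply, ContinuousLinearMap.smul_apply,
      ContinuousLinearMap.one_apply, ContinuousLinearMap.add_apply,
      ContinuousLinearMap.smulRight_apply, ContinuousLinearMap.coe_fst',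
      ContinuousLinearMap.coe_snd', smul_eq_mul, neg_neg]
    simp only [ha₀, smul_eq_mul, ContinuousMap.neg_apply, ContinuousMap.mul_apply,
      ContinuousMap.add_apply, ContinuousMap.smul_apply, exp_continuousMap_apply,
      smul_eq_mul, neg_neg, hℓ_apply, hc, neg_mul]
    ring
end
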